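/- arXiv:2407.15506 — 4 statements merged into one kernel-verified Lean document; each statement's English description precedes it below -/
import Mathlib

section
/- Let (W,S) be a Coxeter system and let α ≠ ±β be roots with o(r_α r_β) < ∞, and let γ ∈ (α, β). Then {−α, γ} is a prenilpotent pair and β ∈ (−α, γ). -/
variable {B W : Type*} [Group W] {M : CoxeterMatrix B}

/-- The simple root `α_s = {w ∈ W : ℓ(sw) > ℓ(w)}`, viewed as a half-space of chambers. -/
def simpleRoot (cs : CoxeterSystem M W) (s : B) : Set W :=
  {w : W | cs.length w < cs.length (cs.simple s * w)}

/-- `α` is a root (half-space) with associated reflection `r`: `α = v • α_s` and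
`r = v s v⁻¹` for some `v ∈ W`, `s ∈ S`.  The opposite root `-α` is the complement `αᶜ`. -/
def IsRootPair (cs : CoxeterSystem M W) (α : Set W) (r : W) : Prop :=
  ∃ (v : W) (s : B), α = (v * ·) '' simpleRoot cs s ∧ r = v * cs.simple s * v⁻¹

namespace Stmt5Aux

open CoxeterSystem List Classical

variable (cs : CoxeterSystem M W)

/-! ### The sign (Tits) representation, used to prove the exchange property -/

/-- Indicator of a proposition, valued in `ZMod 2`. -/
noncomputable def χ (P : Prop) : ZMod 2 := if P then 1 else 0

lemma χ_congr {P Q : Prop} (h : P ↔ Q) : χ P = χ Q := by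
  unfold χ; by_cases hP : P <;> simp [hP, h.symm, ← h]

lemma χ_add_self (P Q : Prop) (h : P ↔ Q) : χ P + χ Q = 0 := by
  unfold χ; by_cases hP : P
  · rw [if_pos hP, if_pos (h.mp hP)]; decide
  · rw [if_neg hP, if_neg (fun hq => hP (h.mpr hq)), add_zero]

lemma χ_of_true {P : Prop} (h : P) : χ P = 1 := by simp [χ, h]

lemma χ_of_false {P : Prop} (h : ¬ P) : χ P = 0 := by simp [χ, h]

/-- The basic involution of `W × ZMod 2` attached to a simple reflection. -/
noncomputable def sig (i : B) : Equiv.Perm (W × ZMod 2) :=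
  Function.Involutive.toPerm
    (fun p => (cs.simple i * p.1 * cs.simple i, p.2 + χ (p.1 = cs.simple i)))
    (by
      rintro ⟨t, ε⟩
      have h1 : cs.simple i * (cs.simple i * t * cs.simple i) * cs.simple i = t := by
        rw [← mul_assoc, ← mul_assoc, cs.simple_mul_simple_self, one_mul, mul_assoc,
          cs.simple_mul_simple_self, mul_one]
      have h2 : (cs.simple i * t * cs.simple i = cs.simple i) ↔ (t = cs.simple i) := by
        constructor
        · intro h
          have := congrArg (fun z => cs.simple i * z * cs.simple i) h
          simpa [h1, cs.simple_mul_simple_self] using this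
        · rintro rfl; rw [cs.simple_mul_simple_self, one_mul]
      show (_, _) = (t, ε)
      refine Prod.ext h1 ?_
      show ε + χ (t = cs.simple i) + χ (cs.simple i * t * cs.simple i = cs.simple i) = ε
      rw [add_assoc, χ_add_self _ _ (by rw [h2]), add_zero])

lemma sig_apply (i : B) (t : W) (ε : ZMod 2) :
    sig cs i (t, ε) = (cs.simple i * t * cs.simple i, ε + χ (t = cs.simple i)) := rfl

lemma sig_pow_apply (i j : B) (k : ℕ) (t : W) (ε : ZMod 2) :
    ((sig cs i * sig cs j) ^ k) (t, ε) =
      ((cs.simple i * cs.simple j) ^ k * t * ((cs.simple i * cs.simple j) ^ k)⁻¹,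
        ε + ∑ m ∈ Finset.range (2 * k),
          χ (t = cs.simple j * (cs.simple i * cs.simple j) ^ m)) := by
  set a := cs.simple j with ha
  set b := cs.simple i with hb
  set x := b * a with hxdef
  have hx : x⁻¹ = a * b := by
    rw [hxdef, mul_inv_rev, ha, hb, cs.inv_simple, cs.inv_simple]
  induction k generalizing t ε with
  | zero => simp
  | succ k ih =>
    have step : ((sig cs i * sig cs j) ^ (k + 1)) (t, ε)
        = ((sig cs i * sig cs j) ^ k) ((sig cs i) ((sig cs j) (t, ε))) := by
      rw [pow_succ]; rfl
    rw [step, sig_apply, sig_apply, ih]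
    have hconj : b * (a * t * a) * b = x * t * x⁻¹ := by rw [hx, hxdef]; group
    have e1 : (a * t * a = b) ↔ (t = a * x ^ 1) := by
      constructor
      · intro h
        have h' : a * (a * t * a) * a = a * b * a := by rw [h]
        rw [← mul_assoc, ← mul_assoc, ha, cs.simple_mul_simple_self, one_mul, mul_assoc,
          cs.simple_mul_simple_self, mul_one] at h'
        rw [h', pow_one, hxdef, ha, mul_assoc]
      · intro h
        rw [h, pow_one, hxdef, ha, hb]
        rw [show cs.simple j * (cs.simple j * (cs.simple i * cs.simple j)) * cs.simple j =
          (cs.simple j * cs.simple j) * cs.simple i * (cs.simple j * cs.simple j) by group]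
        rw [cs.simple_mul_simple_self]; group
    have e2 : ∀ m : ℕ, (x * t * x⁻¹ = a * x ^ m) ↔ (t = a * x ^ (m + 2)) := by
      intro m
      have key : x⁻¹ * (a * x ^ m) * x = a * x ^ (m + 2) := by
        have h1 : x⁻¹ * a = a * x := by rw [hx, hxdef]; simp only [mul_assoc]
        calc x⁻¹ * (a * x ^ m) * x = (x⁻¹ * a) * (x ^ m * x) := by simp only [mul_assoc]
          _ = a * (x * (x ^ m * x)) := by rw [h1]; simp only [mul_assoc]
          _ = a * x ^ (m + 2) := by rw [← pow_succ, ← pow_succ']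
      constructor
      · intro h
        have : x⁻¹ * (x * t * x⁻¹) * x = a * x ^ (m + 2) := by rw [h, key]
        rwa [show x⁻¹ * (x * t * x⁻¹) * x = t by group] at this
      · intro h
        rw [h, show x * (a * x ^ (m + 2)) * x⁻¹ = x * (x⁻¹ * (a * x ^ m) * x) * x⁻¹ by
          rw [key], show x * (x⁻¹ * (a * x ^ m) * x) * x⁻¹ = a * x ^ m by group]
    refine Prod.ext ?_ ?_
    · show x ^ k * (b * (a * t * a) * b) * (x ^ k)⁻¹ = x ^ (k + 1) * t * (x ^ (k + 1))⁻¹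
      rw [hconj, pow_succ']
      group
    · show ε + χ (t = a) + χ (a * t * a = b)
          + ∑ m ∈ Finset.range (2 * k), χ (b * (a * t * a) * b = a * x ^ m)
        = ε + ∑ m ∈ Finset.range (2 * (k + 1)), χ (t = a * x ^ m)
      have hs1 : ∀ m : ℕ, χ (b * (a * t * a) * b = a * x ^ m) = χ (t = a * x ^ (m + 2)) := by
        intro m
        exact χ_congr (by rw [hconj]; exact e2 m)
      rw [Finset.sum_congr rfl (fun m _ => hs1 m)]
      have h0 : χ (t = a) = χ (t = a * x ^ 0) := χ_congr (by rw [pow_zero, mul_one])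
      have h1 : χ (a * t * a = b) = χ (t = a * x ^ 1) := χ_congr e1
      rw [h0, h1]
      have hsplit : ∑ m ∈ Finset.range (2 * (k + 1)), χ (t = a * x ^ m)
          = (∑ m ∈ Finset.range (2 * k), χ (t = a * x ^ (m + 2)))
            + χ (t = a * x ^ 1) + χ (t = a * x ^ 0) := by
        rw [show 2 * (k + 1) = (2 * k + 1) + 1 by ring]
        rw [Finset.sum_range_succ' (fun m => χ (t = a * x ^ m)) (2 * k + 1)]
        rw [Finset.sum_range_succ' (fun m => χ (t = a * x ^ (m + 1))) (2 * k)]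
      rw [hsplit]
      abel

lemma sig_liftable : CoxeterMatrix.IsLiftable M (fun i => sig cs i) := by
  intro i j
  rcases Nat.eq_zero_or_pos (M i j) with h | _
  · rw [h, pow_zero]
  · apply Equiv.ext
    rintro ⟨t, ε⟩
    rw [show ((fun i => sig cs i) i * (fun i => sig cs i) j) ^ M i j
      = (sig cs i * sig cs j) ^ M i j by rfl]
    rw [sig_pow_apply, cs.simple_mul_simple_pow i j]
    have hsum : ∑ m ∈ Finset.range (2 * M i j),
        χ (t = cs.simple j * (cs.simple i * cs.simple j) ^ m) = 0 := by
      rw [two_mul, Finset.sum_range_add]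
      have : ∀ m : ℕ, χ (t = cs.simple j * (cs.simple i * cs.simple j) ^ (M i j + m))
          = χ (t = cs.simple j * (cs.simple i * cs.simple j) ^ m) := by
        intro m
        exact χ_congr (by rw [pow_add, cs.simple_mul_simple_pow i j, one_mul])
      rw [Finset.sum_congr rfl (fun m _ => this m)]
      have : ∀ z : ZMod 2, z + z = 0 := by decide
      exact this _
    rw [hsum]
    simp

/-- The sign representation `W →* Perm (W × ZMod 2)`. -/
noncomputable def phi : W →* Equiv.Perm (W × ZMod 2) :=
  cs.lift ⟨fun i => sig cs i, sig_liftable cs⟩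

lemma phi_simple (i : B) : phi cs (cs.simple i) = sig cs i :=
  cs.lift_apply_simple (sig_liftable cs) i

/-- The parity cocycle. -/
noncomputable def nn (w t : W) : ZMod 2 := (phi cs w (t, 0)).2

lemma zmod2_cancel : ∀ a b : ZMod 2, a + b = 0 → b = a := by decide

lemma phi_apply (w : W) : ∀ (t : W) (ε : ZMod 2),
    phi cs w (t, ε) = (w * t * w⁻¹, ε + nn cs w t) := by
  induction w using cs.simple_induction_left with
  | one =>
    intro t ε
    rw [map_one]
    show (t, ε) = (1 * t * 1⁻¹, ε + nn cs 1 t)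
    have h : nn cs (1 : W) t = 0 := by
      show (phi cs 1 (t, 0)).2 = 0
      rw [map_one]; rfl
    rw [h, add_zero]
    simp
  | mul_simple_left w i ih =>
    intro t ε
    have hstep : ∀ ε' : ZMod 2, phi cs (cs.simple i * w) (t, ε')
        = (cs.simple i * (w * t * w⁻¹) * cs.simple i,
            ε' + nn cs w t + χ (w * t * w⁻¹ = cs.simple i)) := by
      intro ε'
      rw [map_mul, phi_simple]
      show sig cs i (phi cs w (t, ε')) = _
      rw [ih t ε', sig_apply]
    have hnn : nn cs (cs.simple i * w) t = nn cs w t + χ (w * t * w⁻¹ = cs.simple i) := by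
      have h0 : nn cs (cs.simple i * w) t = (phi cs (cs.simple i * w) (t, 0)).2 := rfl
      rw [h0, hstep 0]
      show (0 : ZMod 2) + nn cs w t + χ (w * t * w⁻¹ = cs.simple i) = _
      rw [zero_add]
    rw [hstep ε, hnn]
    refine Prod.ext ?_ ?_
    · show cs.simple i * (w * t * w⁻¹) * cs.simple i = cs.simple i * w * t * (cs.simple i * w)⁻¹
      rw [mul_inv_rev, cs.inv_simple]
      group
    · show ε + nn cs w t + χ (w * t * w⁻¹ = cs.simple i)
          = ε + (nn cs w t + χ (w * t * w⁻¹ = cs.simple i))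
      rw [add_assoc]

lemma nn_cocycle (w₁ w₂ t : W) :
    nn cs (w₁ * w₂) t = nn cs w₂ t + nn cs w₁ (w₂ * t * w₂⁻¹) := by
  have h0 : nn cs (w₁ * w₂) t = (phi cs (w₁ * w₂) (t, 0)).2 := rfl
  rw [h0, map_mul]
  have h1 : (phi cs w₁ * phi cs w₂) (t, 0) = phi cs w₁ (phi cs w₂ (t, 0)) := rfl
  rw [h1, phi_apply cs w₂ t 0, phi_apply cs w₁ (w₂ * t * w₂⁻¹) (0 + nn cs w₂ t)]
  show 0 + nn cs w₂ t + nn cs w₁ (w₂ * t * w₂⁻¹) = _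
  rw [zero_add]


lemma nn_simple (i : B) (t : W) : nn cs (cs.simple i) t = χ (t = cs.simple i) := by
  unfold nn
  rw [phi_simple]
  show (0 : ZMod 2) + χ (t = cs.simple i) = _
  rw [zero_add]

lemma nn_one (t : W) : nn cs 1 t = 0 := by unfold nn; rw [map_one]; rfl

lemma nn_inv (w t : W) : nn cs w⁻¹ (w * t * w⁻¹) = nn cs w t := by
  have h := nn_cocycle cs w⁻¹ w t
  rw [inv_mul_cancel, nn_one] at h
  exact zmod2_cancel _ _ h.symm

lemma nn_reflection {t : W} (ht : cs.IsReflection t) : nn cs t t = 1 := by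
  obtain ⟨v, c, rfl⟩ := ht
  set t := v * cs.simple c * v⁻¹ with htdef
  have h1 : v⁻¹ * t * (v⁻¹)⁻¹ = cs.simple c := by rw [htdef]; group
  have h2 : nn cs (cs.simple c * v⁻¹) t
      = nn cs v⁻¹ t + nn cs (cs.simple c) (cs.simple c) := by
    rw [nn_cocycle cs (cs.simple c) v⁻¹ t, h1]
  have h3 : (cs.simple c * v⁻¹) * t * (cs.simple c * v⁻¹)⁻¹ = cs.simple c := by
    rw [htdef, mul_inv_rev, cs.inv_simple, inv_inv]
    rw [show cs.simple c * v⁻¹ * (v * cs.simple c * v⁻¹) * (v * cs.simple c)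
        = cs.simple c * (cs.simple c * (cs.simple c)) by group]
    rw [← mul_assoc, cs.simple_mul_simple_self, one_mul]
  have h4 : nn cs t t = nn cs (cs.simple c * v⁻¹) t + nn cs v (cs.simple c) := by
    have := nn_cocycle cs v (cs.simple c * v⁻¹) t
    rw [show v * (cs.simple c * v⁻¹) = t by rw [htdef]; group, h3] at this
    exact this
  have h5 : nn cs v⁻¹ t = nn cs v (cs.simple c) := by
    have := nn_inv cs v (cs.simple c)
    rw [← htdef] at this
    exact this
  rw [h4, h2, h5, nn_simple, χ_of_true rfl]
  generalize nn cs v (cs.simple c) = z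
  revert z; decide

lemma nn_wordProd (ω : List B) (t : W) :
    nn cs (cs.wordProd ω) t = ((cs.rightInvSeq ω).count t : ZMod 2) := by
  induction ω with
  | nil => simp [nn_one]
  | cons i ω ih =>
    rw [cs.wordProd_cons, nn_cocycle cs (cs.simple i) (cs.wordProd ω) t, ih, nn_simple]
    have hris : cs.rightInvSeq (i :: ω)
        = ((cs.wordProd ω)⁻¹ * cs.simple i * cs.wordProd ω) :: cs.rightInvSeq ω := rfl
    rw [hris]
    simp only [List.count_cons, beq_iff_eq]
    have hiff : (cs.wordProd ω * t * (cs.wordProd ω)⁻¹ = cs.simple i)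
        ↔ (t = (cs.wordProd ω)⁻¹ * cs.simple i * cs.wordProd ω) := by
      set u := cs.wordProd ω
      constructor
      · intro h; rw [← h]; group
      · intro h; rw [h]; group
    by_cases hcase : (cs.wordProd ω)⁻¹ * cs.simple i * cs.wordProd ω = t
    · rw [if_pos hcase, χ_of_true (hiff.mpr hcase.symm)]
      push_cast
      ring
    · rw [if_neg hcase, χ_of_false (fun h => hcase (hiff.mp h).symm)]
      push_cast
      ring

lemma isRightInversion_of_nn_eq_one {w t : W} (ht : cs.IsReflection t)
    (h : nn cs w t = 1) : cs.IsRightInversion w t := by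
  obtain ⟨ω, hred, rfl⟩ := cs.exists_reduced_word' w
  rw [nn_wordProd] at h
  have hmem : t ∈ cs.rightInvSeq ω := by
    by_contra hnm
    rw [List.count_eq_zero_of_not_mem hnm] at h
    simp at h
  exact cs.isRightInversion_of_mem_rightInvSeq hred hmem

lemma isRightInversion_iff_nn {w t : W} (ht : cs.IsReflection t) :
    cs.IsRightInversion w t ↔ nn cs w t = 1 := by
  constructor
  · intro h
    have hw : w = (w * t) * t := by rw [mul_assoc, ht.mul_self, mul_one]
    have hc : nn cs ((w * t) * t) t = nn cs t t + nn cs (w * t) (t * t * t⁻¹) :=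
      nn_cocycle cs (w * t) t t
    rw [show t * t * t⁻¹ = t by rw [mul_assoc, mul_inv_cancel, mul_one]] at hc
    have hz : nn cs (w * t) t = 0 := by
      by_contra hnz
      have h1 : nn cs (w * t) t = 1 := by
        have : ∀ z : ZMod 2, z ≠ 0 → z = 1 := by decide
        exact this _ hnz
      have h2 := isRightInversion_of_nn_eq_one cs ht h1
      have h3 : w * t * t = w := by rw [mul_assoc, ht.mul_self, mul_one]
      have h4 := h2.2
      rw [h3] at h4
      exact (lt_asymm h.2) h4
    rw [← hw, nn_reflection cs ht, hz, add_zero] at hc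
    exact hc
  · exact isRightInversion_of_nn_eq_one cs ht

/-- Strong exchange, membership form. -/
lemma mem_rightInvSeq_of_isRightInversion {ω : List B} (hω : cs.IsReduced ω) {t : W}
    (h : cs.IsRightInversion (cs.wordProd ω) t) : t ∈ cs.rightInvSeq ω := by
  have h1 := (isRightInversion_iff_nn cs h.1).mp h
  rw [nn_wordProd] at h1
  by_contra hnm
  rw [List.count_eq_zero_of_not_mem hnm] at h1
  simp at h1

/-- The key local "wall-crossing" lemma. -/
lemma simple_mul_eq_mul_simple (i j : B) (u : W)
    (h1 : cs.length u < cs.length (cs.simple i * u))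
    (h2 : cs.length u < cs.length (u * cs.simple j))
    (h3 : cs.length (cs.simple i * u * cs.simple j) < cs.length (u * cs.simple j)) :
    cs.simple i * u = u * cs.simple j := by
  obtain ⟨ω, hred, hω⟩ := cs.exists_reduced_word' u⁻¹
  set v : W := cs.simple j * u⁻¹ with hv
  have hvinv : v⁻¹ = u * cs.simple j := by rw [hv, mul_inv_rev, cs.inv_simple, inv_inv]
  have hlv : cs.length v = cs.length (u * cs.simple j) := by
    rw [← hvinv, cs.length_inv]
  have hlvsi : cs.length (v * cs.simple i) = cs.length (cs.simple i * u * cs.simple j) := by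
    have : (v * cs.simple i)⁻¹ = cs.simple i * u * cs.simple j := by
      rw [hv, mul_inv_rev, mul_inv_rev, cs.inv_simple, cs.inv_simple, inv_inv]
      group
    rw [← this, cs.length_inv]
  have hinv : cs.IsRightInversion v (cs.simple i) := by
    refine ⟨cs.isReflection_simple i, ?_⟩
    rw [hlvsi, hlv]; exact h3
  have hπ : cs.wordProd (j :: ω) = v := by rw [cs.wordProd_cons, ← hω, hv]
  have hlusj : cs.length (u * cs.simple j) = cs.length u + 1 := by
    rcases cs.length_mul_simple u j with h | h
    · exact h
    · omega
  have hred' : cs.IsReduced (j :: ω) := by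
    show cs.length (cs.wordProd (j :: ω)) = (j :: ω).length
    rw [hπ, hlv, hlusj, List.length_cons]
    have : ω.length = cs.length u⁻¹ := by rw [← hred, ← hω]
    rw [this, cs.length_inv]
  have hmem : cs.simple i ∈ cs.rightInvSeq (j :: ω) := by
    apply mem_rightInvSeq_of_isRightInversion cs hred'
    rw [hπ]; exact hinv
  have hris : cs.rightInvSeq (j :: ω)
      = ((cs.wordProd ω)⁻¹ * cs.simple j * cs.wordProd ω) :: cs.rightInvSeq ω := rfl
  rw [hris] at hmem
  rcases List.mem_cons.mp hmem with hcase | hcase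
  · rw [← hω, inv_inv] at hcase
    rw [hcase]
    group
  · exfalso
    have h5 := cs.isRightInversion_of_mem_rightInvSeq hred hcase
    have h6 : cs.length (cs.wordProd ω * cs.simple i) < cs.length (cs.wordProd ω) := h5.2
    rw [← hω] at h6
    have h7 : cs.length (u⁻¹ * cs.simple i) = cs.length (cs.simple i * u) := by
      rw [show u⁻¹ * cs.simple i = (cs.simple i * u)⁻¹ by
        rw [mul_inv_rev, cs.inv_simple], cs.length_inv]
    rw [h7, cs.length_inv] at h6
    omega

/-! ### Roots -/

lemma mem_image_mul (v u : W) (A : Set W) : u ∈ (v * ·) '' A ↔ v⁻¹ * u ∈ A := by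
  constructor
  · rintro ⟨y, hy, rfl⟩
    simpa using hy
  · intro h
    exact ⟨v⁻¹ * u, h, by group⟩

/-- The purely length-theoretic form of the wall-crossing criterion. -/
lemma simple_flip_iff (s0 t : B) (x : W) :
    ((cs.length x < cs.length (cs.simple s0 * x)) ↔
      ¬(cs.length (x * cs.simple t) < cs.length (cs.simple s0 * (x * cs.simple t)))) ↔
    (cs.simple s0 * x = x * cs.simple t) := by
  have ne1 : cs.length (cs.simple s0 * x) ≠ cs.length x := cs.length_simple_mul_ne x s0
  have ne2 : cs.length (x * cs.simple t) ≠ cs.length x := cs.length_mul_simple_ne x t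
  have ne3 : cs.length (cs.simple s0 * (x * cs.simple t)) ≠ cs.length (x * cs.simple t) :=
    cs.length_simple_mul_ne (x * cs.simple t) s0
  have tri1 := cs.length_simple_mul x s0
  have tri2 := cs.length_mul_simple x t
  have tri4 := cs.length_mul_simple (cs.simple s0 * x) t
  have hassoc : cs.simple s0 * x * cs.simple t = cs.simple s0 * (x * cs.simple t) :=
    mul_assoc _ _ _
  rw [hassoc] at tri4
  constructor
  · intro hflip
    by_cases hx : cs.length x < cs.length (cs.simple s0 * x)
    · have h2' : cs.length (cs.simple s0 * (x * cs.simple t))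
          < cs.length (x * cs.simple t) := by
        have := hflip.mp hx
        omega
      have h2'' : cs.length x < cs.length (x * cs.simple t) := by omega
      exact simple_mul_eq_mul_simple cs s0 t x hx h2'' (by rw [hassoc]; exact h2')
    · have hx' : cs.length (cs.simple s0 * x) < cs.length x := by omega
      have hflip2 : cs.length (x * cs.simple t)
          < cs.length (cs.simple s0 * (x * cs.simple t)) := by
        by_contra hcon
        exact hx (hflip.mpr (by omega))
      have hxt : cs.length (x * cs.simple t) < cs.length x := by omega
      have hb1 : cs.length (x * cs.simple t) <
          cs.length ((x * cs.simple t) * cs.simple t) := by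
        rw [cs.simple_mul_simple_cancel_right]
        exact hxt
      have hb3 : cs.length (cs.simple s0 * (x * cs.simple t) * cs.simple t)
          < cs.length ((x * cs.simple t) * cs.simple t) := by
        rw [cs.simple_mul_simple_cancel_right,
          show cs.simple s0 * (x * cs.simple t) * cs.simple t = cs.simple s0 * x by
            rw [← hassoc, cs.simple_mul_simple_cancel_right]]
        exact hx'
      have hcl := simple_mul_eq_mul_simple cs s0 t (x * cs.simple t) hflip2 hb1 hb3
      rw [cs.simple_mul_simple_cancel_right] at hcl
      have h9 : cs.simple s0 * x * cs.simple t = x := by rw [hassoc]; exact hcl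
      have h10 := congrArg (fun z => z * cs.simple t) h9
      rw [cs.simple_mul_simple_cancel_right] at h10
      exact h10
  · intro heq
    have hs : cs.simple s0 * (x * cs.simple t) = x := by
      rw [← heq, cs.simple_mul_simple_cancel_left]
    rw [hs, ← heq]
    constructor
    · intro h1; omega
    · intro h1; omega


lemma mem_root_iff {γ : Set W} {r : W} (h : IsRootPair cs γ r) :
    ∃ (v : W) (s : B), r = v * cs.simple s * v⁻¹ ∧
      ∀ u : W, u ∈ γ ↔ cs.length (v⁻¹ * u) < cs.length (cs.simple s * (v⁻¹ * u)) := by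
  obtain ⟨v, s, hγ, hr⟩ := h
  refine ⟨v, s, hr, fun u => ?_⟩
  rw [hγ]
  constructor
  · rintro ⟨x, hx, rfl⟩
    simpa [simpleRoot] using hx
  · intro hu
    exact ⟨v⁻¹ * u, by simpa [simpleRoot] using hu, by group⟩

lemma root_reflection {γ : Set W} {r : W} (h : IsRootPair cs γ r) : cs.IsReflection r := by
  obtain ⟨v, s, _, hr⟩ := h
  exact ⟨v, s, hr⟩

/-- Wall-crossing characterization: membership in a root flips across an edge iff the
edge reflection is the reflection of the root. -/
lemma root_flip_iff {γ : Set W} {r : W} (h : IsRootPair cs γ r) (u : W) (t : B) :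
    ((u ∈ γ) ↔ (u * cs.simple t ∉ γ)) ↔ u * cs.simple t * u⁻¹ = r := by
  obtain ⟨v, s0, hr, hmem⟩ := mem_root_iff cs h
  have hu := hmem u
  have hut := hmem (u * cs.simple t)
  have hassoc : v⁻¹ * (u * cs.simple t) = v⁻¹ * u * cs.simple t := (mul_assoc _ _ _).symm
  rw [hassoc] at hut
  rw [hu, hut, simple_flip_iff cs s0 t (v⁻¹ * u)]
  constructor
  · intro hh
    rw [hr]
    have h5 : u * cs.simple t = v * (v⁻¹ * u * cs.simple t) := by group
    rw [h5, ← hh]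
    group
  · intro hh
    have h5 : cs.simple s0 = v⁻¹ * (u * cs.simple t * u⁻¹) * v := by
      rw [hh, hr]; group
    rw [h5]
    group

/-- Membership in a root flips under left multiplication by its reflection. -/
lemma root_compl_mem {γ : Set W} {r : W} (h : IsRootPair cs γ r) (u : W) :
    u ∈ γ ↔ r * u ∉ γ := by
  obtain ⟨v, s0, hr, hmem⟩ := mem_root_iff cs h
  rw [hmem u, hmem (r * u)]
  have h1 : v⁻¹ * (r * u) = cs.simple s0 * (v⁻¹ * u) := by rw [hr]; group
  rw [h1, cs.simple_mul_simple_cancel_left]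
  have := cs.length_simple_mul_ne (v⁻¹ * u) s0
  omega

lemma root_refl_mul_self {γ : Set W} {r : W} (h : IsRootPair cs γ r) : r * r = 1 :=
  (root_reflection cs h).mul_self

lemma root_basepoint_mem {γ : Set W} {r : W} (h : IsRootPair cs γ r) : γ.Nonempty := by
  obtain ⟨v, s, hr, hmem⟩ := mem_root_iff cs h
  refine ⟨v, ?_⟩
  rw [hmem v]
  simp [cs.length_simple]

lemma compl_isRootPair {γ : Set W} {r : W} (h : IsRootPair cs γ r) : IsRootPair cs γᶜ r := by
  obtain ⟨v, s0, hγ, hr⟩ := h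
  refine ⟨v * cs.simple s0, s0, ?_, ?_⟩
  · ext u
    have hmem1 : u ∈ γ ↔ v⁻¹ * u ∈ simpleRoot cs s0 := by rw [hγ]; exact mem_image_mul v u _
    have hmem2 : u ∈ ((v * cs.simple s0) * ·) '' simpleRoot cs s0
        ↔ (v * cs.simple s0)⁻¹ * u ∈ simpleRoot cs s0 := mem_image_mul _ u _
    have h2 : (v * cs.simple s0)⁻¹ * u = cs.simple s0 * (v⁻¹ * u) := by
      rw [mul_inv_rev, cs.inv_simple]; group
    rw [h2] at hmem2
    rw [Set.mem_compl_iff, hmem1, hmem2]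
    simp only [simpleRoot, Set.mem_setOf_eq]
    rw [cs.simple_mul_simple_cancel_left]
    have := cs.length_simple_mul_ne (v⁻¹ * u) s0
    omega
  · rw [hr, mul_inv_rev, cs.inv_simple]
    rw [show v * cs.simple s0 * cs.simple s0 * (cs.simple s0 * v⁻¹)
        = v * (cs.simple s0 * cs.simple s0 * cs.simple s0) * v⁻¹ by group,
      cs.simple_mul_simple_self, one_mul]

/-- Parity of wall crossings along a gallery. -/
lemma root_walk_parity {γ : Set W} {r : W} (h : IsRootPair cs γ r) :
    ∀ (l : List B) (u : W),
      ((u * cs.wordProd l ∈ γ) ↔ (u ∈ γ)) ↔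
        Even (((cs.leftInvSeq l).map (fun z => u * z * u⁻¹)).count r) := by
  intro l
  induction l using List.reverseRecOn with
  | nil => intro u; simp
  | append_singleton l t ih =>
    intro u
    have hconcat : l ++ [t] = l.concat t := List.concat_eq_append.symm
    rw [hconcat, cs.leftInvSeq_concat]
    have hπ : cs.wordProd (l.concat t) = cs.wordProd l * cs.simple t := by
      rw [← hconcat, cs.wordProd_append, cs.wordProd_singleton]
    rw [hπ]
    set d := u * cs.wordProd l with hd
    have hassoc : u * (cs.wordProd l * cs.simple t) = d * cs.simple t := by
      rw [hd, mul_assoc]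
    rw [hassoc]
    have hmapcat : ((cs.leftInvSeq l).concat
          (cs.wordProd l * cs.simple t * (cs.wordProd l)⁻¹)).map (fun z => u * z * u⁻¹)
        = ((cs.leftInvSeq l).map (fun z => u * z * u⁻¹)).concat
            (u * (cs.wordProd l * cs.simple t * (cs.wordProd l)⁻¹) * u⁻¹) := by
      rw [List.map_concat]
    rw [hmapcat]
    have hedge : u * (cs.wordProd l * cs.simple t * (cs.wordProd l)⁻¹) * u⁻¹
        = d * cs.simple t * d⁻¹ := by
      rw [hd, mul_inv_rev]; group
    rw [hedge]
    have hcount : (((cs.leftInvSeq l).map (fun z => u * z * u⁻¹)).concat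
          (d * cs.simple t * d⁻¹)).count r
        = ((cs.leftInvSeq l).map (fun z => u * z * u⁻¹)).count r
          + if d * cs.simple t * d⁻¹ = r then 1 else 0 := by
      rw [List.concat_eq_append, List.count_append]
      simp [List.count_singleton', beq_iff_eq]
    rw [hcount]
    have hML := root_flip_iff cs h d t
    have hIH := ih u
    by_cases hflip : d * cs.simple t * d⁻¹ = r
    · rw [if_pos hflip, Nat.even_add_one]
      have hf : (d ∈ γ) ↔ (d * cs.simple t ∉ γ) := hML.mpr hflip
      constructor
      · intro hiff he
        have := hIH.mpr he
        tauto
      · intro hne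
        have : ¬((d ∈ γ) ↔ (u ∈ γ)) := fun hc => hne (hIH.mp hc)
        tauto
    · rw [if_neg hflip, add_zero]
      have hf : ¬((d ∈ γ) ↔ (d * cs.simple t ∉ γ)) := fun hc => hflip (hML.mp hc)
      have hsame : (d * cs.simple t ∈ γ) ↔ (d ∈ γ) := by tauto
      rw [hsame]
      exact hIH

/-- A root is determined by its reflection together with one chamber. -/
lemma root_determined {γ δ : Set W} {r : W} (hγ : IsRootPair cs γ r) (hδ : IsRootPair cs δ r)
    {c : W} (hc : c ∈ γ ↔ c ∈ δ) : γ = δ := by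
  ext u
  obtain ⟨l, hl⟩ := cs.wordProd_surjective (c⁻¹ * u)
  have hu : c * cs.wordProd l = u := by rw [hl]; group
  have g1 := root_walk_parity cs hγ l c
  have g2 := root_walk_parity cs hδ l c
  rw [hu] at g1 g2
  by_cases he : Even (((cs.leftInvSeq l).map (fun z => c * z * c⁻¹)).count r)
  · have e1 := g1.mpr he
    have e2 := g2.mpr he
    tauto
  · have e1 : ¬((u ∈ γ) ↔ (c ∈ γ)) := fun hx => he (g1.mp hx)
    have e2 : ¬((u ∈ δ) ↔ (c ∈ δ)) := fun hx => he (g2.mp hx)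
    tauto

/-- Nested distinct roots have reflections whose product has infinite order. -/
lemma nested_infinite {δ ε : Set W} {rδ rε : W} (hδ : IsRootPair cs δ rδ)
    (hε : IsRootPair cs ε rε) (hsub : δ ⊆ ε) (hne : δ ≠ ε) :
    ¬ IsOfFinOrder (rε * rδ) := by
  intro hfin
  obtain ⟨x, hxε, hxδ⟩ := Set.exists_of_ssubset (ssubset_of_subset_of_ne hsub hne)
  have step : ∀ y : W, y ∉ δ → ((rε * rδ) * y ∉ ε ∧ (rε * rδ) * y ∉ δ) := by
    intro y hy
    have h1 : rδ * y ∈ δ := by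
      have := root_compl_mem cs hδ (rδ * y)
      rw [← mul_assoc, root_refl_mul_self cs hδ, one_mul] at this
      tauto
    have h2 : rδ * y ∈ ε := hsub h1
    have h3 : rε * (rδ * y) ∉ ε := (root_compl_mem cs hε (rδ * y)).mp h2
    rw [← mul_assoc] at h3
    exact ⟨h3, fun hc => h3 (hsub hc)⟩
  have key : ∀ n : ℕ, ((rε * rδ) ^ (n + 1)) * x ∉ ε ∧ ((rε * rδ) ^ (n + 1)) * x ∉ δ := by
    intro n
    induction n with
    | zero =>
      rw [pow_one]
      exact step x hxδ
    | succ n ih =>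
      have : ((rε * rδ) ^ (n + 2)) * x = (rε * rδ) * (((rε * rδ) ^ (n + 1)) * x) := by
        rw [pow_succ']
        group
      rw [this]
      exact step _ ih.2
  obtain ⟨n, hn, h1⟩ := isOfFinOrder_iff_pow_eq_one.mp hfin
  obtain ⟨m, rfl⟩ : ∃ m, n = m + 1 := ⟨n - 1, by omega⟩
  have h2 := (key m).1
  rw [h1, one_mul] at h2
  exact h2 hxε

/-- The main geometric claim: a root squeezed between `α ∩ β` and `α` equals `α`
when `o(r_α r_β) < ∞`. -/
lemma squeeze {α β γ : Set W} {p q rγ : W} (hα : IsRootPair cs α p) (hβ : IsRootPair cs β q)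
    (hγ : IsRootPair cs γ rγ) (hne : α ≠ β) (hnopp : α ≠ βᶜ)
    (hfin : IsOfFinOrder (p * q)) (hsub1 : α ∩ β ⊆ γ) (hsub2 : γ ⊆ α) : γ = α := by
  classical
  -- all four quadrants we need are nonempty
  have hab : (α ∩ β).Nonempty := by
    by_contra hemp
    rw [Set.not_nonempty_iff_eq_empty] at hemp
    have hsub : α ⊆ βᶜ := fun u hu hub =>
      Set.eq_empty_iff_forall_notMem.mp hemp u ⟨hu, hub⟩
    have hninf := nested_infinite cs hα (compl_isRootPair cs hβ) hsub hnopp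
    apply hninf
    have hpinv : (p * q)⁻¹ = q * p := by
      rw [mul_inv_rev, (root_reflection cs hα).inv, (root_reflection cs hβ).inv]
    rw [← hpinv]
    exact hfin.inv
  have hacb : (αᶜ ∩ β).Nonempty := by
    by_contra hemp
    rw [Set.not_nonempty_iff_eq_empty] at hemp
    have hsub : β ⊆ α := by
      intro u hu
      by_contra hua
      exact Set.eq_empty_iff_forall_notMem.mp hemp u ⟨hua, hu⟩
    exact nested_infinite cs hβ hα hsub hne.symm hfin
  obtain ⟨b, hba, hbb⟩ := hab
  obtain ⟨b', hb'a, hb'b⟩ := hacb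
  obtain ⟨ω, hred, hω⟩ := cs.exists_reduced_word' (b⁻¹ * b')
  have hb' : b * cs.wordProd ω = b' := by rw [← hω]; group
  -- a `p`-crossing exists along the gallery from `b` to `b'`
  have hparA := root_walk_parity cs hα ω b
  rw [hb'] at hparA
  have hcntA : ¬ Even (((cs.leftInvSeq ω).map (fun z => b * z * b⁻¹)).count p) := by
    intro he
    exact hb'a ((hparA.mpr he).mpr hba)
  have hmemp : p ∈ (cs.leftInvSeq ω).map (fun z => b * z * b⁻¹) := by
    by_contra hnp
    rw [List.count_eq_zero_of_not_mem hnp] at hcntA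
    exact hcntA Even.zero
  -- there are no `q`-crossings along this gallery
  have hparB := root_walk_parity cs hβ ω b
  rw [hb'] at hparB
  have hevenq : Even (((cs.leftInvSeq ω).map (fun z => b * z * b⁻¹)).count q) :=
    hparB.mp (iff_of_true hb'b hbb)
  have hinj : Function.Injective (fun z : W => b * z * b⁻¹) := by
    intro z1 z2 hz
    simp only at hz
    have := mul_right_cancel hz
    exact mul_left_cancel this
  have hnodup : ((cs.leftInvSeq ω).map (fun z => b * z * b⁻¹)).Nodup :=
    (hred.nodup_leftInvSeq).map hinj
  have hq0 : ((cs.leftInvSeq ω).map (fun z => b * z * b⁻¹)).count q = 0 := by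
    have hle := List.nodup_iff_count_le_one.mp hnodup q
    obtain ⟨k, hk⟩ := hevenq
    omega
  have hqnot : ∀ z ∈ cs.leftInvSeq ω, b * z * b⁻¹ ≠ q := by
    intro z hz hzq
    exact absurd (List.count_eq_zero.mp hq0)
      (fun hc => hc (List.mem_map.mpr ⟨z, hz, hzq⟩))
  -- extract the crossing edge
  obtain ⟨z, hzmem, hzp⟩ := List.mem_map.mp hmemp
  obtain ⟨k, hk, hkz⟩ := List.mem_iff_getElem.mp hzmem
  have hklen : k < ω.length := by
    have := cs.length_leftInvSeq ω
    omega
  have hzval : z = cs.wordProd (ω.take k) * cs.simple (ω.get ⟨k, hklen⟩)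
      * (cs.wordProd (ω.take k))⁻¹ := by
    have h1 : (cs.leftInvSeq ω).getD k 1 = z := by
      rw [List.getD_eq_getElem _ _ hk, hkz]
    rw [← h1, cs.getD_leftInvSeq]
    rw [List.getElem?_eq_getElem hklen]
    rfl
  set j0 := ω.get ⟨k, hklen⟩ with hj0
  set c0 := cs.wordProd (ω.take k) with hc0
  set d := b * c0 with hdd
  have hedge : d * cs.simple j0 * d⁻¹ = p := by
    rw [← hzp, hzval, hdd, mul_inv_rev]
    group
  -- both endpoints of the crossing edge lie in β
  have hnoq : ∀ (m : ℕ),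
      ((cs.leftInvSeq (ω.take m)).map (fun z => b * z * b⁻¹)).count q = 0 := by
    intro m
    rw [List.count_eq_zero]
    intro hmem
    obtain ⟨z', hz', hzq'⟩ := List.mem_map.mp hmem
    have : z' ∈ cs.leftInvSeq ω := by
      rw [cs.leftInvSeq_take ω m] at hz'
      exact List.take_subset m _ hz'
    exact hqnot z' this hzq'
  have hdβ : d ∈ β := by
    have hthis := root_walk_parity cs hβ (ω.take k) b
    rw [hnoq k] at hthis
    exact (hthis.mpr Even.zero).mpr hbb
  have htake : ω.take (k + 1) = ω.take k ++ [j0] := by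
    rw [hj0, ← List.take_concat_get hklen, List.concat_eq_append]
    exact rfl
  have hπsucc : cs.wordProd (ω.take (k + 1)) = c0 * cs.simple j0 := by
    rw [htake, cs.wordProd_append, cs.wordProd_singleton, hc0]
  have hdsβ : d * cs.simple j0 ∈ β := by
    have hpar := root_walk_parity cs hβ (ω.take (k + 1)) b
    rw [hnoq (k + 1), hπsucc] at hpar
    have : b * (c0 * cs.simple j0) = d * cs.simple j0 := by rw [hdd, mul_assoc]
    rw [this] at hpar
    exact (hpar.mpr Even.zero).mpr hbb
  -- the edge flips α, hence also γ, so rγ = p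
  have hflipA : (d ∈ α) ↔ (d * cs.simple j0 ∉ α) := (root_flip_iff cs hα d j0).mpr hedge
  have hflipG : (d ∈ γ) ↔ (d * cs.simple j0 ∉ γ) := by
    by_cases hda : d ∈ α
    · have h5 : d * cs.simple j0 ∉ α := hflipA.mp hda
      have h6 : d ∈ γ := hsub1 ⟨hda, hdβ⟩
      have h7 : d * cs.simple j0 ∉ γ := fun hh => h5 (hsub2 hh)
      exact iff_of_true h6 h7
    · have h5 : d * cs.simple j0 ∈ α := by
        by_contra hns
        exact hda (hflipA.mpr hns)
      have h6 : d * cs.simple j0 ∈ γ := hsub1 ⟨h5, hdsβ⟩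
      have h7 : d ∉ γ := fun hh => hda (hsub2 hh)
      exact iff_of_false h7 (not_not_intro h6)
  have hrγ : rγ = p := by
    rw [← (root_flip_iff cs hγ d j0).mp hflipG, hedge]
  -- conclude using that a root is determined by its reflection and one chamber
  have hα' : IsRootPair cs α rγ := by rw [hrγ]; exact hα
  exact root_determined cs hγ hα' (iff_of_true (hsub1 ⟨hba, hbb⟩) hba)

end Stmt5Aux

open Stmt5Aux in
/-- If `α ≠ ±β` are roots with `o(r_α r_β) < ∞` and `γ ∈ (α, β)`,
then `{-α, γ}` is a prenilpotent pair and `β ∈ (-α, γ)`. -/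
theorem stmt5 (cs : CoxeterSystem M W) (α β γ : Set W) (rα rβ rγ : W)
    (hα : IsRootPair cs α rα) (hβ : IsRootPair cs β rβ) (hγ : IsRootPair cs γ rγ)
    (hne : α ≠ β) (hnopp : α ≠ βᶜ)
    (hfin : IsOfFinOrder (rα * rβ))
    -- `γ ∈ (α, β)`:
    (h1 : α ∩ β ⊆ γ) (h2 : αᶜ ∩ βᶜ ⊆ γᶜ) (h3 : γ ≠ α) (h4 : γ ≠ β) :
    -- `{-α, γ}` is prenilpotent:
    ((αᶜ ∩ γ).Nonempty ∧ (α ∩ γᶜ).Nonempty) ∧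
    -- `β ∈ (-α, γ)`:
    (αᶜ ∩ γ ⊆ β ∧ α ∩ γᶜ ⊆ βᶜ ∧ β ≠ αᶜ ∧ β ≠ γ) := by
  constructor
  · constructor
    · -- `αᶜ ∩ γ` nonempty: otherwise `γ ⊆ α` and the squeeze lemma gives `γ = α`.
      by_contra hempty
      rw [Set.not_nonempty_iff_eq_empty] at hempty
      have hsub2 : γ ⊆ α := by
        intro u hu
        by_contra hua
        exact Set.eq_empty_iff_forall_notMem.mp hempty u ⟨hua, hu⟩
      exact h3 (squeeze cs hα hβ hγ hne hnopp hfin h1 hsub2)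
    · -- `α ∩ γᶜ` nonempty: apply the squeeze lemma to the opposite roots.
      by_contra hempty
      rw [Set.not_nonempty_iff_eq_empty] at hempty
      have hsub2 : γᶜ ⊆ αᶜ := by
        intro u hu hua
        exact Set.eq_empty_iff_forall_notMem.mp hempty u ⟨hua, hu⟩
      have hne' : αᶜ ≠ βᶜ := fun h => hne (compl_injective h)
      have hnopp' : αᶜ ≠ (βᶜ)ᶜ := by
        rw [compl_compl]
        intro h
        exact hnopp (by rw [← compl_compl α, h])
      have := squeeze cs (compl_isRootPair cs hα) (compl_isRootPair cs hβ)
        (compl_isRootPair cs hγ) hne' hnopp' hfin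
        (by rw [← Set.compl_union]; intro u hu; exact h2 (by simpa using hu)) hsub2
      exact h3 (compl_injective this)
  · refine ⟨?_, ?_, ?_, h4.symm⟩
    · -- `αᶜ ∩ γ ⊆ β`
      intro u ⟨hua, hug⟩
      by_contra hub
      exact h2 ⟨hua, hub⟩ hug
    · -- `α ∩ γᶜ ⊆ βᶜ`
      intro u ⟨hua, hug⟩ hub
      exact hug (h1 ⟨hua, hub⟩)
    · -- `β ≠ αᶜ`
      intro h
      exact hnopp (by rw [h, compl_compl])
end

section
/- Let (W,S) be a Coxeter system, let α ≠ ±β be roots with o(r_α r_β) = ∞. Then either {α, β} is nested or {−α, β} is nested. -/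
variable {B W : Type*} [Group W] {M : CoxeterMatrix B}

open CoxeterSystem Finsupp

namespace CoxAux2
open Real

/-- Chebyshev-type formula for powers of a 2×2 matrix with trace `2 cos ψ` and det 1. -/
lemma cheb (A : Matrix (Fin 2) (Fin 2) ℝ) (ψ : ℝ) (hψ : Real.sin ψ ≠ 0)
    (hA : A ^ 2 = (2 * Real.cos ψ) • A - 1) (n : ℕ) :
    A ^ (n + 1) = (Real.sin ((n + 1) * ψ) / Real.sin ψ) • A
      - (Real.sin (n * ψ) / Real.sin ψ) • 1 := by
  induction n with
  | zero => simp [div_self hψ]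
  | succ n ih =>
      have : A ^ (n + 2) = A ^ (n + 1) * A := by rw [pow_succ]
      rw [this, ih, sub_mul, smul_mul_assoc, smul_mul_assoc, one_mul, ← pow_two, hA,
        smul_sub, smul_smul]
      have h1 : Real.sin ((n + 1 + 1) * ψ)
          = (2 * Real.cos ψ) * Real.sin ((n+1) * ψ) - Real.sin (n * ψ) := by
        have e1 : ((n:ℝ) + 1 + 1) * ψ = (n + 1) * ψ + ψ := by ring
        have e2 : (n:ℝ) * ψ = (n + 1) * ψ - ψ := by ring
        rw [e1, e2, Real.sin_add, Real.sin_sub]; ring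
      have hcast : ((n + 1 : ℕ) : ℝ) = (n : ℝ) + 1 := by push_cast; ring
      rw [hcast]
      push_cast
      rw [h1]
      match_scalars <;> field_simp <;> ring
end CoxAux2

noncomputable section
namespace CoxAux

variable {B : Type*} (M : CoxeterMatrix B)



/-- Entries of the standard bilinear form. -/
def kk (i j : B) : ℝ := if M i j = 0 then -1 else -Real.cos (Real.pi / (M i j))

lemma kk_symm (i j : B) : kk M i j = kk M j i := by
  rw [kk, kk, M.symmetric]

lemma kk_diag (i : B) : kk M i i = 1 := by
  simp [kk, M.diagonal i]

abbrev V (B : Type*) := B →₀ ℝ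

/-- basis vector -/
def ee (i : B) : V B := Finsupp.single i 1

lemma ee_apply_self (i : B) : ee i i = (1:ℝ) := by simp [ee]

/-- The linear functional `B(eᵢ, ·)`. -/
def phi (i : B) : V B →ₗ[ℝ] ℝ := Finsupp.linearCombination ℝ (kk M i)

lemma phi_ee (i j : B) : phi M i (ee j) = kk M i j := by
  rw [phi, ee, linearCombination_single, smul_eq_mul, one_mul]

/-- The standard bilinear form. -/
def BF : V B →ₗ[ℝ] V B →ₗ[ℝ] ℝ :=
  Finsupp.lsum ℝ fun i => LinearMap.toSpanSingleton ℝ _ (phi M i)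

lemma BF_ee_left (i : B) (y : V B) : BF M (ee i) y = phi M i y := by
  rw [BF, ee, Finsupp.lsum_single, LinearMap.toSpanSingleton_apply_one]

lemma BF_ee_right (x : V B) (i : B) : BF M x (ee i) = phi M i x := by
  induction x using Finsupp.induction_linear with
  | zero => simp
  | add f g hf hg => rw [map_add, LinearMap.add_apply, hf, hg, map_add]
  | single a b =>
      have h : (Finsupp.single a b : V B) = b • ee a := by
        rw [ee, Finsupp.smul_single, smul_eq_mul, mul_one]
      rw [h, map_smul, map_smul, LinearMap.smul_apply, BF_ee_left, phi_ee, phi_ee,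
        smul_eq_mul, smul_eq_mul, kk_symm]

lemma BF_ee_ee (i j : B) : BF M (ee i) (ee j) = kk M i j := by
  rw [BF_ee_left, phi_ee]

/-- The simple reflection, as a linear map. -/
def sigl (i : B) : V B →ₗ[ℝ] V B :=
  LinearMap.id - LinearMap.smulRight (phi M i) ((2:ℝ) • ee i)

lemma sigl_apply (i : B) (v : V B) :
    sigl M i v = v + (-(2 * phi M i v)) • ee i := by
  simp only [sigl, LinearMap.sub_apply, LinearMap.id_apply, LinearMap.smulRight_apply,
    smul_smul, sub_eq_add_neg, ← neg_smul]
  ring_nf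

lemma phi_sigl (c i : B) (v : V B) :
    phi M c (sigl M i v) = phi M c v - 2 * phi M i v * kk M c i := by
  rw [sigl_apply, map_add, map_smul, phi_ee, smul_eq_mul]; ring

lemma sigl_invol (i : B) (v : V B) : sigl M i (sigl M i v) = v := by
  have h : phi M i (v + (-(2 * phi M i v)) • ee i) = - phi M i v := by
    rw [map_add, map_smul, phi_ee, kk_diag, smul_eq_mul]; ring
  rw [sigl_apply, sigl_apply, h, add_assoc, ← add_smul,
    show -(2 * phi M i v) + -(2 * -phi M i v) = 0 by ring, zero_smul, add_zero]

/-- The simple reflection, as a linear equivalence. -/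
def sig (i : B) : V B ≃ₗ[ℝ] V B :=
  LinearEquiv.ofLinear (sigl M i) (sigl M i)
    (by ext v; simp [sigl_invol]) (by ext v; simp [sigl_invol])

lemma sig_apply (i : B) (v : V B) : sig M i v = v + (-(2 * phi M i v)) • ee i :=
  sigl_apply M i v

lemma sig_invol (i : B) (v : V B) : sig M i (sig M i v) = v := sigl_invol M i v

lemma phi_sig (c i : B) (v : V B) :
    phi M c (sig M i v) = phi M c v - 2 * phi M i v * kk M c i := phi_sigl M c i v

lemma sig_ee_self (i : B) : sig M i (ee i) = -(ee i) := by
  rw [sig_apply, phi_ee, kk_diag]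
  rw [show (-(2 * (1:ℝ))) = -2 by norm_num]
  rw [show (-(ee i) : V B) = ee i + (-2 : ℝ) • ee i by module]



section Braid

variable (i j : B)

/-- The matrix by which `σᵢσⱼ` acts on the coordinates `(φᵢ, φⱼ)`. -/
def AM : Matrix (Fin 2) (Fin 2) ℝ :=
  !![-1, 2 * kk M i j; -(2 * kk M i j), 4 * kk M i j ^ 2 - 1]

lemma rho_apply (v : V B) :
    sig M i (sig M j v) = v + (-(2 * (phi M i v - 2 * kk M i j * phi M j v))) • ee i
      + (-(2 * phi M j v)) • ee j := by
  rw [sig_apply M j v, sig_apply]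
  rw [map_add, map_smul, phi_ee, smul_eq_mul, kk_symm M i j]
  rw [show v + -(2 * phi M j v) • ee j
      + -(2 * (phi M i v + -(2 * phi M j v) * kk M j i)) • ee i
      = v + -(2 * (phi M i v - 2 * kk M j i * phi M j v)) • ee i
      + (-(2 * phi M j v)) • ee j by module]

lemma phi_i_rho (v : V B) :
    phi M i (sig M i (sig M j v)) = - phi M i v + 2 * kk M i j * phi M j v := by
  rw [rho_apply, map_add, map_add, map_smul, map_smul, phi_ee, phi_ee, kk_diag,
    smul_eq_mul, smul_eq_mul]
  ring

lemma phi_j_rho (v : V B) (hij : i ≠ j) :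
    phi M j (sig M i (sig M j v)) =
      -(2 * kk M i j) * phi M i v + (4 * kk M i j ^ 2 - 1) * phi M j v := by
  rw [rho_apply, map_add, map_add, map_smul, map_smul, phi_ee, phi_ee, kk_diag,
    smul_eq_mul, smul_eq_mul, kk_symm M j i]
  ring

lemma vec_rho (v : V B) (hij : i ≠ j) :
    ![phi M i (sig M i (sig M j v)), phi M j (sig M i (sig M j v))]
      = (AM M i j).mulVec ![phi M i v, phi M j v] := by
  funext b
  fin_cases b <;>
    simp [AM, Matrix.mulVec, dotProduct, Fin.sum_univ_two, phi_i_rho M i j v,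
      phi_j_rho M i j v hij] <;> ring

/-- key cosine fact -/
lemma AM_sq (hij : i ≠ j) (hm : M i j ≠ 0) :
    (AM M i j) ^ 2 = (2 * Real.cos (2 * (Real.pi / M i j))) • (AM M i j) - 1 := by
  have hk : kk M i j = -Real.cos (Real.pi / M i j) := by rw [kk, if_neg hm]
  have hcos : 2 * Real.cos (2 * (Real.pi / M i j)) = 4 * kk M i j ^ 2 - 2 := by
    rw [Real.cos_two_mul, hk]; ring
  rw [hcos, pow_two]
  ext a b
  fin_cases a <;> fin_cases b <;>
    simp [AM, Matrix.mul_apply, Fin.sum_univ_two, Matrix.one_apply,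
      Matrix.smul_apply, Matrix.sub_apply, smul_eq_mul] <;> ring

lemma AM_pow_card (hij : i ≠ j) (hm : M i j ≠ 0) : (AM M i j) ^ (M i j) = 1 := by
  have hm1 : M i j ≠ 1 := M.off_diagonal i j hij
  rcases Nat.lt_or_ge (M i j) 3 with h3 | h3
  · have hm2 : M.M i j = 2 := by omega
    have hk : kk M i j = 0 := by
      rw [kk, if_neg hm, hm2]; norm_num [Real.cos_pi_div_two]
    rw [show M.M i j = 2 from hm2, pow_two]
    ext a b
    fin_cases a <;> fin_cases b <;>
      simp [AM, hk, Matrix.mul_apply, Fin.sum_univ_two, Matrix.one_apply] <;> norm_num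
  · have hmpos : (0:ℝ) < (M i j : ℝ) := by
      have h0 : (0:ℕ) < M i j := by omega
      exact_mod_cast h0
    have hmr : (3:ℝ) ≤ (M i j : ℝ) := by exact_mod_cast h3
    have hψlt : 2 * (Real.pi / (M i j : ℝ)) < Real.pi := by
      rw [show 2 * (Real.pi / (M i j:ℝ)) = 2 * Real.pi / (M i j:ℝ) by ring,
        div_lt_iff₀ hmpos]
      nlinarith [Real.pi_pos]
    have hψpos : 0 < 2 * (Real.pi / (M i j:ℝ)) := by positivity
    have hsin : Real.sin (2 * (Real.pi / (M i j:ℝ))) ≠ 0 :=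
      ne_of_gt (Real.sin_pos_of_pos_of_lt_pi hψpos hψlt)
    have hA := CoxAux2.cheb (AM M i j) _ hsin (AM_sq M i j hij hm) (M i j - 1)
    have hpred : M.M i j - 1 + 1 = M.M i j := by omega
    rw [hpred] at hA
    rw [hA]
    have hcast : ((M i j - 1 : ℕ) : ℝ) = (M i j : ℝ) - 1 := by
      have h1 : (1:ℕ) ≤ M i j := by omega
      rw [Nat.cast_sub h1]; norm_num
    have hmψ : ((M i j:ℝ)) * (2 * (Real.pi / (M i j:ℝ))) = 2 * Real.pi := by
      field_simp
    rw [hcast, show ((M i j:ℝ) - 1 + 1) = (M i j:ℝ) by ring, hmψ, Real.sin_two_pi,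
      show ((M i j:ℝ) - 1) * (2 * (Real.pi / (M i j:ℝ)))
        = 2*Real.pi - 2 * (Real.pi / (M i j:ℝ)) by field_simp,
      Real.sin_two_pi_sub]
    rw [neg_div, div_self hsin]
    simp

end Braid

end CoxAux
end


noncomputable section
namespace CoxAux
open CoxeterSystem Finsupp

variable {B : Type*} (M : CoxeterMatrix B)

section Braid2

variable (i j : B)

lemma pow_mul_sig_succ (n : ℕ) (v : V B) :
    ((sig M i * sig M j) ^ (n+1)) v = sig M i (sig M j (((sig M i * sig M j) ^ n) v)) := by
  rw [pow_succ']; rfl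

lemma vec_pow (hij : i ≠ j) (v : V B) (n : ℕ) :
    ![phi M i (((sig M i * sig M j)^n) v), phi M j (((sig M i * sig M j)^n) v)]
      = ((AM M i j)^n).mulVec ![phi M i v, phi M j v] := by
  induction n with
  | zero => rw [pow_zero, pow_zero, Matrix.one_mulVec]; rfl
  | succ n ih =>
      rw [pow_mul_sig_succ, vec_rho M i j _ hij, ih, Matrix.mulVec_mulVec, ← pow_succ']

lemma kk_sq_lt_one (hij : i ≠ j) (hm : M i j ≠ 0) : kk M i j ^ 2 < 1 := by
  have hm2 : 2 ≤ M.M i j := by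
    have := M.off_diagonal i j hij
    omega
  have hk : kk M i j = -Real.cos (Real.pi / M i j) := by rw [kk, if_neg hm]
  have hmr : (2:ℝ) ≤ (M i j : ℝ) := by exact_mod_cast hm2
  have hpos : (0:ℝ) < Real.pi / M i j := by positivity
  have hle : Real.pi / M i j ≤ Real.pi / 2 :=
    div_le_div_of_nonneg_left Real.pi_pos.le (by norm_num) hmr
  have h1 : Real.cos (Real.pi / M i j) < 1 := by
    have h := Real.cos_lt_cos_of_nonneg_of_le_pi (le_refl 0)
      (by linarith [Real.pi_pos] : Real.pi / M.M i j ≤ Real.pi) hpos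
    rwa [Real.cos_zero] at h
  have h0 : 0 ≤ Real.cos (Real.pi / M i j) :=
    Real.cos_nonneg_of_mem_Icc ⟨by linarith, hle⟩
  rw [hk]
  nlinarith

lemma sum_AM_pow (hij : i ≠ j) (hm : M i j ≠ 0) (w : Fin 2 → ℝ) :
    ∑ k ∈ Finset.range (M i j), ((AM M i j)^k).mulVec w = 0 := by
  set T := ∑ k ∈ Finset.range (M.M i j), ((AM M i j)^k).mulVec w with hT
  have hfix : (AM M i j).mulVec T = T := by
    have h1 : (AM M i j).mulVec T
        = ∑ k ∈ Finset.range (M.M i j), ((AM M i j)^(k+1)).mulVec w := by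
      rw [hT]
      rw [← Matrix.mulVecLin_apply (AM M i j),
        map_sum (Matrix.mulVecLin (AM M i j)) _ (Finset.range (M.M i j))]
      refine Finset.sum_congr rfl fun k _ => ?_
      rw [Matrix.mulVecLin_apply, Matrix.mulVec_mulVec, ← pow_succ']
    rw [h1]
    have h2 : ∑ k ∈ Finset.range (M.M i j + 1), ((AM M i j)^k).mulVec w
        = (∑ k ∈ Finset.range (M.M i j), ((AM M i j)^(k+1)).mulVec w)
          + ((AM M i j)^0).mulVec w := Finset.sum_range_succ' _ _
    have h3 : ∑ k ∈ Finset.range (M.M i j + 1), ((AM M i j)^k).mulVec w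
        = T + ((AM M i j)^(M.M i j)).mulVec w := by
      rw [hT, Finset.sum_range_succ]
    rw [AM_pow_card M i j hij hm] at h3
    rw [h3, pow_zero] at h2
    exact add_right_cancel h2.symm
  have hTz : (AM M i j - 1).mulVec T = 0 := by
    rw [Matrix.sub_mulVec, hfix, Matrix.one_mulVec, sub_self]
  have hdet : IsUnit (AM M i j - 1) := by
    rw [Matrix.isUnit_iff_isUnit_det]
    have hAe : AM M i j - 1
        = !![-2, 2*kk M i j; -(2*kk M i j), 4*kk M i j^2-2] := by
      ext a b
      fin_cases a <;> fin_cases b <;>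
        simp [AM, Matrix.sub_apply, Matrix.one_apply] <;> try ring
    rw [hAe, Matrix.det_fin_two_of]
    have hlt := kk_sq_lt_one M i j hij hm
    have hne : (-2)*(4*kk M i j^2-2) - (2*kk M i j)*(-(2*kk M i j)) ≠ 0 := by nlinarith
    exact isUnit_iff_ne_zero.mpr hne
  obtain ⟨u, hu⟩ := hdet
  have hinv : (↑u⁻¹ : Matrix (Fin 2) (Fin 2) ℝ) * (AM M i j - 1) = 1 := by
    rw [← hu]; exact u.inv_mul
  calc T = (1 : Matrix (Fin 2) (Fin 2) ℝ).mulVec T := (Matrix.one_mulVec T).symm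
    _ = ((↑u⁻¹ : Matrix (Fin 2) (Fin 2) ℝ) * (AM M i j - 1)).mulVec T := by rw [hinv]
    _ = (↑u⁻¹ : Matrix (Fin 2) (Fin 2) ℝ).mulVec ((AM M i j - 1).mulVec T) :=
        (Matrix.mulVec_mulVec _ _ _).symm
    _ = 0 := by rw [hTz, Matrix.mulVec_zero]

lemma pow_rho_eq (v : V B) (n : ℕ) :
    ((sig M i * sig M j)^n) v = v
      + (-(2 * ((∑ k ∈ Finset.range n, phi M i (((sig M i * sig M j)^k) v))
          - 2 * kk M i j * (∑ k ∈ Finset.range n, phi M j (((sig M i * sig M j)^k) v))))) • ee i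
      + (-(2 * (∑ k ∈ Finset.range n, phi M j (((sig M i * sig M j)^k) v)))) • ee j := by
  induction n with
  | zero => simp
  | succ n ih =>
      rw [pow_mul_sig_succ, rho_apply,
        Finset.sum_range_succ (fun k => phi M i (((sig M i * sig M j)^k) v)),
        Finset.sum_range_succ (fun k => phi M j (((sig M i * sig M j)^k) v)), ih]
      simp only [map_add, map_smul, phi_ee, kk_diag, smul_eq_mul, kk_symm M j i]
      match_scalars <;> ring

lemma pow_card_fix (hij : i ≠ j) (hm : M i j ≠ 0) (v : V B) :
    ((sig M i * sig M j)^(M i j)) v = v := by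
  have hsum := sum_AM_pow M i j hij hm ![phi M i v, phi M j v]
  have hx : ∑ k ∈ Finset.range (M.M i j), phi M i (((sig M i * sig M j)^k) v) = 0 := by
    have h0 := congrFun hsum 0
    rw [Finset.sum_apply] at h0
    calc ∑ k ∈ Finset.range (M.M i j), phi M i (((sig M i * sig M j)^k) v)
        = ∑ k ∈ Finset.range (M.M i j),
            ((AM M i j ^ k).mulVec ![phi M i v, phi M j v]) 0 :=
          Finset.sum_congr rfl fun k _ => by rw [← vec_pow M i j hij v k]; rfl
      _ = (0 : Fin 2 → ℝ) 0 := h0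
      _ = 0 := rfl
  have hy : ∑ k ∈ Finset.range (M.M i j), phi M j (((sig M i * sig M j)^k) v) = 0 := by
    have h0 := congrFun hsum 1
    rw [Finset.sum_apply] at h0
    calc ∑ k ∈ Finset.range (M.M i j), phi M j (((sig M i * sig M j)^k) v)
        = ∑ k ∈ Finset.range (M.M i j),
            ((AM M i j ^ k).mulVec ![phi M i v, phi M j v]) 1 :=
          Finset.sum_congr rfl fun k _ => by rw [← vec_pow M i j hij v k]; rfl
      _ = (0 : Fin 2 → ℝ) 1 := h0
      _ = 0 := rfl
  rw [pow_rho_eq, hx, hy]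
  simp

theorem liftable : M.IsLiftable (fun l => sig M l) := by
  intro i j
  by_cases hm : M i j = 0
  · rw [hm, pow_zero]
  by_cases hij : i = j
  · subst hij
    rw [M.diagonal i, pow_one]
    exact LinearEquiv.ext fun v => sig_invol M i v
  · exact LinearEquiv.ext (pow_card_fix M i j hij hm)

end Braid2

section PhiSec

variable {W : Type*} [Group W] (cs : CoxeterSystem M W)

/-- The geometric representation. -/
def Phi : W →* (V B ≃ₗ[ℝ] V B) := cs.lift ⟨fun l => sig M l, liftable M⟩

variable {M}

lemma Phi_simple (l : B) : Phi M cs (cs.simple l) = sig M l :=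
  cs.lift_apply_simple (liftable M) l

lemma Phi_mul_apply (w w' : W) (v : V B) :
    Phi M cs (w * w') v = Phi M cs w (Phi M cs w' v) := by
  rw [map_mul]; rfl

lemma Phi_one_apply (v : V B) : Phi M cs 1 v = v := by
  rw [map_one]; rfl

lemma BF_sig_sig (c : B) (x y : V B) : BF M (sig M c x) (sig M c y) = BF M x y := by
  rw [sig_apply, sig_apply]
  simp only [map_add, map_smul, LinearMap.add_apply, LinearMap.smul_apply,
    BF_ee_left, BF_ee_right, phi_ee, kk_diag, smul_eq_mul]
  ring

lemma BF_Phi (w : W) (x y : V B) : BF M (Phi M cs w x) (Phi M cs w y) = BF M x y := by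
  induction w using cs.simple_induction_left with
  | one => rw [Phi_one_apply, Phi_one_apply]
  | mul_simple_left w' l ih =>
    rw [map_mul, Phi_simple]
    have hmul : ∀ z : V B, (sig M l * Phi M cs w') z = sig M l (Phi M cs w' z) :=
      fun _ => rfl
    rw [hmul, hmul, BF_sig_sig]
    exact ih


end PhiSec
end CoxAux
end


noncomputable section
namespace CoxAux
open CoxeterSystem Finsupp List

variable {B : Type*} (M : CoxeterMatrix B)

/-- coordinatewise nonnegative -/
def Nng (x : V B) : Prop := ∀ b, 0 ≤ x b

/-- coordinatewise nonpositive -/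
def Nps (x : V B) : Prop := ∀ b, x b ≤ 0

section FF

variable (i j : B)

/-- The singular Chebyshev coefficients. -/
def ff : ℕ → ℝ := fun n =>
  if M i j = 0 then n
  else Real.sin (n * (Real.pi / M i j)) / Real.sin (Real.pi / M i j)

lemma two_le_M (hij : i ≠ j) (hm : M i j ≠ 0) : 2 ≤ M.M i j := by
  have := M.off_diagonal i j hij
  omega

lemma sin_theta_pos (hij : i ≠ j) (hm : M i j ≠ 0) :
    0 < Real.sin (Real.pi / M i j) := by
  have hm2 : (2:ℝ) ≤ (M i j : ℝ) := by exact_mod_cast two_le_M M i j hij hm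
  apply Real.sin_pos_of_pos_of_lt_pi
  · positivity
  · rw [div_lt_iff₀ (by linarith)]
    nlinarith [Real.pi_pos]

lemma ff_zero : ff M i j 0 = 0 := by
  unfold ff
  split <;> simp

lemma ff_one (hij : i ≠ j) : ff M i j 1 = 1 := by
  unfold ff
  split
  · simp
  · rw [Nat.cast_one, one_mul, div_self (ne_of_gt (sin_theta_pos M i j hij (by assumption)))]

lemma ff_rec (hij : i ≠ j) (n : ℕ) :
    ff M i j (n+2) = (-(2 * kk M i j)) * ff M i j (n+1) - ff M i j n := by
  unfold ff kk
  split
  · push_cast; ring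
  · rename_i hm
    have hs := ne_of_gt (sin_theta_pos M i j hij hm)
    have h1 : ((n:ℝ)+2) * (Real.pi / M i j)
        = ((n:ℝ)+1) * (Real.pi / M i j) + (Real.pi / M i j) := by ring
    have h2 : (n:ℝ) * (Real.pi / M i j)
        = ((n:ℝ)+1) * (Real.pi / M i j) - (Real.pi / M i j) := by ring
    push_cast
    rw [h1, h2, Real.sin_add, Real.sin_sub]
    field_simp
    ring

lemma ff_nonneg (hij : i ≠ j) (n : ℕ) (hn : M i j = 0 ∨ n ≤ M i j) :
    0 ≤ ff M i j n := by
  unfold ff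
  split
  · positivity
  · rename_i hm
    rcases hn with h | h
    · exact absurd h hm
    apply div_nonneg _ (le_of_lt (sin_theta_pos M i j hij hm))
    apply Real.sin_nonneg_of_nonneg_of_le_pi
    · positivity
    · have hnr : (n:ℝ) ≤ (M i j : ℝ) := by exact_mod_cast h
      have hmpos : (0:ℝ) < (M i j : ℝ) := by
        have h0 : (0:ℕ) < M.M i j := by omega
        exact_mod_cast h0
      calc (n:ℝ) * (Real.pi / M i j) ≤ (M i j : ℝ) * (Real.pi / M i j) := by
            apply mul_le_mul_of_nonneg_right hnr
            positivity
        _ = Real.pi := by field_simp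

end FF

section Coeff

variable {W : Type*} [Group W] (cs : CoxeterSystem M W)
variable {M}
variable (i j : B)

lemma coeff (hij : i ≠ j) (k : ℕ) :
    Phi M cs (cs.wordProd (alternatingWord i j k)) (ee i)
      = (if Even k then ff M i j (k+1) else ff M i j k) • ee i
        + (if Even k then ff M i j k else ff M i j (k+1)) • ee j := by
  induction k with
  | zero =>
      rw [show alternatingWord i j 0 = [] from rfl, wordProd_nil, map_one,
        if_pos Even.zero, if_pos Even.zero, ff_zero, ff_one M i j hij,
        zero_smul, one_smul, add_zero]
      rfl
  | succ k ih =>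
      have hmul : ∀ (c : B) (z : V B),
          (sig M c * Phi M cs (cs.wordProd (alternatingWord i j k))) z
            = sig M c (Phi M cs (cs.wordProd (alternatingWord i j k)) z) := fun _ _ => rfl
      rcases Nat.even_or_odd k with hk | hk
      · have hk1 : ¬ Even (k+1) := by rw [Nat.even_add_one]; exact not_not_intro hk
        have ih' : Phi M cs (cs.wordProd (alternatingWord i j k)) (ee i)
            = ff M i j (k+1) • ee i + ff M i j k • ee j := by
          rw [ih, if_pos hk, if_pos hk]
        rw [alternatingWord_succ', wordProd_cons, map_mul, Phi_simple, if_pos hk,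
          hmul, ih', if_neg hk1, if_neg hk1]
        rw [sig_apply, map_add, map_smul, map_smul, phi_ee, phi_ee, kk_diag,
          kk_symm M j i, ff_rec M i j hij k]
        match_scalars <;> (try simp only [smul_eq_mul]) <;> ring
      · have hke : ¬ Even k := Nat.not_even_iff_odd.mpr hk
        have hk1 : Even (k+1) := by rw [Nat.even_add_one]; exact hke
        have ih' : Phi M cs (cs.wordProd (alternatingWord i j k)) (ee i)
            = ff M i j k • ee i + ff M i j (k+1) • ee j := by
          rw [ih, if_neg hke, if_neg hke]
        rw [alternatingWord_succ', wordProd_cons, map_mul, Phi_simple, if_neg hke,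
          hmul, ih', if_pos hk1, if_pos hk1]
        rw [sig_apply, map_add, map_smul, map_smul, phi_ee, phi_ee, kk_diag,
          ff_rec M i j hij k]
        match_scalars <;> (try simp only [smul_eq_mul]) <;> ring

end Coeff

section Key

variable {W : Type*} [Group W] (cs : CoxeterSystem M W)
variable {M}

theorem key : ∀ n (w : W), cs.length w = n → ∀ i : B,
    cs.length w < cs.length (w * cs.simple i) →
    Nng (Phi M cs w (ee i)) := by
  intro n
  induction n using Nat.strong_induction_on with
  | _ n IH =>
    intro w hw i hasc
    by_cases hone : w = 1
    · subst hone
      rw [map_one]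
      intro b
      show (0:ℝ) ≤ (ee i) b
      rw [ee]
      rcases eq_or_ne b i with h | h
      · subst h; simp
      · simp [Finsupp.single_apply, (Ne.symm h)]
    · obtain ⟨j, hj⟩ := cs.exists_rightDescent_of_ne_one hone
      have hdes : cs.length (w * cs.simple j) + 1 = cs.length w := cs.isRightDescent_iff.mp hj
      have hij : i ≠ j := by
        intro h; subst h; omega
      classical
      set P : ℕ → Prop :=
        fun k => cs.length (w * (cs.wordProd (alternatingWord i j k))⁻¹) + k = cs.length w
        with hPdef
      have hP1 : P 1 := by
        show cs.length (w * (cs.wordProd (alternatingWord i j 1))⁻¹) + 1 = cs.length w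
        have ha1 : alternatingWord i j 1 = [j] := by
          rw [show (1:ℕ) = 0 + 1 from rfl, alternatingWord_succ]
          simp [alternatingWord]
        rw [ha1, wordProd_singleton, cs.inv_simple]
        exact hdes
      have htri : ∀ k, cs.length w
          ≤ cs.length (w * (cs.wordProd (alternatingWord i j k))⁻¹) + k := by
        intro k
        have h1 := cs.length_mul_le (w * (cs.wordProd (alternatingWord i j k))⁻¹)
          (cs.wordProd (alternatingWord i j k))
        rw [inv_mul_cancel_right] at h1
        have h2 : cs.length (cs.wordProd (alternatingWord i j k)) ≤ k := by
          have h3 := cs.length_wordProd_le (alternatingWord i j k)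
          rwa [length_alternatingWord] at h3
        omega
      have hPbound : ∀ k, P k → k ≤ cs.length w := by
        intro k hk
        have hk' : cs.length (w * (cs.wordProd (alternatingWord i j k))⁻¹) + k
            = cs.length w := hk
        omega
      have hlw1 : 1 ≤ cs.length w := by omega
      set K := Nat.findGreatest P (cs.length w) with hKdef
      have hK : P K := Nat.findGreatest_spec hlw1 hP1
      have hK1 : 1 ≤ K := Nat.le_findGreatest hlw1 hP1
      have hsucc : ∀ k, w * (cs.wordProd (alternatingWord i j (k+1)))⁻¹
          = (w * (cs.wordProd (alternatingWord i j k))⁻¹)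
            * cs.simple (if Even k then j else i) := by
        intro k
        rw [alternatingWord_succ', wordProd_cons, mul_inv_rev, cs.inv_simple, mul_assoc]
      set v := w * (cs.wordProd (alternatingWord i j K))⁻¹ with hv
      have hlv : cs.length v + K = cs.length w := hK
      have hnot : ¬ P (K+1) := by
        intro hPK1
        have hb := hPbound (K+1) hPK1
        exact Nat.findGreatest_is_greatest
          (show Nat.findGreatest P (cs.length w) < K + 1 by omega) hb hPK1
      have hascnext : cs.length v
          < cs.length (v * cs.simple (if Even K then j else i)) := by
        rcases cs.length_mul_simple v (if Even K then j else i) with h | h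
        · omega
        · exfalso
          apply hnot
          show cs.length (w * (cs.wordProd (alternatingWord i j (K+1)))⁻¹) + (K+1)
            = cs.length w
          rw [hsucc K, ← hv]
          omega
      obtain ⟨K', hKK⟩ : ∃ K', K = K' + 1 := ⟨K - 1, by omega⟩
      have hprev : v * cs.simple (if Even K' then j else i)
          = w * (cs.wordProd (alternatingWord i j K'))⁻¹ := by
        rw [hv, hKK, hsucc K', mul_assoc, cs.simple_mul_simple_self, mul_one]
      have hascprev : cs.length v
          < cs.length (v * cs.simple (if Even K' then j else i)) := by
        rw [hprev]
        have h4 := htri K'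
        omega
      have hEvenK : Even K ↔ ¬ Even K' := by rw [hKK, Nat.even_add_one]
      have hvi : cs.length v < cs.length (v * cs.simple i) := by
        rcases Nat.even_or_odd K' with he | he
        · have h1 : ¬ Even K := fun hEK => (hEvenK.mp hEK) he
          rwa [if_neg h1] at hascnext
        · have h1 : ¬ Even K' := Nat.not_even_iff_odd.mpr he
          rwa [if_neg h1] at hascprev
      have hvj : cs.length v < cs.length (v * cs.simple j) := by
        rcases Nat.even_or_odd K' with he | he
        · rwa [if_pos he] at hascprev
        · have h1 : Even K := hEvenK.mpr (Nat.not_even_iff_odd.mpr he)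
          rwa [if_pos h1] at hascnext
      have hKm : M.M i j = 0 ∨ (1 ≤ M.M i j ∧ K ≤ M.M i j - 1) := by
        by_cases hm : M.M i j = 0
        · exact Or.inl hm
        right
        refine ⟨by omega, ?_⟩
        have hKle : K ≤ M.M i j := by
          by_contra hgt
          have hnr := cs.not_isReduced_alternatingWord i j hm (by omega : K > M.M i j)
          have hlt : cs.length (cs.wordProd (alternatingWord i j K)) < K := by
            have hle := cs.length_wordProd_le (alternatingWord i j K)
            rw [length_alternatingWord] at hle
            have hne : cs.length (cs.wordProd (alternatingWord i j K)) ≠ K := by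
              intro he
              exact hnr (by
                show cs.length (cs.wordProd (alternatingWord i j K))
                  = (alternatingWord i j K).length
                rw [length_alternatingWord]
                exact he)
            omega
          have hle2 : cs.length w
              ≤ cs.length v + cs.length (cs.wordProd (alternatingWord i j K)) := by
            have h5 := cs.length_mul_le v (cs.wordProd (alternatingWord i j K))
            rw [hv, inv_mul_cancel_right] at h5
            exact h5
          omega
        have hKne : K ≠ M.M i j := by
          intro he
          have hbw : cs.wordProd (alternatingWord i j K)
              = cs.wordProd (alternatingWord j i K) := by
            rw [he]
            conv_rhs => rw [M.symmetric i j]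
            exact cs.wordProd_braidWord_eq i j
          have hKpred : K = (K-1) + 1 := by omega
          have hw2 : w = v * cs.wordProd (alternatingWord i j K) := by
            rw [hv, inv_mul_cancel_right]
          have h3 : alternatingWord j i K = (alternatingWord i j (K-1)).concat i := by
            conv_lhs => rw [hKpred]
            exact alternatingWord_succ j i (K-1)
          have hwsi : w * cs.simple i = v * cs.wordProd (alternatingWord i j (K-1)) := by
            rw [hw2, hbw, h3, wordProd_concat, ← mul_assoc,
              cs.simple_mul_simple_cancel_right]
          have hlen : cs.length (w * cs.simple i) ≤ cs.length v + (K-1) := by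
            rw [hwsi]
            have h1 := cs.length_mul_le v (cs.wordProd (alternatingWord i j (K-1)))
            have h2 : cs.length (cs.wordProd (alternatingWord i j (K-1))) ≤ K-1 := by
              have h6 := cs.length_wordProd_le (alternatingWord i j (K-1))
              rwa [length_alternatingWord] at h6
            omega
          omega
        omega
      have hNi : Nng (Phi M cs v (ee i)) := IH (cs.length v) (by omega) v rfl i hvi
      have hNj : Nng (Phi M cs v (ee j)) := IH (cs.length v) (by omega) v rfl j hvj
      have hw2 : w = v * cs.wordProd (alternatingWord i j K) := by
        rw [hv, inv_mul_cancel_right]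
      rw [hw2, map_mul]
      have hmul : ∀ z : V B, (Phi M cs v * Phi M cs (cs.wordProd (alternatingWord i j K))) z
          = Phi M cs v (Phi M cs (cs.wordProd (alternatingWord i j K)) z) := fun _ => rfl
      rw [hmul, coeff cs i j hij K, map_add, map_smul, map_smul]
      have hX : 0 ≤ (if Even K then ff M i j (K+1) else ff M i j K) := by
        rcases hKm with hm | ⟨hm1, hKb⟩
        · split <;> exact ff_nonneg M i j hij _ (Or.inl hm)
        · split <;> refine ff_nonneg M i j hij _ (Or.inr ?_) <;> omega
      have hY : 0 ≤ (if Even K then ff M i j K else ff M i j (K+1)) := by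
        rcases hKm with hm | ⟨hm1, hKb⟩
        · split <;> exact ff_nonneg M i j hij _ (Or.inl hm)
        · split <;> refine ff_nonneg M i j hij _ (Or.inr ?_) <;> omega
      intro b
      rw [Finsupp.add_apply, Finsupp.smul_apply, Finsupp.smul_apply,
        smul_eq_mul, smul_eq_mul]
      have h1 := hNi b
      have h2 := hNj b
      exact add_nonneg (mul_nonneg hX h1) (mul_nonneg hY h2)

end Key
end CoxAux
end


noncomputable section
namespace CoxAux
open CoxeterSystem Finsupp

variable {B : Type*} {M : CoxeterMatrix B}

section Helpers

lemma BF_symm (x y : V B) : BF M x y = BF M y x := by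
  induction x using Finsupp.induction_linear with
  | zero => simp
  | add f g hf hg => rw [map_add, LinearMap.add_apply, hf, hg, map_add]
  | single a b =>
      have h : (Finsupp.single a b : V B) = b • ee a := by
        rw [ee, Finsupp.smul_single, smul_eq_mul, mul_one]
      rw [h, map_smul, map_smul, LinearMap.smul_apply, BF_ee_left, BF_ee_right]

lemma nng_add {x y : V B} (hx : Nng x) (hy : Nng y) : Nng (x + y) := by
  intro b
  rw [Finsupp.add_apply]
  exact add_nonneg (hx b) (hy b)

lemma nps_add {x y : V B} (hx : Nps x) (hy : Nps y) : Nps (x + y) := by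
  intro b
  rw [Finsupp.add_apply]
  exact add_nonpos (hx b) (hy b)

lemma nng_smul {a : ℝ} {x : V B} (ha : 0 ≤ a) (hx : Nng x) : Nng (a • x) := by
  intro b
  rw [Finsupp.smul_apply, smul_eq_mul]
  exact mul_nonneg ha (hx b)

lemma nng_smul' {a : ℝ} {x : V B} (ha : a ≤ 0) (hx : Nps x) : Nng (a • x) := by
  intro b
  rw [Finsupp.smul_apply, smul_eq_mul]
  have := hx b
  nlinarith

lemma nps_smul {a : ℝ} {x : V B} (ha : 0 ≤ a) (hx : Nps x) : Nps (a • x) := by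
  intro b
  rw [Finsupp.smul_apply, smul_eq_mul]
  exact mul_nonpos_of_nonneg_of_nonpos ha (hx b)

lemma nps_smul' {a : ℝ} {x : V B} (ha : a ≤ 0) (hx : Nng x) : Nps (a • x) := by
  intro b
  rw [Finsupp.smul_apply, smul_eq_mul]
  exact mul_nonpos_of_nonpos_of_nonneg ha (hx b)

lemma nng_nps_eq_zero {x : V B} (hx : Nng x) (hx' : Nps x) : x = 0 := by
  ext b
  exact le_antisymm (hx' b) (hx b)

end Helpers

section RootVec

variable {W : Type*} [Group W] (cs : CoxeterSystem M W)

/-- roots of the geometric representation -/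
def IsRootVec (ξ : V B) : Prop := ∃ (w : W) (l : B), ξ = Phi M cs w (ee l)

lemma rootvec_phi {ξ : V B} (w : W) (h : IsRootVec cs ξ) :
    IsRootVec cs (Phi M cs w ξ) := by
  obtain ⟨w', l, rfl⟩ := h
  exact ⟨w * w', l, (Phi_mul_apply cs w w' (ee l)).symm⟩

lemma rootvec_neg {ξ : V B} (h : IsRootVec cs ξ) : IsRootVec cs (-ξ) := by
  obtain ⟨w', l, rfl⟩ := h
  refine ⟨w' * cs.simple l, l, ?_⟩
  rw [map_mul]
  have hmul : ∀ z : V B, (Phi M cs w' * Phi M cs (cs.simple l)) z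
      = Phi M cs w' (Phi M cs (cs.simple l) z) := fun _ => rfl
  rw [hmul, Phi_simple, sig_ee_self, map_neg]

lemma rootvec_BF_self {ξ : V B} (h : IsRootVec cs ξ) : BF M ξ ξ = 1 := by
  obtain ⟨w, l, rfl⟩ := h
  rw [BF_Phi, BF_ee_ee, kk_diag]

lemma rootvec_ne_zero {ξ : V B} (h : IsRootVec cs ξ) : ξ ≠ 0 := by
  intro h0
  have h1 := rootvec_BF_self cs h
  rw [h0] at h1
  simp at h1

lemma key_lt {w : W} {i : B} (h : cs.length (w * cs.simple i) < cs.length w) :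
    Nps (Phi M cs w (ee i)) := by
  have hasc : cs.length (w * cs.simple i)
      < cs.length ((w * cs.simple i) * cs.simple i) := by
    rwa [cs.simple_mul_simple_cancel_right]
  have hN := key cs (cs.length (w * cs.simple i)) (w * cs.simple i) rfl i hasc
  have hϕ : Phi M cs w (ee i) = - Phi M cs (w * cs.simple i) (ee i) := by
    conv_lhs => rw [← cs.simple_mul_simple_cancel_right (w := w) i]
    rw [map_mul]
    have hmul : ∀ z : V B, (Phi M cs (w * cs.simple i) * Phi M cs (cs.simple i)) z
        = Phi M cs (w * cs.simple i) (Phi M cs (cs.simple i) z) := fun _ => rfl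
    rw [hmul, Phi_simple, sig_ee_self, map_neg]
  rw [hϕ]
  intro b
  rw [Finsupp.neg_apply]
  simp only [neg_nonpos]
  exact hN b

lemma rootvec_dichotomy {ξ : V B} (h : IsRootVec cs ξ) : Nng ξ ∨ Nps ξ := by
  obtain ⟨w, l, rfl⟩ := h
  rcases cs.length_mul_simple w l with h1 | h1
  · exact Or.inl (key cs (cs.length w) w rfl l (by omega))
  · exact Or.inr (key_lt cs (by omega))

/-- Faithfulness of the geometric representation. -/
lemma Phi_faithful {w : W} (h : Phi M cs w = 1) : w = 1 := by
  by_contra hne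
  obtain ⟨j, hj⟩ := cs.exists_rightDescent_of_ne_one hne
  have hdes : cs.length (w * cs.simple j) + 1 = cs.length w := cs.isRightDescent_iff.mp hj
  have hasc : cs.length (w * cs.simple j)
      < cs.length ((w * cs.simple j) * cs.simple j) := by
    rw [cs.simple_mul_simple_cancel_right]; omega
  have hN := key cs (cs.length (w * cs.simple j)) (w * cs.simple j) rfl j hasc
  have hϕ : Phi M cs (w * cs.simple j) (ee j) = - (ee j) := by
    rw [map_mul]
    have hmul : ∀ z : V B, (Phi M cs w * Phi M cs (cs.simple j)) z
        = Phi M cs w (Phi M cs (cs.simple j) z) := fun _ => rfl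
    rw [hmul, Phi_simple, sig_ee_self, map_neg, h]
    rfl
  have := hN j
  rw [hϕ, Finsupp.neg_apply, ee_apply_self] at this
  linarith

/-- The reflection formula for conjugates of simple reflections. -/
lemma Phi_conj_simple (w : W) (l : B) (x : V B) :
    Phi M cs (w * cs.simple l * w⁻¹) x
      = x + (-(2 * BF M (Phi M cs w (ee l)) x)) • (Phi M cs w (ee l)) := by
  rw [map_mul, map_mul]
  have hmul : ∀ (f g : V B ≃ₗ[ℝ] V B) (z : V B), (f * g) z = f (g z) := fun _ _ _ => rfl
  rw [hmul, hmul, Phi_simple, sig_apply, map_add, map_smul]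
  have h1 : Phi M cs w (Phi M cs w⁻¹ x) = x := by
    rw [← Phi_mul_apply, mul_inv_cancel, Phi_one_apply]
  have h2 : phi M l (Phi M cs w⁻¹ x) = BF M (Phi M cs w (ee l)) x := by
    rw [← BF_ee_left]
    conv_rhs => rw [← h1]
    rw [BF_Phi]
  rw [h1, h2]

/-- The set of positive roots made negative by `z` is finite. -/
lemma inv_finite (z : W) : ∀ n, cs.length z = n →
    {ξ : V B | IsRootVec cs ξ ∧ Nng ξ ∧ Nps (Phi M cs z ξ)}.Finite := by
  classical
  intro n
  induction n using Nat.strong_induction_on generalizing z with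
  | _ n IH =>
    intro hz
    by_cases hone : z = 1
    · subst hone
      have hempty : {ξ : V B | IsRootVec cs ξ ∧ Nng ξ ∧ Nps (Phi M cs 1 ξ)} = ∅ := by
        ext ξ
        simp only [Set.mem_setOf_eq, Set.mem_empty_iff_false, iff_false, not_and]
        intro hrv hnng hnps
        rw [Phi_one_apply] at hnps
        exact rootvec_ne_zero cs hrv (nng_nps_eq_zero hnng hnps)
      rw [hempty]
      exact Set.finite_empty
    · obtain ⟨j, hj⟩ := cs.exists_rightDescent_of_ne_one hone
      have hdes : cs.length (z * cs.simple j) + 1 = cs.length z := cs.isRightDescent_iff.mp hj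
      have hfin' := IH (cs.length (z * cs.simple j)) (by omega) (z * cs.simple j) rfl
      apply Set.Finite.subset (Set.Finite.insert (ee j)
        (hfin'.image (fun ξ => sig M j ξ)))
      intro ξ ⟨hrv, hnng, hnps⟩
      rcases eq_or_ne ξ (ee j) with he | hne
      · exact Or.inl he
      · right
        refine ⟨sig M j ξ, ⟨?_, ?_, ?_⟩, sig_invol M j ξ⟩
        · -- root vec
          obtain ⟨w', l, rfl⟩ := hrv
          refine ⟨cs.simple j * w', l, ?_⟩
          rw [map_mul]
          have hmul : ∀ zz : V B, (Phi M cs (cs.simple j) * Phi M cs w') zz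
              = Phi M cs (cs.simple j) (Phi M cs w' zz) := fun _ => rfl
          rw [hmul, Phi_simple]
        · -- Nng
          have hrv2 : IsRootVec cs (sig M j ξ) := by
            obtain ⟨w', l, rfl⟩ := hrv
            refine ⟨cs.simple j * w', l, ?_⟩
            rw [map_mul]
            have hmul : ∀ zz : V B, (Phi M cs (cs.simple j) * Phi M cs w') zz
                = Phi M cs (cs.simple j) (Phi M cs w' zz) := fun _ => rfl
            rw [hmul, Phi_simple]
          rcases rootvec_dichotomy cs hrv2 with h | h
          · exact h
          · exfalso
            -- then ξ is supported on j only
            have hcoord : ∀ b, b ≠ j → ξ b = 0 := by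
              intro b hb
              have h1 : (sig M j ξ) b = ξ b := by
                rw [sig_apply, Finsupp.add_apply, Finsupp.smul_apply, ee,
                  Finsupp.single_apply, if_neg (Ne.symm hb)]
                simp
              have h2 := h b
              rw [h1] at h2
              exact le_antisymm h2 (hnng b)
            have hξ : ξ = Finsupp.single j (ξ j) := by
              ext b
              rcases eq_or_ne b j with hb | hb
              · subst hb; rw [Finsupp.single_apply, if_pos rfl]
              · rw [hcoord b hb, Finsupp.single_apply, if_neg (Ne.symm hb)]
            have hsingle : ξ = (ξ j) • ee j := by
              rw [hξ, ee, Finsupp.smul_single, smul_eq_mul, mul_one]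
              conv_lhs => rw [hξ]
            have hBF := rootvec_BF_self cs hrv
            rw [hsingle] at hBF
            rw [map_smul, map_smul, LinearMap.smul_apply, BF_ee_ee, kk_diag] at hBF
            have hj1 : ξ j * ξ j = 1 := by
              simpa [smul_eq_mul] using hBF
            have hj0 : 0 ≤ ξ j := hnng j
            have hj2 : ξ j = 1 := by nlinarith
            apply hne
            rw [hsingle, hj2, one_smul]
        · -- Nps after z * s j
          have h3 : Phi M cs (z * cs.simple j) (sig M j ξ) = Phi M cs z ξ := by
            rw [map_mul]
            have hmul : ∀ zz : V B, (Phi M cs z * Phi M cs (cs.simple j)) zz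
                = Phi M cs z (Phi M cs (cs.simple j) zz) := fun _ => rfl
            rw [hmul, Phi_simple, sig_invol]
          rw [h3]
          exact hnps

/-- Bridge: membership in a simple root half-space is positivity. -/
lemma mem_simpleRoot_iff (l : B) (u : W) :
    cs.length u < cs.length (cs.simple l * u) ↔ Nng (Phi M cs u⁻¹ (ee l)) := by
  have hlen : cs.length (cs.simple l * u) = cs.length (u⁻¹ * cs.simple l) := by
    conv_lhs => rw [show cs.simple l * u = (u⁻¹ * cs.simple l)⁻¹ by
      rw [mul_inv_rev, cs.inv_simple, inv_inv]]
    rw [cs.length_inv]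
  have hlen2 : cs.length u = cs.length u⁻¹ := (cs.length_inv u).symm
  constructor
  · intro h
    apply key cs (cs.length u⁻¹) u⁻¹ rfl l
    omega
  · intro h
    by_contra hlt
    have hne : cs.length (cs.simple l * u) ≠ cs.length u := cs.length_simple_mul_ne u l
    have hlt2 : cs.length (u⁻¹ * cs.simple l) < cs.length u⁻¹ := by omega
    have hnps := key_lt cs hlt2
    have h0 := nng_nps_eq_zero h hnps
    exact rootvec_ne_zero cs ⟨u⁻¹, l, rfl⟩ h0

end RootVec
end CoxAux
end


noncomputable section
namespace CoxAux
open CoxeterSystem Finsupp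

variable {B : Type*} {M : CoxeterMatrix B}

section Final

variable {W : Type*} [Group W] (cs : CoxeterSystem M W)

lemma mem_root_iff (v : W) (s : B) (w : W) :
    w ∈ (v * ·) '' simpleRoot cs s ↔ Nng (Phi M cs w⁻¹ (Phi M cs v (ee s))) := by
  constructor
  · rintro ⟨u, hu, rfl⟩
    have hu' : cs.length u < cs.length (cs.simple s * u) := hu
    have h := (mem_simpleRoot_iff cs s u).mp hu'
    have he : Phi M cs ((v * u)⁻¹) (Phi M cs v (ee s)) = Phi M cs u⁻¹ (ee s) := by
      rw [← Phi_mul_apply, mul_inv_rev, mul_assoc, inv_mul_cancel, mul_one]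
    rw [he]
    exact h
  · intro h
    refine ⟨v⁻¹ * w, ?_, by simp⟩
    show cs.length (v⁻¹ * w) < cs.length (cs.simple s * (v⁻¹ * w))
    apply (mem_simpleRoot_iff cs s (v⁻¹ * w)).mpr
    have he : Phi M cs ((v⁻¹ * w)⁻¹) (ee s) = Phi M cs w⁻¹ (Phi M cs v (ee s)) := by
      rw [mul_inv_rev, inv_inv, Phi_mul_apply]
    rw [he]
    exact h

lemma not_mem_root (v : W) (s : B) (w : W)
    (h : w ∉ (v * ·) '' simpleRoot cs s) :
    Nps (Phi M cs w⁻¹ (Phi M cs v (ee s))) := by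
  have hrv : IsRootVec cs (Phi M cs w⁻¹ (Phi M cs v (ee s))) :=
    ⟨w⁻¹ * v, s, by rw [Phi_mul_apply]⟩
  rcases rootvec_dichotomy cs hrv with h1 | h1
  · exact absurd ((mem_root_iff cs v s w).mpr h1) h
  · exact h1

/-- coefficient recursion for the orbit of a root under an infinite dihedral pair -/
def abseq (c0 : ℝ) : ℕ → ℝ × ℝ
  | 0 => (1, 0)
  | n+1 => ((4*c0^2-1) * (abseq c0 n).1 + 2*c0 * (abseq c0 n).2,
            -(2*c0*(abseq c0 n).1 + (abseq c0 n).2))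

end Final
end CoxAux
end


open CoxAux CoxeterSystem

/-- If `α ≠ ±β` are roots with `o(r_α r_β) = ∞`, then `{α, β}` or
`{-α, β}` is nested. -/
theorem stmt6 (cs : CoxeterSystem M W) (α β : Set W) (rα rβ : W)
    (hα : IsRootPair cs α rα) (hβ : IsRootPair cs β rβ)
    (hne : α ≠ β) (hnopp : α ≠ βᶜ)
    (hinf : ¬ IsOfFinOrder (rα * rβ)) :
    (α ⊆ β ∨ β ⊆ α) ∨ (αᶜ ⊆ β ∨ β ⊆ αᶜ) := by

  classical
  obtain ⟨v, s, hαset, hrα⟩ := hα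
  obtain ⟨v', s', hβset, hrβ⟩ := hβ
  by_contra hcon
  push_neg at hcon
  obtain ⟨⟨h1, h2⟩, h3, h4⟩ := hcon
  obtain ⟨x, hx1, hx2⟩ := Set.not_subset.mp h1
  obtain ⟨y, hy1, hy2⟩ := Set.not_subset.mp h2
  obtain ⟨q, hq1, hq2⟩ := Set.not_subset.mp h3
  obtain ⟨p, hp1, hp2⟩ := Set.not_subset.mp h4
  have hqa : q ∉ α := hq1
  have hpa : p ∈ α := Set.notMem_compl_iff.mp hp2
  set γ := Phi M cs v (ee s) with hγ
  set δ := Phi M cs v' (ee s') with hδ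
  -- membership in positivity terms
  have hpγ : Nng (Phi M cs p⁻¹ γ) := (mem_root_iff cs v s p).mp (hαset ▸ hpa)
  have hpδ : Nng (Phi M cs p⁻¹ δ) := (mem_root_iff cs v' s' p).mp (hβset ▸ hp1)
  have hxγ : Nng (Phi M cs x⁻¹ γ) := (mem_root_iff cs v s x).mp (hαset ▸ hx1)
  have hyδ : Nng (Phi M cs y⁻¹ δ) := (mem_root_iff cs v' s' y).mp (hβset ▸ hy1)
  have hqγ : Nps (Phi M cs q⁻¹ γ) := not_mem_root cs v s q (by rw [← hαset]; exact hqa)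
  have hqδ : Nps (Phi M cs q⁻¹ δ) := not_mem_root cs v' s' q (by rw [← hβset]; exact hq2)
  have hxδ : Nps (Phi M cs x⁻¹ δ) := not_mem_root cs v' s' x (by rw [← hβset]; exact hx2)
  have hyγ : Nps (Phi M cs y⁻¹ γ) := not_mem_root cs v s y (by rw [← hαset]; exact hy2)
  set g := rα * rβ with hg
  have ht2 : rα * rα = 1 := by
    have h := cs.simple_mul_simple_self s
    calc rα * rα = v * (cs.simple s * cs.simple s) * v⁻¹ := by rw [hrα]; group
      _ = 1 := by rw [h, mul_one, mul_inv_cancel]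
  have hu2 : rβ * rβ = 1 := by
    have h := cs.simple_mul_simple_self s'
    calc rβ * rβ = v' * (cs.simple s' * cs.simple s') * v'⁻¹ := by rw [hrβ]; group
      _ = 1 := by rw [h, mul_one, mul_inv_cancel]
  set c0 := BF M γ δ with hc0
  have hγγ : BF M γ γ = 1 := rootvec_BF_self cs ⟨v, s, rfl⟩
  have hδδ : BF M δ δ = 1 := rootvec_BF_self cs ⟨v', s', rfl⟩
  have hδγ : BF M δ γ = c0 := by rw [hc0, BF_symm]
  have hrefl_t : ∀ x2, Phi M cs rα x2 = x2 + (-(2 * BF M γ x2)) • γ := by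
    intro x2; rw [hrα]; exact Phi_conj_simple cs v s x2
  have hrefl_u : ∀ x2, Phi M cs rβ x2 = x2 + (-(2 * BF M δ x2)) • δ := by
    intro x2; rw [hrβ]; exact Phi_conj_simple cs v' s' x2
  have habs : ∀ n, Phi M cs (g^n) γ = (abseq c0 n).1 • γ + (abseq c0 n).2 • δ := by
    intro n
    induction n with
    | zero =>
        rw [pow_zero, Phi_one_apply]
        show γ = (1:ℝ) • γ + (0:ℝ) • δ
        rw [one_smul, zero_smul, add_zero]
    | succ n ih =>
        rw [pow_succ', Phi_mul_apply, ih, hg, Phi_mul_apply, hrefl_u, hrefl_t]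
        simp only [map_add, map_smul, LinearMap.add_apply, LinearMap.smul_apply,
          smul_eq_mul, hγγ, hδδ, hδγ, ← hc0]
        show _ = (abseq c0 (n+1)).1 • γ + (abseq c0 (n+1)).2 • δ
        rw [show abseq c0 (n+1) = ((4*c0^2-1) * (abseq c0 n).1 + 2*c0 * (abseq c0 n).2,
            -(2*c0*(abseq c0 n).1 + (abseq c0 n).2)) from rfl]
        match_scalars <;> ring
  have hinj : ∀ n k : ℕ, Phi M cs (g^n) γ = Phi M cs (g^k) γ → n = k := by
    have hs : ∀ h : ℕ, 0 < h → Phi M cs (g^h) γ ≠ γ := by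
      intro h hpos hfix
      have hconj : g^h * rα * (g^h)⁻¹ = (g^h * v) * cs.simple s * (g^h * v)⁻¹ := by
        rw [hrα]; group
      have hΦconj : ∀ x2, Phi M cs (g^h * rα * (g^h)⁻¹) x2 = Phi M cs rα x2 := by
        intro x2
        rw [hconj, Phi_conj_simple]
        have hv2 : Phi M cs (g^h * v) (ee s) = γ := by
          rw [Phi_mul_apply, ← hγ, hfix]
        rw [hv2, hrefl_t]
      have heqc : g^h * rα * (g^h)⁻¹ = rα := by
        have h6 : ∀ x2, Phi M cs ((g^h * rα * (g^h)⁻¹) * rα) x2 = x2 := by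
          intro x2
          rw [Phi_mul_apply, hΦconj, ← Phi_mul_apply, ht2, Phi_one_apply]
        have h7 : (g^h * rα * (g^h)⁻¹) * rα = 1 := by
          apply Phi_faithful cs
          apply LinearEquiv.ext
          intro x2
          rw [h6]
          rfl
        have h8 : g^h * rα * (g^h)⁻¹ = rα⁻¹ := eq_inv_of_mul_eq_one_left h7
        rw [h8, inv_eq_of_mul_eq_one_right ht2]
      have hαinv : rα⁻¹ = rα := inv_eq_of_mul_eq_one_right ht2
      have hβinv : rβ⁻¹ = rβ := inv_eq_of_mul_eq_one_right hu2
      have hconj2 : rα * g * rα = g⁻¹ := by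
        rw [hg, mul_inv_rev, hαinv, hβinv, ← mul_assoc, ht2, one_mul]
      have hgh : rα * g^h * rα = (g⁻¹)^h := by
        have hpow : ∀ m : ℕ, rα * g^m * rα = (rα * g * rα)^m := by
          intro m
          induction m with
          | zero => rw [pow_zero, pow_zero, mul_one, ht2]
          | succ m ihm =>
              conv_rhs => rw [pow_succ, ← ihm]
              rw [show (rα * g^m * rα) * (rα * g * rα)
                  = rα * g^m * (rα * rα) * g * rα from by group, ht2, mul_one, pow_succ]
              group
        rw [hpow h, hconj2]
      have hcomm : rα * g^h * rα = g^h := by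
        have h9 : g^h * rα = rα * g^h := by
          calc g^h * rα = (g^h * rα * (g^h)⁻¹) * g^h := by group
            _ = rα * g^h := by rw [heqc]
        rw [← h9, mul_assoc, ht2, mul_one]
      have hfin2 : g^(2*h) = 1 := by
        have h10 : (g:W)^h = (g⁻¹)^h := by rw [← hgh, hcomm]
        have h11 : g^h * g^h = 1 := by
          nth_rewrite 1 [h10]
          rw [inv_pow, inv_mul_cancel]
        rw [two_mul, pow_add, h11]
      exact hinf (isOfFinOrder_iff_pow_eq_one.mpr ⟨2*h, by omega, hfin2⟩)
    intro n k he
    rcases lt_trichotomy n k with hlt | heq | hgt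
    · exfalso
      apply hs (k - n) (by omega)
      have h5 : Phi M cs (g^n) (Phi M cs (g^(k-n)) γ) = Phi M cs (g^n) γ := by
        rw [← Phi_mul_apply, ← pow_add, show n + (k-n) = k by omega]
        exact he.symm
      exact (Phi M cs (g^n)).injective h5
    · exact heq
    · exfalso
      apply hs (n - k) (by omega)
      have h5 : Phi M cs (g^k) (Phi M cs (g^(n-k)) γ) = Phi M cs (g^k) γ := by
        rw [← Phi_mul_apply, ← pow_add, show k + (n-k) = n by omega]
        exact he
      exact (Phi M cs (g^k)).injective h5
  -- pigeonhole on the sign pattern of the coefficients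
  set F : ℕ → Bool × Bool :=
    fun n => (decide (0 ≤ (abseq c0 n).1), decide (0 ≤ (abseq c0 n).2)) with hF
  obtain ⟨val, hval⟩ := Finite.exists_infinite_fiber F
  have hfib : (F ⁻¹' {val}).Infinite := Set.infinite_coe_iff.mp hval
  have hcomp : ∀ (w : W) (n : ℕ) (ε : ℝ), Phi M cs w⁻¹ (ε • Phi M cs (g^n) γ)
      = (ε * (abseq c0 n).1) • Phi M cs w⁻¹ γ
        + (ε * (abseq c0 n).2) • Phi M cs w⁻¹ δ := by
    intro w n ε
    rw [habs n, smul_add, smul_smul, smul_smul, map_add, map_smul, map_smul]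
  obtain ⟨w₁, w₂, ε, hεpm, hsep⟩ :
      ∃ (w₁ w₂ : W) (ε : ℝ), (ε = 1 ∨ ε = -1) ∧ ∀ n ∈ F ⁻¹' {val},
        Nng (Phi M cs w₁⁻¹ (ε • Phi M cs (g^n) γ))
        ∧ Nps (Phi M cs w₂⁻¹ (ε • Phi M cs (g^n) γ)) := by
    obtain ⟨b1, b2⟩ := val
    have hmemfib : ∀ n ∈ F ⁻¹' {(b1, b2)},
        decide (0 ≤ (abseq c0 n).1) = b1 ∧ decide (0 ≤ (abseq c0 n).2) = b2 := by
      intro n hn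
      have : F n = (b1, b2) := hn
      rw [hF] at this
      exact ⟨congrArg Prod.fst this, congrArg Prod.snd this⟩
    cases b1 <;> cases b2
    · -- (false, false) : use p, q, ε = -1
      refine ⟨p, q, -1, Or.inr rfl, fun n hn => ?_⟩
      obtain ⟨hd1, hd2⟩ := hmemfib n hn
      have ha : (abseq c0 n).1 < 0 := not_le.mp (of_decide_eq_false hd1)
      have hb : (abseq c0 n).2 < 0 := not_le.mp (of_decide_eq_false hd2)
      rw [hcomp, hcomp]
      constructor
      · exact nng_add (nng_smul (by nlinarith) hpγ) (nng_smul (by nlinarith) hpδ)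
      · exact nps_add (nps_smul (by nlinarith) hqγ) (nps_smul (by nlinarith) hqδ)
    · -- (false, true) : use y, x, ε = 1
      refine ⟨y, x, 1, Or.inl rfl, fun n hn => ?_⟩
      obtain ⟨hd1, hd2⟩ := hmemfib n hn
      have ha : (abseq c0 n).1 ≤ 0 := le_of_lt (not_le.mp (of_decide_eq_false hd1))
      have hb : (0:ℝ) ≤ (abseq c0 n).2 := of_decide_eq_true hd2
      rw [hcomp, hcomp]
      constructor
      · exact nng_add (nng_smul' (by linarith) hyγ) (nng_smul (by linarith) hyδ)
      · exact nps_add (nps_smul' (by linarith) hxγ) (nps_smul (by linarith) hxδ)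
    · -- (true, false) : use x, y, ε = 1
      refine ⟨x, y, 1, Or.inl rfl, fun n hn => ?_⟩
      obtain ⟨hd1, hd2⟩ := hmemfib n hn
      have ha : (0:ℝ) ≤ (abseq c0 n).1 := of_decide_eq_true hd1
      have hb : (abseq c0 n).2 ≤ 0 := le_of_lt (not_le.mp (of_decide_eq_false hd2))
      rw [hcomp, hcomp]
      constructor
      · exact nng_add (nng_smul (by linarith) hxγ) (nng_smul' (by linarith) hxδ)
      · exact nps_add (nps_smul (by linarith) hyγ) (nps_smul' (by linarith) hyδ)
    · -- (true, true) : use p, q, ε = 1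
      refine ⟨p, q, 1, Or.inl rfl, fun n hn => ?_⟩
      obtain ⟨hd1, hd2⟩ := hmemfib n hn
      have ha : (0:ℝ) ≤ (abseq c0 n).1 := of_decide_eq_true hd1
      have hb : (0:ℝ) ≤ (abseq c0 n).2 := of_decide_eq_true hd2
      rw [hcomp, hcomp]
      constructor
      · exact nng_add (nng_smul (by linarith) hpγ) (nng_smul (by linarith) hpδ)
      · exact nps_add (nps_smul (by linarith) hqγ) (nps_smul (by linarith) hqδ)
  have hεne : ε ≠ 0 := by rcases hεpm with h | h <;> rw [h] <;> norm_num
  have hSfin := inv_finite cs (w₂⁻¹ * w₁) (cs.length (w₂⁻¹ * w₁)) rfl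
  apply hfib
  apply Set.Finite.of_finite_image
    (f := fun n => Phi M cs w₁⁻¹ (ε • Phi M cs (g^n) γ))
  · apply Set.Finite.subset hSfin
    rintro _ ⟨n, hn, rfl⟩
    refine ⟨?_, (hsep n hn).1, ?_⟩
    · apply rootvec_phi
      have hζ : IsRootVec cs (Phi M cs (g^n) γ) :=
        ⟨g^n * v, s, by rw [Phi_mul_apply]⟩
      rcases hεpm with h | h
      · rw [h, one_smul]; exact hζ
      · rw [h, neg_smul, one_smul]; exact rootvec_neg cs hζ
    · have hms : Phi M cs (w₂⁻¹ * w₁) (Phi M cs w₁⁻¹ (ε • Phi M cs (g^n) γ))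
          = Phi M cs w₂⁻¹ (ε • Phi M cs (g^n) γ) := by
        rw [← Phi_mul_apply, mul_assoc, mul_inv_cancel, mul_one]
      rw [hms]
      exact (hsep n hn).2
  · intro n hn k hk he
    have he2 : ε • Phi M cs (g^n) γ = ε • Phi M cs (g^k) γ :=
      (Phi M cs w₁⁻¹).injective he
    have he3 : Phi M cs (g^n) γ = Phi M cs (g^k) γ :=
      smul_right_injective (V B) hεne he2
    exact hinj n k he3
end

section
/- Let (W,S) be a 2-spherical Coxeter system with m_{st} ≥ 4 for all s ≠ t ∈ S. Suppose w ∈ W and s ≠ t ∈ S with ℓ(ws) = ℓ(w)+1 = ℓ(wt). Then for every r ∈ S \ {s,t}, at least one of ℓ(wsr), ℓ(wtr) equals ℓ(w)+2. -/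
open Real

namespace Stmt12Aux

noncomputable section

variable {B : Type*}

def cf (M : CoxeterMatrix B) (i j : B) : ℝ := - Real.cos (Real.pi / M.M i j)

abbrev V (B : Type*) := B →₀ ℝ

def al (i : B) : V B := Finsupp.single i 1

def phi (M : CoxeterMatrix B) (i : B) : V B →ₗ[ℝ] ℝ :=
  Finsupp.linearCombination ℝ (fun j => cf M i j)

def sig (M : CoxeterMatrix B) (i : B) : Module.End ℝ (V B) :=
  LinearMap.id - (2:ℝ) • ((phi M i).smulRight (al i))

variable {M : CoxeterMatrix B}

theorem cf_diag (i : B) : cf M i i = 1 := by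
  simp [cf, M.diagonal]

theorem cf_symm (i j : B) : cf M i j = cf M j i := by
  rw [cf, cf, M.symmetric]

theorem phi_al (i j : B) : phi M i (al j) = cf M i j := by
  simp [phi, al, Finsupp.linearCombination_single]

theorem sig_apply (i : B) (v : V B) : sig M i v = v - (2 * phi M i v) • al i := by
  simp [sig, LinearMap.smul_apply, LinearMap.smulRight_apply, smul_smul]

theorem sig_al (i j : B) : sig M i (al j) = al j - (2 * cf M i j) • al i := by
  rw [sig_apply, phi_al]

theorem sig_al_self (i : B) : sig M i (al i) = - al i := by
  rw [sig_al, cf_diag]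
  module

theorem sig_sig (i : B) (v : V B) : sig M i (sig M i v) = v := by
  rw [sig_apply i v, sig_apply]
  rw [map_sub, map_smul, phi_al, cf_diag]
  simp only [smul_eq_mul, mul_one]
  module

def Fs (m : ℕ) (k : ℕ) : ℝ := Real.sin (k * (Real.pi / m)) / Real.sin (Real.pi / m)

theorem sin_pos {m : ℕ} (hm : 2 ≤ m) : 0 < Real.sin (Real.pi / m) := by
  apply Real.sin_pos_of_pos_of_lt_pi
  · positivity
  · rw [div_lt_iff₀ (by positivity)]
    nlinarith [Real.pi_pos,
      mul_le_mul_of_nonneg_left (show (2:ℝ) ≤ m by exact_mod_cast hm) Real.pi_pos.le]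

theorem Fs_zero (m : ℕ) : Fs m 0 = 0 := by simp [Fs]

theorem Fs_one {m : ℕ} (hm : 2 ≤ m) : Fs m 1 = 1 := by
  rw [Fs]; rw [Nat.cast_one, one_mul, div_self (ne_of_gt (sin_pos hm))]

theorem Fs_rec (m : ℕ) (k : ℕ) :
    Fs m (k + 2) = 2 * Real.cos (Real.pi / m) * Fs m (k + 1) - Fs m k := by
  unfold Fs
  have h : ((k:ℝ) + 2) * (Real.pi / m) = ((k:ℝ) + 1) * (Real.pi / m) + (Real.pi / m) := by ring
  have h2 : (k:ℝ) * (Real.pi / m) = ((k:ℝ) + 1) * (Real.pi / m) - (Real.pi / m) := by ring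
  push_cast
  rw [h, h2, Real.sin_add, Real.sin_sub]
  ring

theorem Fs_nonneg {m : ℕ} (hm : 2 ≤ m) {k : ℕ} (hk : k ≤ m) : 0 ≤ Fs m k := by
  apply div_nonneg _ (le_of_lt (sin_pos hm))
  apply Real.sin_nonneg_of_nonneg_of_le_pi
  · positivity
  · rw [← le_div_iff₀ (by positivity : (0:ℝ) < Real.pi / m)] at *
    rw [div_div_eq_mul_div, mul_comm, mul_div_assoc, div_self (by positivity : (Real.pi:ℝ) ≠ 0), mul_one]
    exact_mod_cast hk

theorem Fs_two_m {m : ℕ} (hm : 2 ≤ m) : Fs m (2 * m) = 0 := by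
  have hm0 : (m:ℝ) ≠ 0 := by positivity
  have : ((2 * m : ℕ) : ℝ) * (Real.pi / m) = 2 * Real.pi := by
    push_cast; field_simp
  rw [Fs, this]
  simp [Real.sin_two_pi]

theorem Fs_two_m_add_one {m : ℕ} (hm : 2 ≤ m) : Fs m (2 * m + 1) = 1 := by
  have hm0 : (m:ℝ) ≠ 0 := by positivity
  have : ((2 * m + 1 : ℕ) : ℝ) * (Real.pi / m) = Real.pi / m + 2 * Real.pi := by
    push_cast; field_simp; ring
  rw [Fs, this, Real.sin_add_two_pi, div_self (ne_of_gt (sin_pos hm))]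

theorem Fs_m {m : ℕ} (hm : 2 ≤ m) : Fs m m = 0 := by
  have hm0 : (m:ℝ) ≠ 0 := by positivity
  have : ((m : ℕ) : ℝ) * (Real.pi / m) = Real.pi := by field_simp
  rw [Fs, this, Real.sin_pi, zero_div]

section braid

variable (i j : B)

/-- abbreviation: `lam = 2 cos (π/m) = -2 * cf M i j` -/
theorem neg_two_cf (i j : B) : -(2 * cf M i j) = 2 * Real.cos (Real.pi / M.M i j) := by
  rw [cf]; ring

theorem sig_al_lam (i j : B) :
    sig M i (al j) = al j + (2 * Real.cos (Real.pi / M.M i j)) • al i := by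
  rw [sig_al, sub_eq_add_neg, ← neg_smul, neg_two_cf]

theorem pow_al_formula (i j : B) (hm2 : 2 ≤ M.M i j) (k : ℕ) :
    ((sig M i * sig M j) ^ k) (al i)
        = Fs (M.M i j) (2*k+1) • al i + Fs (M.M i j) (2*k) • al j
    ∧ ((sig M i * sig M j) ^ k) (al j)
        = (-(Fs (M.M i j) (2*k))) • al i
          + (Fs (M.M i j) (2*k+1) - 2 * Real.cos (Real.pi / M.M i j) * Fs (M.M i j) (2*k)) • al j := by
  set m := M.M i j with hm
  set lam := 2 * Real.cos (Real.pi / m) with hlam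
  induction k with
  | zero =>
      constructor
      · simp only [pow_zero, Module.End.one_apply, Fs_zero, Fs_one hm2, Nat.mul_zero,
          Nat.zero_add]
        module
      · simp only [pow_zero, Module.End.one_apply, Fs_zero, Fs_one hm2, Nat.mul_zero,
          Nat.zero_add]
        module
  | succ k ih =>
      obtain ⟨ih1, ih2⟩ := ih
      have hQi : (sig M i * sig M j) (al i) = (lam^2 - 1) • al i + lam • al j := by
        rw [Module.End.mul_apply]
        have h1 : sig M j (al i) = al i + lam • al j := by
          rw [sig_al_lam j i, ← M.symmetric i j]
        rw [h1, map_add, map_smul, sig_al_self, sig_al_lam i j]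
        module
      have hQj : (sig M i * sig M j) (al j) = (-lam) • al i + (-1 : ℝ) • al j := by
        rw [Module.End.mul_apply, sig_al_self, map_neg, sig_al_lam i j]
        module
      have r1 : Fs m (2*k+2) = lam * Fs m (2*k+1) - Fs m (2*k) := Fs_rec m (2*k)
      have r2 : Fs m (2*k+3) = lam * Fs m (2*k+2) - Fs m (2*k+1) := Fs_rec m (2*k+1)
      constructor
      · rw [pow_succ, Module.End.mul_apply, hQi, map_add, map_smul, map_smul, ih1, ih2,
          show 2*(k+1)+1 = 2*k+3 by ring, show 2*(k+1) = 2*k+2 by ring, r2, r1]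
        module
      · rw [pow_succ, Module.End.mul_apply, hQj, map_add, map_smul, map_smul, ih1, ih2,
          show 2*(k+1)+1 = 2*k+3 by ring, show 2*(k+1) = 2*k+2 by ring, r2, r1]
        module

end braid

section braid2

variable {M : CoxeterMatrix B}

theorem cos_sq_lt_one {m : ℕ} (hm : 2 ≤ m) : (Real.cos (Real.pi / m))^2 < 1 := by
  have h := sin_pos hm
  nlinarith [Real.sin_sq_add_cos_sq (Real.pi / m)]

theorem pow_fix {A : Module.End ℝ (V B)} {v : V B} (h : A v = v) (n : ℕ) : (A ^ n) v = v := by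
  induction n with
  | zero => simp
  | succ n ih => rw [pow_succ, Module.End.mul_apply, h, ih]

theorem sig_fix {i : B} {v : V B} (h : phi M i v = 0) : sig M i v = v := by
  rw [sig_apply, h]
  simp

theorem sig_braid (i j : B) (hij : i ≠ j) (hm2 : 2 ≤ M.M i j) :
    (sig M i * sig M j) ^ (M.M i j) = 1 := by
  set m := M.M i j with hmdef
  apply LinearMap.ext
  intro v
  set c := cf M i j with hc
  have hD : (0:ℝ) < 1 - c^2 := by
    have : c^2 = (Real.cos (Real.pi / m))^2 := by rw [hc, cf]; ring
    rw [this]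
    linarith [cos_sq_lt_one hm2]
  set D := 1 - c^2 with hDdef
  set x := (phi M i v - c * phi M j v)/D with hx
  set y := (phi M j v - c * phi M i v)/D with hy
  set v0 := v - x • al i - y • al j with hv0
  have hphii : phi M i v0 = 0 := by
    rw [hv0, map_sub, map_sub, map_smul, map_smul, phi_al, phi_al, cf_diag]
    rw [hx, hy, ← hc]
    have hD' : 1 - c^2 ≠ 0 := hD.ne'
    rw [hDdef]
    linear_combination (-(phi M i v)) * mul_inv_cancel₀ hD'
  have hphij : phi M j v0 = 0 := by
    rw [hv0, map_sub, map_sub, map_smul, map_smul, phi_al, phi_al, cf_diag, ← cf_symm i j, ← hc]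
    rw [hx, hy]
    have hD' : 1 - c^2 ≠ 0 := hD.ne'
    rw [hDdef]
    linear_combination (-(phi M j v)) * mul_inv_cancel₀ hD'
  have hfix : ((sig M i * sig M j) ^ m) v0 = v0 := by
    apply pow_fix
    rw [Module.End.mul_apply, sig_fix hphij, sig_fix hphii]
  have hv : v = v0 + x • al i + y • al j := by rw [hv0]; module
  have h1 := (pow_al_formula i j hm2 m).1
  have h2 := (pow_al_formula i j hm2 m).2
  rw [Fs_two_m hm2, Fs_two_m_add_one hm2] at h1 h2
  rw [Module.End.one_apply, hv, map_add, map_add, map_smul, map_smul, hfix, h1, h2]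
  module

theorem isLiftable (hM : ∀ s t : B, s ≠ t → 4 ≤ M.M s t ∧ M.M s t ≠ 0) :
    M.IsLiftable (fun i => sig M i) := by
  intro i j
  by_cases hij : i = j
  · subst hij
    rw [M.diagonal, pow_one]
    apply LinearMap.ext
    intro v
    rw [Module.End.mul_apply, sig_sig, Module.End.one_apply]
  · exact sig_braid i j hij (le_trans (by norm_num) (hM i j hij).1)

end braid2

/-! ### order facts on `V B` -/

theorem vnonneg_iff {v : V B} : 0 ≤ v ↔ ∀ x, 0 ≤ v x := by
  rw [Finsupp.le_def]; simp

theorem vnonpos_iff {v : V B} : v ≤ 0 ↔ ∀ x, v x ≤ 0 := by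
  rw [Finsupp.le_def]; simp

theorem al_nonneg (i : B) : (0 : V B) ≤ al i := by
  classical
  rw [vnonneg_iff]
  intro x
  rw [al, Finsupp.single_apply]
  split <;> norm_num

theorem vsmul_nonneg {r : ℝ} {v : V B} (hr : 0 ≤ r) (hv : 0 ≤ v) : 0 ≤ r • v := by
  rw [vnonneg_iff] at *
  intro x
  rw [Finsupp.smul_apply]
  exact mul_nonneg hr (hv x)

theorem vsmul_nonpos {r : ℝ} {v : V B} (hr : 0 ≤ r) (hv : v ≤ 0) : r • v ≤ 0 := by
  rw [vnonpos_iff] at *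
  intro x
  rw [Finsupp.smul_apply]
  exact mul_nonpos_of_nonneg_of_nonpos hr (hv x)

/-! ### the bilinear form -/

def bil (M : CoxeterMatrix B) : V B →ₗ[ℝ] V B →ₗ[ℝ] ℝ :=
  Finsupp.linearCombination ℝ (fun i => phi M i)

theorem bil_al_left (i : B) (v : V B) : bil M (al i) v = phi M i v := by
  rw [bil, al, Finsupp.linearCombination_single, one_smul]

theorem bil_right_al (u : V B) (k : B) : bil M u (al k) = phi M k u := by
  induction u using Finsupp.induction_linear with
  | zero => simp
  | add f g hf hg => rw [map_add, LinearMap.add_apply, hf, hg, map_add]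
  | single a b =>
      rw [bil, Finsupp.linearCombination_single, LinearMap.smul_apply, phi_al,
        show (Finsupp.single a b : V B) = b • al a by rw [al, Finsupp.smul_single, smul_eq_mul, mul_one],
        map_smul]
      rw [phi_al, cf_symm, smul_eq_mul]

theorem bil_sig (k : B) (x y : V B) : bil M (sig M k x) (sig M k y) = bil M x y := by
  rw [sig_apply k x, sig_apply k y]
  simp only [map_sub, map_smul, LinearMap.sub_apply, LinearMap.smul_apply, smul_eq_mul,
    bil_al_left, bil_right_al, phi_al, cf_diag]
  ring

/-! ### the geometric representation -/

variable {W : Type*} [Group W] (cs : CoxeterSystem M W)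
  (hM : ∀ s t : B, s ≠ t → 4 ≤ M.M s t ∧ M.M s t ≠ 0)

def rho : W →* Module.End ℝ (V B) := cs.lift ⟨fun i => sig M i, isLiftable hM⟩

theorem rho_simple (i : B) : rho cs hM (cs.simple i) = sig M i :=
  cs.lift_apply_simple _ i

theorem bil_rho (w : W) (x y : V B) :
    bil M (rho cs hM w x) (rho cs hM w y) = bil M x y := by
  induction w using cs.simple_induction_left with
  | one => simp
  | mul_simple_left w i ih =>
      rw [map_mul, Module.End.mul_apply, Module.End.mul_apply, rho_simple, bil_sig]
      exact ih

theorem rho_inv_cancel (u : W) (x : V B) : rho cs hM u⁻¹ (rho cs hM u x) = x := by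
  rw [← Module.End.mul_apply, ← map_mul, inv_mul_cancel, map_one, Module.End.one_apply]

theorem rho_ne_zero {u : W} {x : V B} (hx : x ≠ 0) : rho cs hM u x ≠ 0 := by
  intro h
  apply hx
  have := congrArg (rho cs hM u⁻¹) h
  rwa [rho_inv_cancel, map_zero] at this

/-! ### Tits' positivity theorem -/

theorem tits_aux : ∀ (n : ℕ) (w : W) (i : B), cs.length w = n →
    cs.length (w * cs.simple i) = cs.length w + 1 → 0 ≤ rho cs hM w (al i) := by
  intro n
  induction n using Nat.strong_induction_on with
  | _ n IHn =>
  intro w i hlen hasc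
  by_cases hw : w = 1
  · subst hw
    rw [map_one, Module.End.one_apply]
    exact al_nonneg i
  obtain ⟨j, hj⟩ := cs.exists_rightDescent_of_ne_one hw
  rw [CoxeterSystem.IsRightDescent] at hj
  have hij : j ≠ i := by
    intro h
    subst h
    omega
  have hm4 : 4 ≤ M.M i j := (hM i j (Ne.symm hij)).1
  have hm2 : 2 ≤ M.M i j := by omega
  set m := M.M i j with hmdef
  -- the chain
  set y : ℕ → W := fun p => w * (cs.wordProd (CoxeterSystem.alternatingWord i j p))⁻¹ with hy
  have hyw : ∀ p, y p * cs.wordProd (CoxeterSystem.alternatingWord i j p) = w := by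
    intro p
    rw [hy]
    group
  have ystep : ∀ p, y (p + 1) = y p * cs.simple (if Even p then j else i) := by
    intro p
    rw [hy]
    simp only
    rw [CoxeterSystem.alternatingWord_succ', cs.wordProd_cons, mul_inv_rev, cs.inv_simple,
      ← mul_assoc]
  set D : ℕ → Prop := fun p => ∀ q ≤ p, cs.length (y q) + q = cs.length w with hD
  letI : DecidablePred D := Classical.decPred D
  have hD0 : D 0 := by
    intro q hq
    interval_cases q
    have : y 0 = w := by
      rw [hy]
      simp [CoxeterSystem.alternatingWord]
    rw [this]
    omega
  have hy1 : y 1 = w * cs.simple j := by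
    rw [show (1:ℕ) = 0 + 1 from rfl, ystep 0, if_pos (Even.zero)]
    have : y 0 = w := by rw [hy]; simp [CoxeterSystem.alternatingWord]
    rw [this]
  have hD1 : D 1 := by
    intro q hq
    interval_cases q
    · exact hD0 0 le_rfl
    · rw [hy1]
      rcases cs.length_mul_simple w j with h | h
      · omega
      · omega
  set N := Nat.findGreatest D m with hN
  have hN1 : 1 ≤ N := Nat.le_findGreatest (by omega) hD1
  have hNm : N ≤ m := Nat.findGreatest_le m
  have hDN : D N := Nat.findGreatest_spec (m := 0) (by omega) hD0
  rcases eq_or_lt_of_le hNm with hNem | hNlt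
  · -- N = m : contradiction via the braid relation
    exfalso
    have lenm : cs.length (y m) + m = cs.length w := by
      have := hDN m (le_of_eq hNem.symm)
      exact this
    have hbraid : cs.wordProd (CoxeterSystem.alternatingWord i j m)
        = cs.wordProd (CoxeterSystem.alternatingWord i j (m-1)) * cs.simple i := by
      have h1 := cs.wordProd_braidWord_eq i j
      rw [CoxeterSystem.braidWord, CoxeterSystem.braidWord, ← hmdef, ← M.symmetric i j, ← hmdef] at h1
      have h2 : CoxeterSystem.alternatingWord j i m
          = (CoxeterSystem.alternatingWord i j (m-1)).concat i := by
        rw [show m = (m-1)+1 by omega, CoxeterSystem.alternatingWord_succ]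
        simp [Nat.add_sub_cancel]
      rw [h1, h2, cs.wordProd_concat]
    have hws : w * cs.simple i = y m * cs.wordProd (CoxeterSystem.alternatingWord i j (m-1)) := by
      have h3 : cs.wordProd (CoxeterSystem.alternatingWord i j (m-1))
          = cs.wordProd (CoxeterSystem.alternatingWord i j m) * cs.simple i := by
        rw [hbraid, mul_assoc, cs.simple_mul_simple_self, mul_one]
      rw [h3, ← mul_assoc, hyw m]
    have hlb : cs.length (w * cs.simple i) ≤ cs.length (y m) + (m - 1) := by
      rw [hws]
      calc cs.length (y m * cs.wordProd (CoxeterSystem.alternatingWord i j (m-1)))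
          ≤ cs.length (y m) + cs.length (cs.wordProd (CoxeterSystem.alternatingWord i j (m-1))) :=
            cs.length_mul_le _ _
        _ ≤ cs.length (y m) + (m - 1) := by
            have := cs.length_wordProd_le (CoxeterSystem.alternatingWord i j (m-1))
            rw [CoxeterSystem.length_alternatingWord] at this
            omega
    omega
  · -- N < m : the main case
    set z := y N with hz
    have hzlen : cs.length z + N = cs.length w := hDN N le_rfl
    -- ascent at the next letter
    have hnext : cs.length (z * cs.simple (if Even N then j else i)) = cs.length z + 1 := by
      have hnotD : ¬ D (N + 1) := by
        apply Nat.findGreatest_is_greatest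
        · rw [← hN]
          omega
        · omega
      have hfail : ¬ (cs.length (y (N+1)) + (N+1) = cs.length w) := by
        intro h
        apply hnotD
        intro q hq
        rcases Nat.lt_or_ge q (N+1) with h1 | h1
        · exact hDN q (by omega)
        · have : q = N + 1 := by omega
          rw [this]
          exact h
      rw [ystep N] at hfail
      rcases cs.length_mul_simple z (if Even N then j else i) with h | h
      · exact h
      · exfalso
        apply hfail
        rw [← hz] at *
        omega
    -- ascent at the previous letter
    have hprev : cs.length (z * cs.simple (if Even (N-1) then j else i)) = cs.length z + 1 := by
      have hstep := ystep (N-1)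
      rw [show N - 1 + 1 = N by omega] at hstep
      have hy2 : z * cs.simple (if Even (N-1) then j else i) = y (N-1) := by
        rw [hz, hstep, mul_assoc, cs.simple_mul_simple_self, mul_one]
      rw [hy2]
      have h1 := hDN (N-1) (by omega)
      omega
    have hasczi : cs.length (z * cs.simple i) = cs.length z + 1 ∧
        cs.length (z * cs.simple j) = cs.length z + 1 := by
      rcases Nat.mod_two_eq_zero_or_one N with h2 | h2
      · have he : Even N := Nat.even_iff.mpr h2
        have ho : ¬ Even (N - 1) := by
          rw [Nat.even_iff]
          rw [Nat.even_iff] at he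
          omega
        rw [if_pos he] at hnext
        rw [if_neg ho] at hprev
        exact ⟨hprev, hnext⟩
      · have he : ¬ Even N := by rw [Nat.even_iff]; omega
        have ho : Even (N - 1) := by rw [Nat.even_iff]; omega
        rw [if_neg he] at hnext
        rw [if_pos ho] at hprev
        exact ⟨hnext, hprev⟩
    obtain ⟨hzi, hzj⟩ := hasczi
    have hzn : cs.length z < n := by omega
    have posi : 0 ≤ rho cs hM z (al i) := IHn (cs.length z) hzn z i rfl hzi
    have posj : 0 ≤ rho cs hM z (al j) := IHn (cs.length z) hzn z j rfl hzj
    have traj : ∀ p, rho cs hM (cs.wordProd (CoxeterSystem.alternatingWord i j p)) (al i)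
        = (if Even p then Fs m (p+1) else Fs m p) • al i
          + (if Even p then Fs m p else Fs m (p+1)) • al j := by
      intro p
      induction p with
      | zero =>
          have h0 : CoxeterSystem.alternatingWord i j 0 = ([] : List B) := rfl
          rw [h0, cs.wordProd_nil, map_one, Module.End.one_apply, if_pos Even.zero,
            if_pos Even.zero, Fs_one hm2, Fs_zero]
          module
      | succ p ih =>
          rw [CoxeterSystem.alternatingWord_succ', cs.wordProd_cons, map_mul,
            Module.End.mul_apply, ih]
          by_cases hp : Even p
          · rw [if_pos hp, if_pos hp, if_pos hp, rho_simple, map_add, map_smul, map_smul,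
              sig_al_lam j i, ← M.symmetric i j, sig_al_self,
              if_neg (by simp [Nat.even_add_one, hp]),
              if_neg (by simp [Nat.even_add_one, hp]),
              show p + 1 + 1 = p + 2 by omega, Fs_rec]
            rw [← hmdef]
            module
          · rw [if_neg hp, if_neg hp, if_neg hp, rho_simple, map_add, map_smul, map_smul,
              sig_al_lam i j, sig_al_self,
              if_pos (by simpa [Nat.even_add_one] using hp),
              if_pos (by simpa [Nat.even_add_one] using hp),
              show p + 1 + 1 = p + 2 by omega, Fs_rec]
            rw [← hmdef]
            module
    have hwz : w = z * cs.wordProd (CoxeterSystem.alternatingWord i j N) := (hyw N).symm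
    have hsplit : rho cs hM w (al i)
        = rho cs hM z (rho cs hM (cs.wordProd (CoxeterSystem.alternatingWord i j N)) (al i)) := by
      rw [hwz, map_mul, Module.End.mul_apply]
    rw [hsplit, traj N, map_add, map_smul, map_smul]
    apply add_nonneg
    · apply vsmul_nonneg _ posi
      split
      · exact Fs_nonneg hm2 (by omega)
      · exact Fs_nonneg hm2 (by omega)
    · apply vsmul_nonneg _ posj
      split
      · exact Fs_nonneg hm2 (by omega)
      · exact Fs_nonneg hm2 (by omega)


theorem tits_pos {w : W} {i : B} (h : cs.length (w * cs.simple i) = cs.length w + 1) :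
    0 ≤ rho cs hM w (al i) :=
  tits_aux cs hM _ w i rfl h

theorem tits_neg {w : W} {i : B} (h : cs.length (w * cs.simple i) + 1 = cs.length w) :
    rho cs hM w (al i) ≤ 0 := by
  have h2 : cs.length ((w * cs.simple i) * cs.simple i) = cs.length (w * cs.simple i) + 1 := by
    rw [cs.simple_mul_simple_cancel_right]
    omega
  have hp := tits_pos cs hM h2
  have hw : rho cs hM w (al i) = - rho cs hM (w * cs.simple i) (al i) := by
    nth_rw 1 [← cs.simple_mul_simple_cancel_right (w := w) i]
    rw [map_mul, Module.End.mul_apply, rho_simple, sig_al_self, map_neg]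
  rw [hw]
  rw [vnonneg_iff] at hp
  rw [vnonpos_iff]
  intro x
  rw [Finsupp.neg_apply]
  linarith [hp x]

/-- roots of the geometric representation -/
def IsRoot (ζ : V B) : Prop := ∃ (u : W) (k : B), ζ = rho cs hM u (al k)

theorem root_norm {ζ : V B} (h : IsRoot cs hM ζ) : bil M ζ ζ = 1 := by
  obtain ⟨u, k, rfl⟩ := h
  rw [bil_rho, bil_al_left, phi_al, cf_diag]

theorem root_ne_zero {ζ : V B} (h : IsRoot cs hM ζ) : ζ ≠ 0 := by
  intro h0
  have := root_norm cs hM h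
  rw [h0] at this
  simp at this

theorem root_dichotomy {ζ : V B} (h : IsRoot cs hM ζ) : 0 ≤ ζ ∨ ζ ≤ 0 := by
  obtain ⟨u, k, rfl⟩ := h
  rcases cs.length_mul_simple u k with h1 | h1
  · exact Or.inl (tits_pos cs hM h1)
  · exact Or.inr (tits_neg cs hM h1)

theorem eq_al_of_flip (a : B) {v : V B} (hnorm : bil M v v = 1) (hv : 0 ≤ v)
    (hneg : sig M a v ≤ 0) : v = al a := by
  classical
  have hco : ∀ x, x ≠ a → v x = 0 := by
    intro x hx
    have h1 := (vnonpos_iff.mp hneg) x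
    rw [sig_apply, Finsupp.sub_apply, Finsupp.smul_apply] at h1
    rw [al, Finsupp.single_apply, if_neg (fun h => hx h.symm)] at h1
    simp only [smul_eq_mul, mul_zero, sub_zero] at h1
    exact le_antisymm h1 ((vnonneg_iff.mp hv) x)
  have hsingle : v = (v a) • al a := by
    ext x
    rw [Finsupp.smul_apply, al, Finsupp.single_apply]
    by_cases hx : x = a
    · subst hx
      simp
    · rw [if_neg (fun h => hx h.symm), hco x hx]
      simp
  have hnorm2 : (v a) * (v a) = 1 := by
    rw [hsingle] at hnorm
    simp only [map_smul, LinearMap.smul_apply, smul_eq_mul, bil_al_left, phi_al, cf_diag]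
      at hnorm
    linear_combination hnorm
  have hva : 0 ≤ v a := (vnonneg_iff.mp hv) a
  have : v a = 1 := by nlinarith
  rw [hsingle, this, one_smul]

/-- candidate list for positive roots inverted by the product of a word -/
def cands : List B → List (V B)
  | [] => []
  | a :: l => rho cs hM (cs.wordProd l)⁻¹ (al a) :: cands l

theorem mem_cands (l : List B) (ζ : V B) (hr : IsRoot cs hM ζ) (hpos : 0 ≤ ζ)
    (hneg : rho cs hM (cs.wordProd l) ζ ≤ 0) : ζ ∈ cands cs hM l := by
  induction l with
  | nil =>
      exfalso
      rw [cs.wordProd_nil, map_one, Module.End.one_apply] at hneg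
      exact root_ne_zero cs hM hr (le_antisymm hneg hpos)
  | cons a l ih =>
      rw [cs.wordProd_cons, map_mul, Module.End.mul_apply] at hneg
      by_cases h : rho cs hM (cs.wordProd l) ζ ≤ 0
      · exact List.mem_cons_of_mem _ (ih h)
      · set ζ' := rho cs hM (cs.wordProd l) ζ with hzd
        have hr' : IsRoot cs hM ζ' := by
          obtain ⟨u, k, rfl⟩ := hr
          exact ⟨cs.wordProd l * u, k, by rw [map_mul, Module.End.mul_apply]⟩
        have hp' : 0 ≤ ζ' := by
          rcases root_dichotomy cs hM hr' with h1 | h1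
          · exact h1
          · exact absurd h1 h
        rw [rho_simple] at hneg
        have := eq_al_of_flip (a := a) (root_norm cs hM hr') hp' hneg
        have hzeq : ζ = rho cs hM (cs.wordProd l)⁻¹ (al a) := by
          rw [← this, hzd, rho_inv_cancel]
        rw [hzeq]
        exact List.mem_cons_self


theorem bil_comm (u v : V B) : bil M u v = bil M v u := by
  induction u using Finsupp.induction_linear with
  | zero => simp
  | add f g hf hg => rw [map_add, LinearMap.add_apply, hf, hg, map_add]
  | single a b =>
      have h1 : (Finsupp.single a b : V B) = b • al a := by
        rw [al, Finsupp.smul_single, smul_eq_mul, mul_one]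
      rw [h1, map_smul, LinearMap.smul_apply, bil_al_left, map_smul, bil_right_al]

theorem phi_sig (k a : B) (x : V B) : phi M a (sig M k x) = bil M (sig M k (al a)) x := by
  rw [sig_apply k x, map_sub, map_smul, phi_al, sig_al, map_sub, LinearMap.sub_apply,
    map_smul, LinearMap.smul_apply, bil_al_left, bil_al_left]
  simp only [smul_eq_mul]
  rw [cf_symm a k]
  ring

theorem rho_reflection (k a : B) (x : V B) :
    rho cs hM (cs.simple k * cs.simple a * cs.simple k) x
      = x - (2 * bil M (sig M k (al a)) x) • (sig M k (al a)) := by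
  rw [map_mul, map_mul, Module.End.mul_apply, Module.End.mul_apply, rho_simple, rho_simple,
    sig_apply a (sig M k x), map_sub, map_smul, sig_sig, phi_sig]

/-! ### the growing sequence of coefficients -/

def seqAB (q : ℝ) : ℕ → ℝ × ℝ
  | 0 => (0, 1)
  | n+1 => if Even n then (2*q*(seqAB q n).2 - (seqAB q n).1, (seqAB q n).2)
           else ((seqAB q n).1, 2*q*(seqAB q n).1 - (seqAB q n).2)

theorem seqAB_inv {q : ℝ} (hq : 2 ≤ q) : ∀ n, 0 ≤ (seqAB q n).1 ∧ 0 ≤ (seqAB q n).2 ∧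
    (Even n → (seqAB q n).1 < (seqAB q n).2) ∧ (¬ Even n → (seqAB q n).2 < (seqAB q n).1) := by
  intro n
  induction n with
  | zero => norm_num [seqAB]
  | succ n ih =>
      obtain ⟨h1, h2, h3, h4⟩ := ih
      by_cases hp : Even n
      · have hab := h3 hp
        simp only [seqAB, if_pos hp]
        refine ⟨by nlinarith, h2, ?_, ?_⟩
        · intro h
          exfalso
          rw [Nat.even_add_one] at h
          exact h hp
        · intro _
          nlinarith
      · have hab := h4 hp
        simp only [seqAB, if_neg hp]
        refine ⟨h1, by nlinarith, ?_, ?_⟩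
        · intro _
          nlinarith
        · intro h
          exfalso
          rw [Nat.even_add_one] at h
          exact h hp

theorem seqAB_mono {q : ℝ} (hq : 2 ≤ q) :
    StrictMono (fun n => (seqAB q n).1 + (seqAB q n).2) := by
  apply strictMono_nat_of_lt_succ
  intro n
  obtain ⟨h1, h2, h3, h4⟩ := seqAB_inv hq n
  by_cases hp : Even n
  · have hab := h3 hp
    simp only [seqAB, if_pos hp]
    nlinarith
  · have hab := h4 hp
    simp only [seqAB, if_neg hp]
    nlinarith

/-- the group elements whose roots give infinitely many inversions -/
def useq (cs : CoxeterSystem M W) (sB tB rB : B) : ℕ → W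
  | 0 => cs.simple tB
  | n+1 => (if Even n then cs.simple sB * cs.simple rB * cs.simple sB
            else cs.simple tB * cs.simple rB * cs.simple tB) * useq cs sB tB rB n

theorem cos_bound {a b : B} (h4 : 4 ≤ M.M a b) :
    Real.sqrt 2 / 2 ≤ Real.cos (Real.pi / M.M a b) := by
  have h4' : (4:ℝ) ≤ (M.M a b : ℝ) := by exact_mod_cast h4
  have hle : Real.pi / M.M a b ≤ Real.pi / 4 := by
    rw [div_le_div_iff₀ (by linarith) (by norm_num)]
    nlinarith [Real.pi_pos]
  have := Real.cos_le_cos_of_nonneg_of_le_pi (by positivity) (by linarith [Real.pi_gt_three]) hle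
  rwa [Real.cos_pi_div_four] at this

set_option maxHeartbeats 1600000 in
include hM in
theorem main_false (w : W) (sB tB rB : B) (hst : sB ≠ tB) (hrs : rB ≠ sB) (hrt : rB ≠ tB)
    (hs : cs.length (w * cs.simple sB) = cs.length w + 1)
    (ht : cs.length (w * cs.simple tB) = cs.length w + 1)
    (hsr : cs.length (w * cs.simple sB * cs.simple rB) + 1 = cs.length (w * cs.simple sB))
    (htr : cs.length (w * cs.simple tB * cs.simple rB) + 1 = cs.length (w * cs.simple tB)) :
    False := by
  classical
  set A := 2 * Real.cos (Real.pi / M.M sB rB) with hA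
  set Bc := 2 * Real.cos (Real.pi / M.M tB rB) with hB
  set β := sig M sB (al rB) with hβ
  set γ := sig M tB (al rB) with hγ
  have hβform : β = al rB + A • al sB := by
    rw [hβ, sig_al_lam sB rB, hA]
  have hγform : γ = al rB + Bc • al tB := by
    rw [hγ, sig_al_lam tB rB, hB]
  have hA2 : Real.sqrt 2 ≤ A := by
    rw [hA]
    have := cos_bound (M := M) (hM sB rB (Ne.symm hrs)).1
    linarith
  have hB2 : Real.sqrt 2 ≤ Bc := by
    rw [hB]
    have := cos_bound (M := M) (hM tB rB (Ne.symm hrt)).1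
    linarith
  have hstb : cf M sB tB ≤ -(Real.sqrt 2 / 2) := by
    rw [cf]
    have := cos_bound (M := M) (hM sB tB hst).1
    linarith
  have hsqrt2 : Real.sqrt 2 * Real.sqrt 2 = 2 := Real.mul_self_sqrt (by norm_num)
  have hsqrt1 : (1:ℝ) ≤ Real.sqrt 2 := by
    rw [show (1:ℝ) = Real.sqrt 1 by rw [Real.sqrt_one]]
    exact Real.sqrt_le_sqrt (by norm_num)
  have hA0 : (0:ℝ) < A := by linarith
  have hB0 : (0:ℝ) < Bc := by linarith
  have hcfsr : cf M sB rB = -(A/2) := by rw [cf, hA]; ring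
  have hcfrt : cf M rB tB = -(Bc/2) := by rw [cf, M.symmetric rB tB, hB]; ring
  have hbilval : bil M β γ = 1 + Bc * cf M rB tB + A * cf M sB rB + A * Bc * cf M sB tB := by
    rw [hβform, hγform]
    simp only [map_add, map_smul, LinearMap.add_apply, LinearMap.smul_apply, bil_al_left,
      phi_al, cf_diag, smul_eq_mul]
    ring
  have hq2 : 2 ≤ -(bil M β γ) := by
    rw [hbilval, hcfsr, hcfrt]
    have hAB : (2:ℝ) ≤ A * Bc := by
      have h := mul_le_mul hA2 hB2 (Real.sqrt_nonneg 2) (le_trans (Real.sqrt_nonneg 2) hA2)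
      linarith
    have hA4 : (2:ℝ) ≤ A * A := by
      have h := mul_le_mul hA2 hA2 (Real.sqrt_nonneg 2) (le_trans (Real.sqrt_nonneg 2) hA2)
      linarith
    have hB4 : (2:ℝ) ≤ Bc * Bc := by
      have h := mul_le_mul hB2 hB2 (Real.sqrt_nonneg 2) (le_trans (Real.sqrt_nonneg 2) hB2)
      linarith
    have hcf0 : Real.sqrt 2 / 2 ≤ -(cf M sB tB) := by linarith
    have h2' : A * Bc * (Real.sqrt 2 / 2) ≤ A * Bc * (-(cf M sB tB)) :=
      mul_le_mul_of_nonneg_left hcf0 (by linarith : (0:ℝ) ≤ A * Bc)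
    have h3' : Real.sqrt 2 ≤ A * Bc * (Real.sqrt 2 / 2) := by
      nlinarith [mul_nonneg (by linarith : (0:ℝ) ≤ A * Bc - 2)
        (by positivity : (0:ℝ) ≤ Real.sqrt 2 / 2)]
    linarith [hA4, hB4, h2', h3', hsqrt1]
  set q := -(bil M β γ) with hqdef
  have hbg : bil M β γ = -q := by rw [hqdef]; ring
  have hgb : bil M γ β = -q := by rw [bil_comm, hbg]
  have hrootβ : IsRoot cs hM β := ⟨cs.simple sB, rB, by rw [rho_simple, hβ]⟩
  have hrootγ : IsRoot cs hM γ := ⟨cs.simple tB, rB, by rw [rho_simple, hγ]⟩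
  have hββ : bil M β β = 1 := root_norm cs hM hrootβ
  have hγγ : bil M γ γ = 1 := root_norm cs hM hrootγ
  have hwβ : rho cs hM w β ≤ 0 := by
    have h1 := tits_neg cs hM hsr
    rwa [map_mul, Module.End.mul_apply, rho_simple, ← hβ] at h1
  have hwγ : rho cs hM w γ ≤ 0 := by
    have h1 := tits_neg cs hM htr
    rwa [map_mul, Module.End.mul_apply, rho_simple, ← hγ] at h1
  have hβpos : 0 ≤ β := by
    rw [hβform]
    exact add_nonneg (al_nonneg rB) (vsmul_nonneg hA0.le (al_nonneg sB))
  have hγpos : 0 ≤ γ := by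
    rw [hγform]
    exact add_nonneg (al_nonneg rB) (vsmul_nonneg hB0.le (al_nonneg tB))
  set zv : ℕ → V B := fun n => (seqAB q n).1 • β + (seqAB q n).2 • γ with hzv
  have hzroot : ∀ n, zv n = rho cs hM (useq cs sB tB rB n) (al rB) := by
    intro n
    induction n with
    | zero =>
        show (seqAB q 0).1 • β + (seqAB q 0).2 • γ = rho cs hM (cs.simple tB) (al rB)
        rw [rho_simple, ← hγ]
        simp only [seqAB]
        module
    | succ n ih =>
        show (seqAB q (n+1)).1 • β + (seqAB q (n+1)).2 • γ
            = rho cs hM ((if Even n then cs.simple sB * cs.simple rB * cs.simple sB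
              else cs.simple tB * cs.simple rB * cs.simple tB) * useq cs sB tB rB n) (al rB)
        rw [map_mul, Module.End.mul_apply, ← ih]
        by_cases hp : Even n
        · rw [if_pos hp, rho_reflection, ← hβ]
          have hb : bil M β (zv n) = (seqAB q n).1 - q * (seqAB q n).2 := by
            rw [hzv]
            simp only [map_add, map_smul, smul_eq_mul]
            rw [hββ, hbg]
            ring
          rw [hb]
          show (seqAB q (n+1)).1 • β + (seqAB q (n+1)).2 • γ
              = zv n - (2 * ((seqAB q n).1 - q * (seqAB q n).2)) • β
          rw [hzv]
          simp only [seqAB, if_pos hp]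
          module
        · rw [if_neg hp, rho_reflection, ← hγ]
          have hb : bil M γ (zv n) = (seqAB q n).2 - q * (seqAB q n).1 := by
            rw [hzv]
            simp only [map_add, map_smul, smul_eq_mul]
            rw [hγγ, hgb]
            ring
          rw [hb]
          show (seqAB q (n+1)).1 • β + (seqAB q (n+1)).2 • γ
              = zv n - (2 * ((seqAB q n).2 - q * (seqAB q n).1)) • γ
          rw [hzv]
          simp only [seqAB, if_neg hp]
          module
  have hzpos : ∀ n, 0 ≤ zv n := by
    intro n
    obtain ⟨h1, h2, _, _⟩ := seqAB_inv hq2 n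
    exact add_nonneg (vsmul_nonneg h1 hβpos) (vsmul_nonneg h2 hγpos)
  have hzneg : ∀ n, rho cs hM w (zv n) ≤ 0 := by
    intro n
    obtain ⟨h1, h2, _, _⟩ := seqAB_inv hq2 n
    rw [hzv]
    simp only [map_add, map_smul]
    exact add_nonpos (vsmul_nonpos h1 hwβ) (vsmul_nonpos h2 hwγ)
  obtain ⟨l, hl⟩ := cs.wordProd_surjective w
  have hmem : ∀ n, zv n ∈ cands cs hM l := by
    intro n
    apply mem_cands cs hM l (zv n) ⟨useq cs sB tB rB n, rB, hzroot n⟩ (hzpos n)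
    rw [hl]
    exact hzneg n
  have hcoord : ∀ n, (zv n) sB = (seqAB q n).1 * A ∧ (zv n) tB = (seqAB q n).2 * Bc := by
    intro n
    rw [hzv]
    simp only [Finsupp.add_apply, Finsupp.smul_apply, smul_eq_mul]
    rw [hβform, hγform]
    simp only [Finsupp.add_apply, Finsupp.smul_apply, smul_eq_mul, al, Finsupp.single_apply,
      if_neg hrs, if_neg hrt, if_neg hst, if_neg (Ne.symm hst), if_true, eq_self_iff_true]
    constructor <;> ring
  have hinj : Function.Injective zv := by
    intro nn mm h
    obtain ⟨ha1, hb1⟩ := hcoord nn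
    obtain ⟨ha2, hb2⟩ := hcoord mm
    rw [h] at ha1 hb1
    have e1 : (seqAB q nn).1 = (seqAB q mm).1 := by
      have := ha1.symm.trans ha2
      rw [mul_eq_mul_right_iff] at this
      rcases this with h' | h'
      · exact h'
      · exact absurd h' (ne_of_gt hA0)
    have e2 : (seqAB q nn).2 = (seqAB q mm).2 := by
      have := hb1.symm.trans hb2
      rw [mul_eq_mul_right_iff] at this
      rcases this with h' | h'
      · exact h'
      · exact absurd h' (ne_of_gt hB0)
    exact (seqAB_mono hq2).injective (by rw [e1, e2])
  have hinf : (Set.range zv).Infinite := Set.infinite_range_of_injective hinj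
  apply hinf
  apply Set.Finite.subset (List.finite_toSet (cands cs hM l))
  rintro x ⟨n, rfl⟩
  exact hmem n

end
end Stmt12Aux

/-- In a 2-spherical Coxeter system with `m_{st} ≥ 4` for all `s ≠ t`:
if `ℓ(ws) = ℓ(w)+1 = ℓ(wt)` then for every `r ∉ {s,t}` at least one of
`ℓ(wsr), ℓ(wtr)` equals `ℓ(w)+2`. -/
theorem stmt12 {B W : Type*} [Group W] {M : CoxeterMatrix B} (cs : CoxeterSystem M W)
    (hM : ∀ s t : B, s ≠ t → 4 ≤ M.M s t ∧ M.M s t ≠ 0)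
    (w : W) (s t : B) (hst : s ≠ t)
    (hs : cs.length (w * cs.simple s) = cs.length w + 1)
    (ht : cs.length (w * cs.simple t) = cs.length w + 1)
    (r : B) (hrs : r ≠ s) (hrt : r ≠ t) :
    cs.length (w * cs.simple s * cs.simple r) = cs.length w + 2 ∨
      cs.length (w * cs.simple t * cs.simple r) = cs.length w + 2 := by
  by_contra hcon
  push_neg at hcon
  obtain ⟨h1, h2⟩ := hcon
  have hsr : cs.length (w * cs.simple s * cs.simple r) + 1 = cs.length (w * cs.simple s) := by
    rcases cs.length_mul_simple (w * cs.simple s) r with h | h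
    · rw [hs] at h
      omega
    · exact h
  have htr : cs.length (w * cs.simple t * cs.simple r) + 1 = cs.length (w * cs.simple t) := by
    rcases cs.length_mul_simple (w * cs.simple t) r with h | h
    · rw [ht] at h
      omega
    · exact h
  exact Stmt12Aux.main_false cs hM w s t r hst hrs hrt hs ht hsr htr
end

section
/- Let (W,S) be a 2-spherical Coxeter system whose Coxeter diagram is the complete graph. Let w ∈ W and r,s,t ∈ S pairwise distinct with ℓ(ws) = ℓ(w)+1 = ℓ(wt). If ℓ(wsr) = ℓ(w), then ℓ(wsrt) = ℓ(w)+1. -/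
noncomputable section
namespace Stmt13
open Real CoxeterSystem

variable {B : Type*}

/-- basis vector -/
def ee (i : B) : B →₀ ℝ := Finsupp.single i 1

variable (M : CoxeterMatrix B)

/-- `2 cos (π / m_{ij})` -/
def kk (i j : B) : ℝ := 2 * Real.cos (Real.pi / M i j)

lemma kk_symm (i j : B) : kk M i j = kk M j i := by
  unfold kk; rw [M.symmetric i j]

lemma kk_self (i : B) : kk M i i = -2 := by
  unfold kk; rw [M.diagonal i]; norm_num

lemma kk_ge_one {i j : B} (h3 : 3 ≤ M i j) : 1 ≤ kk M i j := by
  unfold kk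
  have h0 : (0:ℝ) < Real.pi := Real.pi_pos
  have hm : (3:ℝ) ≤ (M i j : ℝ) := by exact_mod_cast h3
  have h1 : Real.pi / M i j ≤ Real.pi / 3 := by
    apply div_le_div_of_nonneg_left h0.le (by norm_num) hm
  have h2 : (0:ℝ) ≤ Real.pi / M i j := by positivity
  have := Real.cos_le_cos_of_nonneg_of_le_pi h2 (by linarith [Real.pi_pos] : Real.pi / 3 ≤ Real.pi) h1
  rw [Real.cos_pi_div_three] at this
  linarith

lemma kk_nonneg {i j : B} (h3 : 3 ≤ M i j) : 0 ≤ kk M i j := by linarith [kk_ge_one M h3]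

/-- the symmetric bilinear-form pairing with `e i`. -/
def bform (i : B) : (B →₀ ℝ) →ₗ[ℝ] ℝ :=
  Finsupp.linearCombination ℝ (fun j => -Real.cos (Real.pi / M j i))

lemma bform_ee (i j : B) : bform M i (ee j) = -Real.cos (Real.pi / M j i) := by
  unfold bform ee
  simp

lemma bform_ee_self (i : B) : bform M i (ee i) = 1 := by
  rw [bform_ee, M.diagonal i]
  simp

/-- reflection along `e i`. -/
def sig (i : B) : Module.End ℝ (B →₀ ℝ) :=
  LinearMap.id - (2:ℝ) • ((bform M i).smulRight (ee i))

lemma sig_apply (i : B) (v : B →₀ ℝ) : sig M i v = v - (2 * bform M i v) • ee i := by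
  unfold sig
  simp [LinearMap.smulRight, mul_smul, two_smul]

lemma sig_ee (i j : B) : sig M i (ee j) = ee j + kk M j i • ee i := by
  rw [sig_apply, bform_ee]
  unfold kk
  rw [M.symmetric j i]
  module

lemma sig_ee_self (i : B) : sig M i (ee i) = -ee i := by
  rw [sig_ee, kk_self]
  module

lemma bform_sig (i : B) (v : B →₀ ℝ) : bform M i (sig M i v) = -(bform M i v) := by
  rw [sig_apply, map_sub, map_smul, bform_ee_self]
  simp; ring

lemma sig_invol (i : B) : sig M i * sig M i = 1 := by
  apply LinearMap.ext
  intro v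
  show sig M i (sig M i v) = v
  rw [sig_apply M i (sig M i v), bform_sig, sig_apply]
  module

/-- `U m l = sin (l π / m) / sin (π / m)` (Chebyshev-like sequence). -/
def UU (m l : ℕ) : ℝ := Real.sin (l * (Real.pi / m)) / Real.sin (Real.pi / m)

section UUlemmas
variable {m : ℕ}

lemma theta_pos (hm : 3 ≤ m) : 0 < Real.pi / m := by
  have : (0:ℝ) < m := by exact_mod_cast Nat.lt_of_lt_of_le (by norm_num) hm
  positivity

lemma theta_lt_pi (hm : 3 ≤ m) : Real.pi / m < Real.pi := by
  have h1 : (1:ℝ) < m := by exact_mod_cast Nat.lt_of_lt_of_le (by norm_num) hm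
  calc Real.pi / m < Real.pi / 1 := by
        apply div_lt_div_of_pos_left Real.pi_pos (by linarith) h1
    _ = Real.pi := by norm_num

lemma sin_theta_pos (hm : 3 ≤ m) : 0 < Real.sin (Real.pi / m) :=
  Real.sin_pos_of_pos_of_lt_pi (theta_pos hm) (theta_lt_pi hm)

lemma UU_zero : UU m 0 = 0 := by simp [UU]

lemma UU_one (hm : 3 ≤ m) : UU m 1 = 1 := by
  unfold UU
  rw [Nat.cast_one, one_mul, div_self (ne_of_gt (sin_theta_pos hm))]

lemma UU_rec (hm : 3 ≤ m) (l : ℕ) :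
    UU m (l + 2) = 2 * Real.cos (Real.pi / m) * UU m (l + 1) - UU m l := by
  unfold UU
  have key : Real.sin ((l + 2 : ℕ) * (Real.pi / m))
      = 2 * Real.cos (Real.pi / m) * Real.sin ((l + 1 : ℕ) * (Real.pi / m))
        - Real.sin (l * (Real.pi / m)) := by
    push_cast
    have e1 : ((l:ℝ) + 2) * (Real.pi / m) = ((l + 1) * (Real.pi / m)) + (Real.pi / m) := by ring
    have e2 : (l:ℝ) * (Real.pi / m) = (((l:ℝ) + 1) * (Real.pi / m)) - (Real.pi / m) := by ring
    rw [e1, e2, Real.sin_add, Real.sin_sub]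
    ring
  rw [key]
  ring

lemma UU_nonneg (hm : 3 ≤ m) {l : ℕ} (hl : l ≤ m) : 0 ≤ UU m l := by
  unfold UU
  apply div_nonneg _ (le_of_lt (sin_theta_pos hm))
  apply Real.sin_nonneg_of_nonneg_of_le_pi
  · positivity
  · have hm0 : (0:ℝ) < m := by exact_mod_cast Nat.lt_of_lt_of_le (by norm_num) hm
    have : (l:ℝ) ≤ m := by exact_mod_cast hl
    calc (l:ℝ) * (Real.pi / m) ≤ m * (Real.pi / m) := by
          apply mul_le_mul_of_nonneg_right this (by positivity)
      _ = Real.pi := by field_simp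

lemma UU_two_m (hm : 3 ≤ m) : UU m (2 * m) = 0 := by
  unfold UU
  have hm0 : (m:ℝ) ≠ 0 := by
    have : (0:ℝ) < m := by exact_mod_cast Nat.lt_of_lt_of_le (by norm_num) hm
    linarith
  have : ((2 * m : ℕ) : ℝ) * (Real.pi / m) = 2 * Real.pi := by push_cast; field_simp
  rw [this, Real.sin_two_pi, zero_div]

lemma UU_two_m_add_one (hm : 3 ≤ m) : UU m (2 * m + 1) = 1 := by
  unfold UU
  have hm0 : (m:ℝ) ≠ 0 := by
    have : (0:ℝ) < m := by exact_mod_cast Nat.lt_of_lt_of_le (by norm_num) hm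
    linarith
  have : ((2 * m + 1 : ℕ) : ℝ) * (Real.pi / m) = 2 * Real.pi + Real.pi / m := by
    push_cast; field_simp
  rw [this]
  rw [Real.sin_add, Real.sin_two_pi, Real.cos_two_pi]
  simp [div_self (ne_of_gt (sin_theta_pos hm))]

end UUlemmas

lemma sig_fix {i : B} {v : B →₀ ℝ} (h : bform M i v = 0) : sig M i v = v := by
  rw [sig_apply, h]; simp

theorem braid {i j : B} (h3 : 3 ≤ M i j) :
    (sig M i * sig M j) ^ (M i j) = 1 := by
  set m := M i j with hmdef
  set c : ℝ := Real.cos (Real.pi / m) with hc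
  have hbji : bform M j (ee i) = -c := by rw [bform_ee]
  have hbij : bform M i (ee j) = -c := by rw [bform_ee]; rw [hc, hmdef, M.symmetric i j]
  have hsquare : Real.sin (Real.pi / m) ^ 2 = 1 - c ^ 2 := by
    rw [hc, Real.sin_sq]
  have hd : (0:ℝ) < 1 - c ^ 2 := by
    rw [← hsquare]; exact pow_pos (sin_theta_pos h3) 2
  have sig_i_ee_i : sig M i (ee i) = -ee i := by
    rw [sig_apply, bform_ee_self]; module
  have sig_j_ee_j : sig M j (ee j) = -ee j := by
    rw [sig_apply, bform_ee_self]; module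
  have sig_i_ee_j : sig M i (ee j) = ee j + (2*c) • ee i := by
    rw [sig_apply, hbij]; module
  have sig_j_ee_i : sig M j (ee i) = ee i + (2*c) • ee j := by
    rw [sig_apply, hbji]; module
  apply LinearMap.ext
  intro v
  set a : ℝ := bform M i v with ha
  set b : ℝ := bform M j v with hb
  set α : ℝ := (a + c * b) / (1 - c ^ 2) with hα
  set β : ℝ := (b + c * a) / (1 - c ^ 2) with hβ
  set w0 : B →₀ ℝ := v - α • ee i - β • ee j with hw0
  have hvw : v = w0 + α • ee i + β • ee j := by rw [hw0]; module
  have hbi : bform M i w0 = 0 := by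
    rw [hw0]
    rw [map_sub, map_sub, map_smul, map_smul, bform_ee_self, hbij, ← ha]
    rw [hα, hβ]
    field_simp
    linear_combination (-a) * (mul_inv_cancel₀ hd.ne')
  have hbj : bform M j w0 = 0 := by
    rw [hw0]
    rw [map_sub, map_sub, map_smul, map_smul, hbji, bform_ee_self, ← hb]
    rw [hα, hβ]
    field_simp
    linear_combination (-b) * (mul_inv_cancel₀ hd.ne')
  have hfixi : sig M i w0 = w0 := sig_fix M hbi
  have hfixj : sig M j w0 = w0 := sig_fix M hbj
  have step : ∀ x y : ℝ, (sig M i * sig M j) (w0 + x • ee i + y • ee j)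
      = w0 + ((2*c)^2*x - x - (2*c)*y) • ee i + ((2*c)*x - y) • ee j := by
    intro x y
    show sig M i (sig M j (w0 + x • ee i + y • ee j)) = _
    have e1 : sig M j (w0 + x • ee i + y • ee j)
        = w0 + x • ee i + ((2*c)*x - y) • ee j := by
      rw [map_add, map_add, map_smul, map_smul, hfixj, sig_j_ee_i, sig_j_ee_j]
      module
    rw [e1]
    rw [map_add, map_add, map_smul, map_smul, hfixi, sig_i_ee_i, sig_i_ee_j]
    module
  have power : ∀ (l : ℕ) (x y : ℝ), ((sig M i * sig M j) ^ l) (w0 + x • ee i + y • ee j)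
      = w0 + (UU m (2*l+1)*x - UU m (2*l)*y) • ee i
            + (UU m (2*l)*x - (2*c*UU m (2*l) - UU m (2*l+1))*y) • ee j := by
    intro l
    induction l with
    | zero =>
      intro x y
      have e0 : (2*0 : ℕ) = 0 := by norm_num
      have e1 : (2*0+1 : ℕ) = 1 := by norm_num
      rw [pow_zero, e0, e1, UU_zero, UU_one h3]
      show w0 + x • ee i + y • ee j = _
      module
    | succ l ih =>
      intro x y
      rw [pow_succ]
      show ((sig M i * sig M j) ^ l) ((sig M i * sig M j) (w0 + x • ee i + y • ee j)) = _
      rw [step x y]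
      rw [ih ((2*c)^2*x - x - (2*c)*y) ((2*c)*x - y)]
      set u0 : ℝ := UU m (2*l) with hu0
      set u1 : ℝ := UU m (2*l+1) with hu1
      have e1 : 2*(l+1) = 2*l+2 := by ring
      rw [e1]
      have e2 : 2*l+2+1 = 2*l+3 := by ring
      rw [e2]
      have h2 : UU m (2*l+2) = 2*c*u1 - u0 := by
        have h := UU_rec (m := m) h3 (2*l)
        rw [← hc] at h
        exact h
      have h3' : UU m (2*l+3) = 2*c*(2*c*u1 - u0) - u1 := by
        have h := UU_rec (m := m) h3 (2*l+1)
        rw [← hc] at h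
        have e3 : 2*l+1+2 = 2*l+3 := by ring
        have e4 : 2*l+1+1 = 2*l+2 := by ring
        rw [e3, e4, h2] at h
        exact h
      rw [h2, h3']
      have cx : u1*((2*c)^2*x - x - (2*c)*y) - u0*((2*c)*x - y)
          = (2*c*(2*c*u1 - u0) - u1)*x - (2*c*u1 - u0)*y := by ring
      have cy : u0*((2*c)^2*x - x - (2*c)*y) - (2*c*u0 - u1)*((2*c)*x - y)
          = (2*c*u1 - u0)*x - (2*c*(2*c*u1 - u0) - (2*c*(2*c*u1 - u0) - u1))*y := by ring
      rw [cx, cy]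
  show ((sig M i * sig M j) ^ m) v = v
  nth_rw 1 [hvw]
  rw [power m α β, UU_two_m h3, UU_two_m_add_one h3]
  rw [hvw]
  module

variable {W : Type*} [Group W] (cs : CoxeterSystem M W)

local prefix:100 "ℓ" => cs.length
local prefix:100 "π" => cs.wordProd
local prefix:100 "ss" => cs.simple

lemma liftable (hM : ∀ p q : B, p ≠ q → 3 ≤ M p q ∧ M p q ≠ 0) :
    M.IsLiftable (fun i => sig M i) := by
  intro i i'
  rcases eq_or_ne i i' with rfl | hne
  · rw [M.diagonal i, pow_one]
    exact sig_invol M i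
  · exact braid M (hM i i' hne).1

/-- The geometric representation. -/
def rho (hM : ∀ p q : B, p ≠ q → 3 ≤ M p q ∧ M p q ≠ 0) :
    W →* Module.End ℝ (B →₀ ℝ) := cs.lift ⟨fun i => sig M i, liftable M hM⟩

lemma rho_simple (hM : ∀ p q : B, p ≠ q → 3 ≤ M p q ∧ M p q ≠ 0) (i : B) :
    rho M cs hM (ss i) = sig M i :=
  cs.lift_apply_simple (liftable M hM) i

/-- `ρ x γ` is coordinatewise nonnegative. -/
def Pos (hM : ∀ p q : B, p ≠ q → 3 ≤ M p q ∧ M p q ≠ 0) (x : W) (γ : B →₀ ℝ) : Prop :=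
  ∀ b : B, 0 ≤ (rho M cs hM x γ) b
/-- `ρ x γ` is coordinatewise nonpositive. -/
def Neg (hM : ∀ p q : B, p ≠ q → 3 ≤ M p q ∧ M p q ≠ 0) (x : W) (γ : B →₀ ℝ) : Prop :=
  ∀ b : B, (rho M cs hM x γ) b ≤ 0

variable {M cs}
variable {hM : ∀ p q : B, p ≠ q → 3 ≤ M p q ∧ M p q ≠ 0}

lemma Pos.add {x γ₁ γ₂} (h₁ : Pos M cs hM x γ₁) (h₂ : Pos M cs hM x γ₂) :
    Pos M cs hM x (γ₁ + γ₂) := by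
  intro b; rw [map_add, Finsupp.add_apply]; exact add_nonneg (h₁ b) (h₂ b)

lemma Pos.smul {x : W} {γ : B →₀ ℝ} {a : ℝ} (ha : 0 ≤ a) (h : Pos M cs hM x γ) :
    Pos M cs hM x (a • γ) := by
  intro b; rw [map_smul, Finsupp.smul_apply, smul_eq_mul]
  exact mul_nonneg ha (h b)

lemma Neg.add {x γ₁ γ₂} (h₁ : Neg M cs hM x γ₁) (h₂ : Neg M cs hM x γ₂) :
    Neg M cs hM x (γ₁ + γ₂) := by
  intro b; rw [map_add, Finsupp.add_apply]; exact add_nonpos (h₁ b) (h₂ b)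

lemma Neg.smul {x : W} {γ : B →₀ ℝ} {a : ℝ} (ha : 0 ≤ a) (h : Neg M cs hM x γ) :
    Neg M cs hM x (a • γ) := by
  intro b; rw [map_smul, Finsupp.smul_apply, smul_eq_mul]
  exact mul_nonpos_of_nonneg_of_nonpos ha (h b)

lemma Neg.neg_vec {x γ} (h : Neg M cs hM x γ) : Pos M cs hM x (-γ) := by
  intro b; rw [map_neg, Finsupp.neg_apply]; linarith [h b]

lemma Pos.neg_vec {x γ} (h : Pos M cs hM x γ) : Neg M cs hM x (-γ) := by
  intro b; rw [map_neg, Finsupp.neg_apply]; linarith [h b]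

lemma Pos.sub_neg {x : W} {γ₁ γ₂ : B →₀ ℝ} {a : ℝ} (h₁ : Pos M cs hM x γ₁)
    (h₂ : Neg M cs hM x γ₂) (ha : 0 ≤ a) :
    Pos M cs hM x (γ₁ - a • γ₂) := by
  have := h₁.add ((h₂.smul ha).neg_vec)
  rwa [sub_eq_add_neg]

lemma pos_transfer {x : W} {i : B} {γ : B →₀ ℝ} :
    Pos M cs hM (x * ss i) γ ↔ Pos M cs hM x (sig M i γ) := by
  unfold Pos
  rw [map_mul]
  rw [rho_simple M cs hM i]
  rfl

lemma neg_transfer {x : W} {i : B} {γ : B →₀ ℝ} :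
    Neg M cs hM (x * ss i) γ ↔ Neg M cs hM x (sig M i γ) := by
  unfold Neg
  rw [map_mul]
  rw [rho_simple M cs hM i]
  rfl

lemma pos_neg_imp_eq_zero {x : W} {γ : B →₀ ℝ} (h₁ : Pos M cs hM x γ) (h₂ : Neg M cs hM x γ) :
    γ = 0 := by
  have h0 : rho M cs hM x γ = 0 := by
    ext b; exact le_antisymm (h₂ b) (h₁ b)
  have : rho M cs hM x⁻¹ (rho M cs hM x γ) = rho M cs hM x⁻¹ 0 := by rw [h0]
  rwa [← Module.End.mul_apply, ← map_mul, inv_mul_cancel, map_one, Module.End.one_apply,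
    map_zero] at this

lemma ee_ne_zero (i : B) : (ee i : B →₀ ℝ) ≠ 0 := by
  intro h
  have := Finsupp.single_eq_zero.mp h
  norm_num at this


-- ### rank-2 alternating word computations

lemma alt_one (i j : B) : CoxeterSystem.alternatingWord j i 1 = [i] := by
  rw [CoxeterSystem.alternatingWord_succ]
  rfl

lemma rho_word_cons (i : B) (ω : List B) (γ : B →₀ ℝ) :
    rho M cs hM (π (i :: ω)) γ = sig M i (rho M cs hM (π ω) γ) := by
  rw [cs.wordProd_cons, map_mul]
  rw [rho_simple M cs hM i]
  rfl

lemma rho_alt {i j : B} (h3 : 3 ≤ M i j) (m : ℕ) :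
    rho M cs hM (π (CoxeterSystem.alternatingWord i j m)) (ee i)
      = (if Even m then UU (M i j) (m+1) • ee i + UU (M i j) m • ee j
         else UU (M i j) m • ee i + UU (M i j) (m+1) • ee j) := by
  induction m with
  | zero =>
    rw [if_pos (Even.zero)]
    show rho M cs hM (π []) (ee i) = _
    rw [cs.wordProd_nil, map_one, Module.End.one_apply, UU_zero, UU_one h3]
    module
  | succ m ih =>
    rw [CoxeterSystem.alternatingWord_succ']
    by_cases hm : Even m
    · rw [if_pos hm] at ih
      rw [if_pos hm, rho_word_cons, ih]
      have hodd : ¬ Even (m + 1) := by simp [Nat.even_add_one, hm]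
      rw [if_neg hodd]
      rw [map_add, map_smul, map_smul]
      rw [sig_ee M j i, sig_ee_self M j]
      have hrec : UU (M i j) (m + 2) = kk M i j * UU (M i j) (m+1) - UU (M i j) m := by
        have := UU_rec (m := M i j) h3 m
        rw [this]; unfold kk; ring
      rw [hrec]
      rw [kk_symm M i j]
      module
    · rw [if_neg hm] at ih
      rw [if_neg hm, rho_word_cons, ih]
      have heven : Even (m + 1) := by simpa [Nat.even_add_one] using hm
      rw [if_pos heven]
      rw [map_add, map_smul, map_smul]
      rw [sig_ee M i j, sig_ee_self M i]
      have hrec : UU (M i j) (m + 2) = kk M i j * UU (M i j) (m+1) - UU (M i j) m := by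
        have := UU_rec (m := M i j) h3 m
        rw [this]; unfold kk; ring
      rw [hrec]
      rw [kk_symm M j i]
      module

lemma alt_period (i j : B) (m : ℕ) :
    π (CoxeterSystem.alternatingWord i j (m + M i j * 2)) = π (CoxeterSystem.alternatingWord i j m) := by
  rw [cs.prod_alternatingWord_eq_mul_pow, cs.prod_alternatingWord_eq_mul_pow]
  have heven : Even (M i j * 2) := Nat.even_mul.mpr (Or.inr even_two)
  have h1 : Even (m + M i j * 2) ↔ Even m := by
    rw [Nat.even_add]
    simp [heven]
  have h2 : (m + M i j * 2) / 2 = m / 2 + M i j := by omega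
  rw [h2, pow_add, cs.simple_mul_simple_pow i j, mul_one]
  by_cases hm : Even m
  · rw [if_pos (h1.mpr hm), if_pos hm]
  · rw [if_neg (fun h => hm (h1.mp h)), if_neg hm]

lemma alt_reduced_le {i j : B} (h3 : 3 ≤ M i j) {m : ℕ}
    (h : m ≤ ℓ (π (CoxeterSystem.alternatingWord i j m))) : m ≤ M i j := by
  by_contra hlt
  push_neg at hlt
  rcases le_or_gt m (M i j * 2) with hm | hm
  · have heq := cs.prod_alternatingWord_eq_prod_alternatingWord_sub i j m hm
    have hle := cs.length_wordProd_le (CoxeterSystem.alternatingWord j i (M i j * 2 - m))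
    rw [← heq, CoxeterSystem.length_alternatingWord] at hle
    omega
  · have hsub : m - M i j * 2 + M i j * 2 = m := by omega
    have heq := alt_period (cs := cs) i j (m - M i j * 2)
    rw [hsub] at heq
    have hle := cs.length_wordProd_le (CoxeterSystem.alternatingWord i j (m - M i j * 2))
    rw [← heq, CoxeterSystem.length_alternatingWord] at hle
    have h30 : 3 ≤ M i j := h3
    omega

lemma endi_short {x v : W} {i j : B} {m : ℕ}
    (hx : x = v * π (CoxeterSystem.alternatingWord j i (m+1))) :
    ℓ (x * ss i) ≤ ℓ v + m := by
  rw [CoxeterSystem.alternatingWord_succ, cs.wordProd_concat] at hx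
  have hxi : x * ss i = v * π (CoxeterSystem.alternatingWord i j m) := by
    rw [hx, mul_assoc, mul_assoc, cs.simple_mul_simple_self i, mul_one]
  rw [hxi]
  calc ℓ (v * π (CoxeterSystem.alternatingWord i j m))
      ≤ ℓ v + ℓ (π (CoxeterSystem.alternatingWord i j m)) := cs.length_mul_le _ _
    _ ≤ ℓ v + m := by
        have := cs.length_wordProd_le (CoxeterSystem.alternatingWord i j m)
        rw [CoxeterSystem.length_alternatingWord] at this
        omega

-- ### greedy dihedral decomposition

lemma alt_zero (i j : B) : CoxeterSystem.alternatingWord i j 0 = [] := rfl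

lemma greedy : ∀ (n : ℕ) (x : W), ℓ x = n → ∀ (i j : B), i ≠ j →
    ∃ (v : W) (m : ℕ),
      (x = v * π (CoxeterSystem.alternatingWord j i m) ∨
       x = v * π (CoxeterSystem.alternatingWord i j m)) ∧
      ℓ x = ℓ v + m ∧ ℓ (v * ss i) = ℓ v + 1 ∧ ℓ (v * ss j) = ℓ v + 1 := by
  intro n
  induction n using Nat.strong_induction_on with
  | _ n ih =>
  intro x hx i j hij
  rcases cs.length_mul_simple x i with hi | hi
  · rcases cs.length_mul_simple x j with hj | hj
    · -- both ascents
      refine ⟨x, 0, Or.inl ?_, by omega, ?_, ?_⟩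
      · rw [alt_zero, cs.wordProd_nil, mul_one]
      · omega
      · omega
    · -- descent at j
      set x' := x * ss j with hx'
      have hxx : x = x' * ss j := by
        rw [hx', mul_assoc, cs.simple_mul_simple_self j, mul_one]
      have hlen' : ℓ x' + 1 = n := by omega
      obtain ⟨v, m, hdisj, hlen, hvj, hvi⟩ :=
        ih (ℓ x') (by omega) x' rfl j i (Ne.symm hij)
      rcases hdisj with hd | hd
      · -- word ends with j
        rcases m with _ | m
        · -- m = 0 : x' = v,  x = v * s j
          rw [alt_zero, cs.wordProd_nil, mul_one] at hd
          refine ⟨v, 1, Or.inr ?_, ?_, hvi, hvj⟩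
          · rw [alt_one, cs.wordProd_singleton, ← hd]
            exact hxx
          · have : ℓ x = ℓ (v * ss j) := by rw [← hd]; exact congrArg _ hxx
            omega
        · exfalso
          have hshort := endi_short (cs := cs) hd
          rw [← hxx] at hshort
          omega
      · -- word ends with i (or empty): extend by j
        refine ⟨v, m + 1, Or.inr ?_, by omega, hvi, hvj⟩
        rw [CoxeterSystem.alternatingWord_succ, cs.wordProd_concat, ← mul_assoc, ← hd]
        exact hxx
  · -- descent at i
    set x' := x * ss i with hx'
    have hxx : x = x' * ss i := by
      rw [hx', mul_assoc, cs.simple_mul_simple_self i, mul_one]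
    have hlen' : ℓ x' + 1 = n := by omega
    obtain ⟨v, m, hdisj, hlen, hvi, hvj⟩ :=
      ih (ℓ x') (by omega) x' rfl i j hij
    rcases hdisj with hd | hd
    · rcases m with _ | m
      · rw [alt_zero, cs.wordProd_nil, mul_one] at hd
        refine ⟨v, 1, Or.inl ?_, ?_, hvi, hvj⟩
        · rw [alt_one, cs.wordProd_singleton, ← hd]
          exact hxx
        · have : ℓ x = ℓ (v * ss i) := by rw [← hd]; exact congrArg _ hxx
          omega
      · exfalso
        have hshort := endi_short (cs := cs) hd
        rw [← hxx] at hshort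
        omega
    · refine ⟨v, m + 1, Or.inl ?_, by omega, hvi, hvj⟩
      rw [CoxeterSystem.alternatingWord_succ, cs.wordProd_concat, ← mul_assoc, ← hd]
      exact hxx


lemma pos_mul_transfer {v u : W} {γ : B →₀ ℝ} :
    Pos M cs hM (v * u) γ ↔ Pos M cs hM v (rho M cs hM u γ) := by
  unfold Pos
  rw [map_mul]
  rfl

theorem ascent_pos : ∀ (n : ℕ) (x : W), ℓ x = n → ∀ i : B,
    ℓ (x * ss i) = ℓ x + 1 → Pos M cs hM x (ee i) := by
  intro n
  induction n using Nat.strong_induction_on with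
  | _ n ih =>
  intro x hx i hasc
  rcases Nat.eq_zero_or_pos n with hn0 | hnpos
  · -- x = 1
    have hx1 : x = 1 := cs.length_eq_zero_iff.mp (by omega)
    subst hx1
    intro b
    rw [map_one, Module.End.one_apply]
    unfold ee
    classical
    rw [Finsupp.single_apply]
    split <;> norm_num
  · have hxne : x ≠ 1 := by
      intro h
      rw [h, cs.length_one] at hx
      omega
    obtain ⟨j, hdesc⟩ := cs.exists_rightDescent_of_ne_one hxne
    have hdj : ℓ (x * ss j) < ℓ x := hdesc
    have hij : i ≠ j := by
      intro h
      rw [h] at hasc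
      omega
    obtain ⟨v, m, hdisj, hlen, hvi, hvj⟩ := greedy n x hx i j hij
    rcases m with _ | m'
    · -- m = 0 : x = v, contradicting the descent at j
      exfalso
      have hxv : x = v := by
        rcases hdisj with hd | hd <;>
          · rw [alt_zero, cs.wordProd_nil, mul_one] at hd
            exact hd
      rw [hxv] at hdj
      omega
    · set m := m' + 1 with hm
      rcases hdisj with hd | hd
      · -- word ends with i : contradiction with ascent at i
        exfalso
        have hshort := endi_short (cs := cs) hd
        omega
      · -- x = v * π (alternatingWord i j m), word ends with j
        have h3 : 3 ≤ M i j := (hM i j hij).1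
        have hred : m ≤ ℓ (π (CoxeterSystem.alternatingWord i j m)) := by
          have hmul := cs.length_mul_le v (π (CoxeterSystem.alternatingWord i j m))
          rw [← hd] at hmul
          omega
        have hmle : m ≤ M i j := alt_reduced_le h3 hred
        rcases eq_or_lt_of_le hmle with heqM | hltM
        · -- m = M i j : can flip the word to end with i, contradiction
          exfalso
          have hsub : M i j * 2 - m = m := by omega
          have heq := cs.prod_alternatingWord_eq_prod_alternatingWord_sub i j m (by omega)
          rw [hsub] at heq
          rw [heq] at hd
          have hshort := endi_short (cs := cs) hd
          omega
        · -- m < M i j : positivity via the U-coefficients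
          have hub : m + 1 ≤ M i j := hltM
          have hnn1 : 0 ≤ UU (M i j) m := UU_nonneg h3 (by omega)
          have hnn2 : 0 ≤ UU (M i j) (m+1) := UU_nonneg h3 hub
          have hPvi : Pos M cs hM v (ee i) := ih (ℓ v) (by omega) v rfl i hvi
          have hPvj : Pos M cs hM v (ee j) := ih (ℓ v) (by omega) v rfl j hvj
          rw [hd, pos_mul_transfer, rho_alt h3 m]
          by_cases hev : Even m
          · rw [if_pos hev]
            exact (hPvi.smul hnn2).add (hPvj.smul hnn1)
          · rw [if_neg hev]
            exact (hPvi.smul hnn1).add (hPvj.smul hnn2)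

/-- ascent at `i` gives a positive image of `e i` (convenient form). -/
lemma ascent_pos' {x : W} {i : B} (h : ℓ (x * ss i) = ℓ x + 1) : Pos M cs hM x (ee i) :=
  ascent_pos (ℓ x) x rfl i h

lemma descent_neg {x : W} {i : B} (h : ℓ (x * ss i) + 1 = ℓ x) : Neg M cs hM x (ee i) := by
  have h2 : ℓ (x * ss i * ss i) = ℓ (x * ss i) + 1 := by
    rw [mul_assoc, cs.simple_mul_simple_self i, mul_one]
    omega
  have := ascent_pos' (cs := cs) (hM := hM) h2
  rw [pos_transfer, sig_ee_self] at this
  intro b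
  have hb := this b
  rw [map_neg, Finsupp.neg_apply] at hb
  linarith

lemma neg_descent {x : W} {i : B} (h : Neg M cs hM x (ee i)) : ℓ (x * ss i) + 1 = ℓ x := by
  rcases cs.length_mul_simple x i with hasc | hd
  · exfalso
    exact ee_ne_zero i (pos_neg_imp_eq_zero (ascent_pos' hasc) h)
  · exact hd

lemma pos_or_neg (x : W) (i : B) : Pos M cs hM x (ee i) ∨ Neg M cs hM x (ee i) := by
  rcases cs.length_mul_simple x i with hasc | hd
  · exact Or.inl (ascent_pos' hasc)
  · exact Or.inr (descent_neg hd)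

lemma pos_or_neg_gen (x : W) (u : W) (i : B) :
    Pos M cs hM x (rho M cs hM u (ee i)) ∨ Neg M cs hM x (rho M cs hM u (ee i)) := by
  have := pos_or_neg (cs := cs) (hM := hM) (x * u) i
  rcases this with h | h
  · left; rwa [pos_mul_transfer] at h
  · right
    rw [show Neg M cs hM (x * u) (ee i) ↔ Neg M cs hM x (rho M cs hM u (ee i)) from ?_] at h
    · exact h
    · unfold Neg
      rw [map_mul]
      rfl


lemma sig_sq (i : B) (γ : B →₀ ℝ) : sig M i (sig M i γ) = γ := by
  have h := sig_invol M i
  calc sig M i (sig M i γ) = (sig M i * sig M i) γ := rfl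
  _ = γ := by rw [h]; rfl

/-- The key impossibility result: neither sign configuration `A` nor `B` can occur. -/
theorem AB : ∀ (n : ℕ) (x : W), ℓ x = n → ∀ r s t : B, r ≠ s → r ≠ t → s ≠ t →
    (¬ (Neg M cs hM x (ee r) ∧ Neg M cs hM x (ee s) ∧
        Pos M cs hM x (sig M s (ee t)) ∧ Neg M cs hM x (sig M r (ee t)))) ∧
    (¬ (Pos M cs hM x (ee r) ∧ Neg M cs hM x (ee s) ∧ Neg M cs hM x (ee t) ∧
        Neg M cs hM x (sig M r (ee s)) ∧ Pos M cs hM x (sig M r (ee t)) ∧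
        Neg M cs hM x (sig M s (ee r)) ∧ Neg M cs hM x (sig M s (ee t)) ∧
        Neg M cs hM x (sig M t (ee r)) ∧ Neg M cs hM x (sig M t (ee s)))) := by
  intro n
  induction n using Nat.strong_induction_on with
  | _ n ih =>
  intro x hx r s t hrs hrt hst
  have k_sr : (1:ℝ) ≤ kk M s r := kk_ge_one M (hM s r (Ne.symm hrs)).1
  have k_rs : (1:ℝ) ≤ kk M r s := kk_ge_one M (hM r s hrs).1
  have k_tr : (1:ℝ) ≤ kk M t r := kk_ge_one M (hM t r (Ne.symm hrt)).1
  have k_rt : (1:ℝ) ≤ kk M r t := kk_ge_one M (hM r t hrt).1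
  have k_ts : (1:ℝ) ≤ kk M t s := kk_ge_one M (hM t s (Ne.symm hst)).1
  have k_st : (1:ℝ) ≤ kk M s t := kk_ge_one M (hM s t hst).1
  constructor
  · -- configuration A is impossible
    rintro ⟨A1, A2, A3, A4⟩
    have D1 : Neg M cs hM x (sig M r (ee s)) := by
      rw [sig_ee]
      exact A2.add (A1.smul (by linarith))
    have D2 : Pos M cs hM x (ee t) := by
      have hvec : (ee t : B →₀ ℝ) = sig M s (ee t) - kk M t s • ee s := by
        rw [sig_ee]; module
      rw [hvec]
      exact A3.sub_neg A2 (by linarith)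
    have D3 : Neg M cs hM x (sig M s (ee r)) := by
      rw [sig_ee]
      exact A1.add (A2.smul (by linarith))
    have hdr : ℓ (x * ss r) + 1 = ℓ x := neg_descent A1
    set y := x * ss r with hy
    have y1 : Pos M cs hM y (ee r) := by
      rw [hy, pos_transfer, sig_ee_self]
      exact A1.neg_vec
    have y2 : Neg M cs hM y (ee s) := by
      rw [hy, neg_transfer]; exact D1
    have y3 : Neg M cs hM y (ee t) := by
      rw [hy, neg_transfer]; exact A4
    have y4 : Pos M cs hM y (sig M r (ee t)) := by
      rw [hy, pos_transfer, sig_sq]; exact D2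
    have y5 : Neg M cs hM y (sig M r (ee s)) := by
      rw [hy, neg_transfer, sig_sq]; exact A2
    have y6 : Neg M cs hM y (sig M s (ee r)) := by
      rw [hy, neg_transfer]
      have e6 : sig M r (sig M s (ee r))
          = (kk M r s * kk M s r - 1) • ee r + kk M r s • ee s := by
        rw [sig_ee M s r, map_add, map_smul, sig_ee_self M r, sig_ee M r s]
        module
      rw [e6]
      exact (A1.smul (by nlinarith)).add (A2.smul (by linarith))
    have y7 : Neg M cs hM y (sig M s (ee t)) := by
      rw [hy, neg_transfer]
      have e7 : sig M r (sig M s (ee t))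
          = sig M r (ee t) + kk M t s • sig M r (ee s) := by
        rw [sig_ee M s t, map_add, map_smul]
      rw [e7]
      exact A4.add (D1.smul (by linarith))
    have y8 : Neg M cs hM y (sig M t (ee s)) := by
      rw [hy, neg_transfer]
      have e8 : sig M r (sig M t (ee s))
          = sig M r (ee s) + kk M s t • sig M r (ee t) := by
        rw [sig_ee M t s, map_add, map_smul]
      rw [e8]
      exact D1.add (A4.smul (by linarith))
    have hdich := pos_or_neg_gen (cs := cs) (hM := hM) y (ss t) r
    rw [rho_simple M cs hM t] at hdich
    have hylen : ℓ y < n := by omega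
    rcases hdich with hP | hN
    · exact (ih (ℓ y) hylen y rfl s t r hst (Ne.symm hrs) (Ne.symm hrt)).1 ⟨y2, y3, hP, y6⟩
    · exact (ih (ℓ y) hylen y rfl r s t hrs hrt hst).2
        ⟨y1, y2, y3, y5, y4, y6, y7, hN, y8⟩
  · -- configuration B is impossible
    rintro ⟨B1, B2, B3, B4, B5, B6, B7, B8, B9⟩
    have hds : ℓ (x * ss s) + 1 = ℓ x := neg_descent B2
    set z := x * ss s with hz
    have z1 : Pos M cs hM z (ee s) := by
      rw [hz, pos_transfer, sig_ee_self]; exact B2.neg_vec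
    have z2 : Neg M cs hM z (ee r) := by
      rw [hz, neg_transfer]; exact B6
    have z3 : Neg M cs hM z (ee t) := by
      rw [hz, neg_transfer]; exact B7
    have z4 : Pos M cs hM z (sig M s (ee r)) := by
      rw [hz, pos_transfer, sig_sq]; exact B1
    have z5 : Neg M cs hM z (sig M s (ee t)) := by
      rw [hz, neg_transfer, sig_sq]; exact B3
    have z6 : Neg M cs hM z (sig M r (ee t)) := by
      rw [hz, neg_transfer]
      have e6 : sig M s (sig M r (ee t))
          = sig M s (ee t) + kk M t r • sig M s (ee r) := by
        rw [sig_ee M r t, map_add, map_smul]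
      rw [e6]
      exact B7.add (B6.smul (by linarith))
    have z7 : Neg M cs hM z (sig M t (ee r)) := by
      rw [hz, neg_transfer]
      have e7 : sig M s (sig M t (ee r))
          = sig M s (ee r) + kk M r t • sig M s (ee t) := by
        rw [sig_ee M t r, map_add, map_smul]
      rw [e7]
      exact B6.add (B7.smul (by linarith))
    have z8 : Neg M cs hM z (sig M t (ee s)) := by
      rw [hz, neg_transfer]
      have e8 : sig M s (sig M t (ee s))
          = (kk M s t * kk M t s - 1) • ee s + kk M s t • ee t := by
        rw [sig_ee M t s, map_add, map_smul, sig_ee_self M s, sig_ee M s t]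
        module
      rw [e8]
      exact (B2.smul (by nlinarith)).add (B3.smul (by linarith))
    have hdich := pos_or_neg_gen (cs := cs) (hM := hM) z (ss r) s
    rw [rho_simple M cs hM r] at hdich
    have hzlen : ℓ z < n := by omega
    rcases hdich with hP | hN
    · exact (ih (ℓ z) hzlen z rfl t r s (Ne.symm hrt) (Ne.symm hst) hrs).1
        ⟨z3, z2, hP, z8⟩
    · exact (ih (ℓ z) hzlen z rfl s t r hst (Ne.symm hrs) (Ne.symm hrt)).2
        ⟨z1, z3, z2, z5, z4, z8, z7, hN, z6⟩

end Stmt13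
end

/-- In a 2-spherical Coxeter system whose Coxeter diagram is the
complete graph (`3 ≤ m_{pq} < ∞` for all `p ≠ q`): if `r, s, t` are pairwise distinct,
`ℓ(ws) = ℓ(w)+1 = ℓ(wt)` and `ℓ(wsr) = ℓ(w)`, then `ℓ(wsrt) = ℓ(w)+1`. -/
theorem stmt13 {B W : Type*} [Group W] {M : CoxeterMatrix B} (cs : CoxeterSystem M W)
    (hM : ∀ p q : B, p ≠ q → 3 ≤ M.M p q ∧ M.M p q ≠ 0)
    (w : W) (r s t : B) (hrs : r ≠ s) (hrt : r ≠ t) (hst : s ≠ t)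
    (hs : cs.length (w * cs.simple s) = cs.length w + 1)
    (ht : cs.length (w * cs.simple t) = cs.length w + 1)
    (hsr : cs.length (w * cs.simple s * cs.simple r) = cs.length w) :
    cs.length (w * cs.simple s * cs.simple r * cs.simple t) = cs.length w + 1 := by
  open Stmt13 in
  have hM' : ∀ p q : B, p ≠ q → 3 ≤ M p q ∧ M p q ≠ 0 := hM
  have hss : w * cs.simple s * cs.simple s = w := by
    rw [mul_assoc, cs.simple_mul_simple_self, mul_one]
  have N1 : Stmt13.Neg M cs hM' (w * cs.simple s) (Stmt13.ee r) :=
    Stmt13.descent_neg (by omega)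
  have N2 : Stmt13.Neg M cs hM' (w * cs.simple s) (Stmt13.ee s) :=
    Stmt13.descent_neg (by rw [hss]; omega)
  have P3 : Stmt13.Pos M cs hM' (w * cs.simple s) (Stmt13.sig M s (Stmt13.ee t)) := by
    rw [Stmt13.pos_transfer, Stmt13.sig_sq]
    exact Stmt13.ascent_pos' ht
  rcases cs.length_mul_simple (w * cs.simple s * cs.simple r) t with h | h
  · rw [hsr] at h
    exact h
  · exfalso
    have N4 : Stmt13.Neg M cs hM' (w * cs.simple s) (Stmt13.sig M r (Stmt13.ee t)) := by
      rw [← Stmt13.neg_transfer]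
      exact Stmt13.descent_neg h
    exact (Stmt13.AB (cs.length (w * cs.simple s)) (w * cs.simple s) rfl r s t hrs hrt hst).1
      ⟨N1, N2, P3, N4⟩
end
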